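/- arXiv:2009.09303 — 10 statements merged into one kernel-verified Lean document; each statement's English description precedes it below -/
import Mathlib

section
/- Let X be a complex Banach lattice and x, y ∈ X. Then x and y are disjoint (|x| ⊓ |y| = 0) if and only if |y| ≤ |y + λx| for every complex scalar λ. -/
noncomputable section

open Filter Topology

/-- Scalar multiplication by a complex number on the complexification `E × E`
of a real Banach lattice `E` (first component: real part, second: imaginary part). -/
def cSmul {E : Type*} [AddCommGroup E] [Module ℝ E] (c : ℂ) (z : E × E) : E × E :=
  (c.re • z.1 - c.im • z.2, c.im • z.1 + c.re • z.2)

/-- `m` is the complex modulus of `z = x + iy`, i.e. the least upper bound of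
`{x cos θ + y sin θ : θ ∈ ℝ}`. -/
def IsCAbs {E : Type*} [Lattice E] [AddCommGroup E] [Module ℝ E] (z : E × E) (m : E) : Prop :=
  IsLUB {v : E | ∃ θ : ℝ, v = Real.cos θ • z.1 + Real.sin θ • z.2} m

section Aux
variable {E : Type*} [NormedAddCommGroup E] [Lattice E] [IsOrderedAddMonoid E] [HasSolidNorm E] [NormedSpace ℝ E]

omit [NormedSpace ℝ E] in
/-- translation distributes over inf -/
lemma my_add_inf (r p q : E) : r + p ⊓ q = (r + p) ⊓ (r + q) := by
  refine le_antisymm (le_inf (add_le_add_right inf_le_left r) (add_le_add_right inf_le_right r)) ?_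
  have h1 : (r + p) ⊓ (r + q) - r ≤ p := by
    rw [sub_le_iff_le_add']; exact inf_le_left
  have h2 : (r + p) ⊓ (r + q) - r ≤ q := by
    rw [sub_le_iff_le_add']; exact inf_le_right
  have := le_inf h1 h2
  rwa [sub_le_iff_le_add'] at this

omit [NormedSpace ℝ E] in
lemma my_inf_split {a b c : E} (ha : 0 ≤ a) (hb : 0 ≤ b) (hc : 0 ≤ c) :
    (a + b) ⊓ c ≤ a ⊓ c + b ⊓ c := by
  have e1 : a ⊓ c + b ⊓ c = (a + b ⊓ c) ⊓ (c + b ⊓ c) := by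
    rw [add_comm (a ⊓ c) (b ⊓ c), my_add_inf, add_comm (b ⊓ c) a, add_comm (b ⊓ c) c]
  rw [e1]
  refine le_inf ?_ ?_
  · have : (a + b) ⊓ c ≤ (a + b) ⊓ (a + c) :=
      le_inf inf_le_left (inf_le_right.trans (le_add_of_nonneg_left ha))
    rwa [← my_add_inf] at this
  · rw [my_add_inf]
    exact le_inf (inf_le_right.trans (le_add_of_nonneg_right hb))
      (inf_le_right.trans (le_add_of_nonneg_left hc))

omit [NormedSpace ℝ E] in
lemma my_inf_nsmul_le {c p : E} (hc : 0 ≤ c) (hp : 0 ≤ p) (n : ℕ) :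
    c ⊓ (n • p) ≤ n • (c ⊓ p) := by
  induction n with
  | zero => simp
  | succ k ih =>
    have h0 : c ⊓ ((k + 1) • p) = (k • p + p) ⊓ c := by rw [succ_nsmul, inf_comm]
    rw [h0, succ_nsmul]
    refine (my_inf_split (nsmul_nonneg hp k) hp hc).trans (add_le_add ?_ ?_)
    · rw [inf_comm]; exact ih
    · rw [inf_comm]

lemma my_nn_of_nsmul_nn {n : ℕ} (hn : 0 < n) {b : E} (h : 0 ≤ (n : ℝ) • b) : 0 ≤ b := by
  rw [Nat.cast_smul_eq_nsmul] at h
  have hsub : n • b = n • b⁺ - n • b⁻ := by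
    rw [← nsmul_sub, posPart_sub_negPart]
  have h2 : n • b⁻ ≤ n • b⁺ := by
    rw [hsub] at h; rwa [sub_nonneg] at h
  obtain ⟨k, rfl⟩ : ∃ k, n = k + 1 := ⟨n - 1, (Nat.succ_pred_eq_of_pos hn).symm⟩
  have h3 : b⁻ ≤ (k + 1) • b⁻ := by
    rw [succ_nsmul]
    exact le_add_of_nonneg_left (nsmul_nonneg (negPart_nonneg b) k)
  have h4 : b⁻ ≤ (k + 1) • b⁺ := h3.trans h2
  have h5 : b⁻ ≤ (k + 1) • (b⁻ ⊓ b⁺) := by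
    have := my_inf_nsmul_le (negPart_nonneg b) (posPart_nonneg b) (k + 1)
    exact (le_inf le_rfl h4).trans this
  rw [inf_comm, posPart_inf_negPart_eq_zero, smul_zero] at h5
  have h6 : b⁻ = 0 := le_antisymm h5 (negPart_nonneg b)
  rw [← posPart_sub_negPart b, h6, sub_zero]
  exact posPart_nonneg b

lemma my_smul_nn {t : ℝ} (ht : 0 ≤ t) {a : E} (ha : 0 ≤ a) : 0 ≤ t • a := by
  have hkey : ∀ k : ℕ, 0 ≤ ((Nat.ceil (t * (k + 1)) : ℝ) / ((k:ℝ) + 1)) • a := by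
    intro k
    have hpos : (0:ℝ) < (k : ℝ) + 1 := by positivity
    have hbase : 0 ≤ ((k : ℝ) + 1)⁻¹ • a := by
      apply my_nn_of_nsmul_nn (n := k + 1) (Nat.succ_pos k)
      have : ((k + 1 : ℕ) : ℝ) • ((k : ℝ) + 1)⁻¹ • a = a := by
        rw [smul_smul]
        push_cast
        rw [mul_inv_cancel₀ (ne_of_gt hpos), one_smul]
      rw [this]; exact ha
    have heq : ((Nat.ceil (t * (k + 1)) : ℝ) / ((k:ℝ) + 1)) • a
        = ((Nat.ceil (t * (k + 1)) : ℕ) : ℝ) • (((k : ℝ) + 1)⁻¹ • a) := by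
      rw [smul_smul, div_eq_mul_inv]
    rw [heq, Nat.cast_smul_eq_nsmul]
    exact nsmul_nonneg hbase _
  -- the scalars tend to t
  have htend : Tendsto (fun k : ℕ => ((Nat.ceil (t * (k + 1)) : ℝ) / ((k:ℝ) + 1))) atTop (𝓝 t) := by
    refine tendsto_of_tendsto_of_tendsto_of_le_of_le (g := fun _ : ℕ => t)
      (h := fun k : ℕ => t + 1 / ((k:ℝ) + 1)) tendsto_const_nhds ?_ ?_ ?_
    · have := tendsto_one_div_add_atTop_nhds_zero_nat (𝕜 := ℝ)
      have h2 := tendsto_const_nhds (x := t) (f := atTop (α := ℕ)) |>.add this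
      simpa using h2
    · intro k
      have hpos : (0:ℝ) < (k : ℝ) + 1 := by positivity
      rw [le_div_iff₀ hpos]
      exact Nat.le_ceil _
    · intro k
      have hpos : (0:ℝ) < (k : ℝ) + 1 := by positivity
      rw [div_le_iff₀ hpos]
      have h1 : (Nat.ceil (t * (k + 1)) : ℝ) < t * ((k:ℝ)+1) + 1 := by
        have := Nat.ceil_lt_add_one (a := t * ((k:ℝ)+1)) (by positivity)
        exact_mod_cast this
      have h2 : (t + 1 / ((k:ℝ) + 1)) * ((k:ℝ)+1) = t * ((k:ℝ)+1) + 1 := by field_simp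
      simp only []
      rw [h2]
      exact h1.le
  have htend2 : Tendsto (fun k : ℕ => ((Nat.ceil (t * (k + 1)) : ℝ) / ((k:ℝ) + 1)) • a)
      atTop (𝓝 (t • a)) := htend.smul_const a
  exact ge_of_tendsto' htend2 hkey

lemma my_smul_mono_r {t : ℝ} (ht : 0 ≤ t) {a b : E} (h : a ≤ b) : t • a ≤ t • b := by
  have := my_smul_nn ht (sub_nonneg.2 h)
  rw [smul_sub] at this
  exact sub_nonneg.1 this

lemma my_smul_mono_l {s t : ℝ} (h : s ≤ t) {a : E} (ha : 0 ≤ a) : s • a ≤ t • a := by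
  have := my_smul_nn (sub_nonneg.2 h) ha
  rw [sub_smul] at this
  exact sub_nonneg.1 this

/-- key coefficient bound -/
lemma coeff_le {z : E × E} {m : E}
    (h : IsLUB {w : E | ∃ θ : ℝ, w = Real.cos θ • z.1 + Real.sin θ • z.2} m)
    (A B : ℝ) : A • z.1 + B • z.2 ≤ Real.sqrt (A ^ 2 + B ^ 2) • m := by
  by_cases h0 : A = 0 ∧ B = 0
  · rw [h0.1, h0.2]
    simp
  · have hr2 : 0 < A ^ 2 + B ^ 2 := by
      rcases not_and_or.1 h0 with hA | hB
      · have : 0 < A ^ 2 := by positivity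
        nlinarith [sq_nonneg B]
      · have : 0 < B ^ 2 := by positivity
        nlinarith [sq_nonneg A]
    set r := Real.sqrt (A ^ 2 + B ^ 2) with hrdef
    have hr : 0 < r := Real.sqrt_pos.2 hr2
    set z0 : ℂ := ⟨A, B⟩ with hz0
    have hz00 : z0 ≠ 0 := by
      intro hcon
      rw [Complex.ext_iff] at hcon
      exact h0 ⟨hcon.1, hcon.2⟩
    have habs : ‖z0‖ = r := by
      rw [Complex.norm_def, Complex.normSq_mk, hrdef]
      ring_nf
    have hcos : Real.cos z0.arg = A / r := by
      rw [Complex.cos_arg hz00, habs]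
    have hsin : Real.sin z0.arg = B / r := by
      rw [Complex.sin_arg, habs]
    have hmem : Real.cos z0.arg • z.1 + Real.sin z0.arg • z.2 ≤ m := h.1 ⟨z0.arg, rfl⟩
    have h2 := my_smul_mono_r hr.le hmem
    rw [smul_add, smul_smul, smul_smul, hcos, hsin] at h2
    rw [mul_div_cancel₀ _ (ne_of_gt hr), mul_div_cancel₀ _ (ne_of_gt hr)] at h2
    exact h2

lemma cabs_nonneg' {z : E × E} {m : E}
    (h : IsLUB {w : E | ∃ θ : ℝ, w = Real.cos θ • z.1 + Real.sin θ • z.2} m) : 0 ≤ m := by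
  have h1 : z.1 ≤ m := by
    simpa using h.1 ⟨(0:ℝ), rfl⟩
  have h2 : -z.1 ≤ m := by
    simpa using h.1 ⟨Real.pi, rfl⟩
  exact (abs_nonneg z.1).trans (sup_le h1 h2)

omit [NormedSpace ℝ E] in
lemma isLUB_add_le {s t : Set E} {a b C : E} (ha : IsLUB s a) (hb : IsLUB t b)
    (h : ∀ p ∈ s, ∀ q ∈ t, p + q ≤ C) : a + b ≤ C := by
  have hstep : ∀ p ∈ s, p + b ≤ C := by
    intro p hp
    have : b ≤ C - p := hb.2 (fun q hq => le_sub_iff_add_le'.2 (h p hp q hq))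
    calc p + b ≤ p + (C - p) := add_le_add_right this p
      _ = C := by abel
  have : a ≤ C - b := ha.2 (fun p hp => le_sub_iff_add_le.2 (hstep p hp))
  calc a + b ≤ (C - b) + b := add_le_add_left this b
    _ = C := by abel

end Aux

section Main
variable {E : Type*} [NormedAddCommGroup E] [Lattice E] [IsOrderedAddMonoid E] [HasSolidNorm E] [NormedSpace ℝ E]

lemma forward_dir (am : E × E → E) (ham : ∀ z, IsCAbs z (am z)) (x y : E × E)
    (hdisj : am x ⊓ am y = 0) (c : ℂ) : am y ≤ am (y + cSmul c x) := by
  have hulub := ham x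
  have hvlub := ham y
  have hWlub := ham (y + cSmul c x)
  have hu0 : 0 ≤ am x := cabs_nonneg' hulub
  have hv0 : 0 ≤ am y := cabs_nonneg' hvlub
  have hW0 : 0 ≤ am (y + cSmul c x) := cabs_nonneg' hWlub
  obtain ⟨n, hn⟩ := exists_nat_ge (‖c‖)
  have hscaled : ((n:ℝ) • am x) ⊓ am y = 0 := by
    rw [Nat.cast_smul_eq_nsmul]
    refine le_antisymm ?_ (le_inf (nsmul_nonneg hu0 n) hv0)
    have h1 := my_inf_nsmul_le hv0 hu0 n
    rw [inf_comm]
    refine h1.trans ?_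
    rw [inf_comm, hdisj, smul_zero]
  apply hvlub.2
  rintro w ⟨θ, rfl⟩
  have hmemW : Real.cos θ • (y + cSmul c x).1 + Real.sin θ • (y + cSmul c x).2
      ≤ am (y + cSmul c x) := hWlub.1 ⟨θ, rfl⟩
  have hxpart : -(Real.cos θ • (cSmul c x).1 + Real.sin θ • (cSmul c x).2)
      ≤ ‖c‖ • am x := by
    have heq : -(Real.cos θ • (cSmul c x).1 + Real.sin θ • (cSmul c x).2)
        = (-(Real.cos θ * c.re + Real.sin θ * c.im)) • x.1
          + (-(Real.sin θ * c.re - Real.cos θ * c.im)) • x.2 := by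
      simp only [cSmul]
      module
    rw [heq]
    refine (coeff_le hulub _ _).trans ?_
    have hsq : (-(Real.cos θ * c.re + Real.sin θ * c.im)) ^ 2
        + (-(Real.sin θ * c.re - Real.cos θ * c.im)) ^ 2 = c.re ^ 2 + c.im ^ 2 := by
      linear_combination (c.re ^ 2 + c.im ^ 2) * Real.sin_sq_add_cos_sq θ
    rw [hsq]
    have habs : Real.sqrt (c.re ^ 2 + c.im ^ 2) = ‖c‖ := by
      rw [Complex.norm_def, Complex.normSq_apply]
      ring_nf
    rw [habs]
  have key : Real.cos θ • y.1 + Real.sin θ • y.2 ≤ am (y + cSmul c x) + (n:ℝ) • am x := by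
    have e : Real.cos θ • y.1 + Real.sin θ • y.2
        = (Real.cos θ • (y + cSmul c x).1 + Real.sin θ • (y + cSmul c x).2)
          + (-(Real.cos θ • (cSmul c x).1 + Real.sin θ • (cSmul c x).2)) := by
      simp only [Prod.fst_add, Prod.snd_add]
      module
    rw [e]
    exact add_le_add hmemW (hxpart.trans (my_smul_mono_l hn hu0))
  have hyv : Real.cos θ • y.1 + Real.sin θ • y.2 ≤ am y := hvlub.1 ⟨θ, rfl⟩
  have hfin : Real.cos θ • y.1 + Real.sin θ • y.2 - am (y + cSmul c x)
      ≤ ((n:ℝ) • am x) ⊓ am y := by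
    refine le_inf ?_ ?_
    · exact sub_le_iff_le_add'.2 key
    · refine (sub_le_self _ hW0).trans hyv
  rw [hscaled] at hfin
  exact sub_nonpos.1 hfin

lemma backward_dir (am : E × E → E) (ham : ∀ z, IsCAbs z (am z)) (x y : E × E)
    (H : ∀ c : ℂ, am y ≤ am (y + cSmul c x)) : am x ⊓ am y = 0 := by
  have hulub := ham x
  have hvlub := ham y
  have hu0 : 0 ≤ am x := cabs_nonneg' hulub
  have hv0 : 0 ≤ am y := cabs_nonneg' hvlub
  -- Step D : for each t > 0, am y ⊓ (t • am x) ≤ (4 - 2√2)⁻¹ • (t • am x)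
  have stepD : ∀ t : ℝ, 0 < t →
      am y ⊓ (t • am x) ≤ (4 - 2 * Real.sqrt 2)⁻¹ • (t • am x) := by
    intro t ht
    have hb0 : 0 ≤ t • am x := my_smul_nn ht.le hu0
    set b : E := t • am x with hbdef
    set S : E := am (am y, b) with hSdef
    have hSlub : IsLUB {w : E | ∃ θ : ℝ, w = Real.cos θ • am y + Real.sin θ • b} S :=
      ham (am y, b)
    have hS0 : 0 ≤ S := cabs_nonneg' (ham (am y, b))
    -- the parallelogram-type pair bound
    have pair : ∀ c : ℂ, ‖c‖ = t →
        am (y + cSmul c x) + am (y + cSmul (-c) x) ≤ S + S := by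
      intro c hc
      refine isLUB_add_le (ham _) (ham _) ?_
      rintro p ⟨θ, rfl⟩ q ⟨θ', rfl⟩
      have hcsq : c.re ^ 2 + c.im ^ 2 = t ^ 2 := by
        have h1 := Complex.sq_norm c
        rw [hc, Complex.normSq_apply] at h1
        linear_combination h1.symm
      have e : (Real.cos θ • (y + cSmul c x).1 + Real.sin θ • (y + cSmul c x).2)
             + (Real.cos θ' • (y + cSmul (-c) x).1 + Real.sin θ' • (y + cSmul (-c) x).2)
          = ((Real.cos θ + Real.cos θ') • y.1 + (Real.sin θ + Real.sin θ') • y.2)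
            + (((Real.cos θ - Real.cos θ') * c.re + (Real.sin θ - Real.sin θ') * c.im) • x.1
               + ((Real.sin θ - Real.sin θ') * c.re - (Real.cos θ - Real.cos θ') * c.im) • x.2) := by
        simp only [cSmul, Prod.fst_add, Prod.snd_add, Complex.neg_re, Complex.neg_im]
        module
      rw [e]
      have hy : (Real.cos θ + Real.cos θ') • y.1 + (Real.sin θ + Real.sin θ') • y.2
          ≤ Real.sqrt ((Real.cos θ + Real.cos θ') ^ 2 + (Real.sin θ + Real.sin θ') ^ 2) • am y :=
        coeff_le hvlub _ _
      have hx : ((Real.cos θ - Real.cos θ') * c.re + (Real.sin θ - Real.sin θ') * c.im) • x.1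
          + ((Real.sin θ - Real.sin θ') * c.re - (Real.cos θ - Real.cos θ') * c.im) • x.2
          ≤ (Real.sqrt ((Real.cos θ - Real.cos θ') ^ 2 + (Real.sin θ - Real.sin θ') ^ 2) * t) • am x := by
        refine (coeff_le hulub _ _).trans ?_
        have h2 : ((Real.cos θ - Real.cos θ') * c.re + (Real.sin θ - Real.sin θ') * c.im) ^ 2
            + ((Real.sin θ - Real.sin θ') * c.re - (Real.cos θ - Real.cos θ') * c.im) ^ 2
            = ((Real.cos θ - Real.cos θ') ^ 2 + (Real.sin θ - Real.sin θ') ^ 2) * t ^ 2 := by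
          linear_combination ((Real.cos θ - Real.cos θ') ^ 2 + (Real.sin θ - Real.sin θ') ^ 2) * hcsq
        rw [h2, Real.sqrt_mul (by positivity), Real.sqrt_sq ht.le]
      refine (add_le_add hy hx).trans ?_
      -- combine via coeff_le applied to the pair (am y, b)
      have h3 := coeff_le (z := (am y, b)) hSlub
        (Real.sqrt ((Real.cos θ + Real.cos θ') ^ 2 + (Real.sin θ + Real.sin θ') ^ 2))
        (Real.sqrt ((Real.cos θ - Real.cos θ') ^ 2 + (Real.sin θ - Real.sin θ') ^ 2))
      have h4 : (Real.sqrt ((Real.cos θ + Real.cos θ') ^ 2 + (Real.sin θ + Real.sin θ') ^ 2)) ^ 2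
          + (Real.sqrt ((Real.cos θ - Real.cos θ') ^ 2 + (Real.sin θ - Real.sin θ') ^ 2)) ^ 2 = 4 := by
        rw [Real.sq_sqrt (by positivity), Real.sq_sqrt (by positivity)]
        linear_combination 2 * Real.sin_sq_add_cos_sq θ + 2 * Real.sin_sq_add_cos_sq θ'
      rw [h4] at h3
      have h5 : Real.sqrt 4 = 2 := by
        rw [show (4:ℝ) = 2 ^ 2 by norm_num, Real.sqrt_sq (by norm_num)]
      rw [h5] at h3
      have h6 : (Real.sqrt ((Real.cos θ - Real.cos θ') ^ 2 + (Real.sin θ - Real.sin θ') ^ 2) * t) • am x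
          = Real.sqrt ((Real.cos θ - Real.cos θ') ^ 2 + (Real.sin θ - Real.sin θ') ^ 2) • b := by
        rw [hbdef, smul_smul]
      rw [h6]
      calc Real.sqrt ((Real.cos θ + Real.cos θ') ^ 2 + (Real.sin θ + Real.sin θ') ^ 2) • am y
            + Real.sqrt ((Real.cos θ - Real.cos θ') ^ 2 + (Real.sin θ - Real.sin θ') ^ 2) • b
          ≤ (2:ℝ) • S := h3
        _ = S + S := two_smul ℝ S
    -- Step A
    have stepA : ∀ θ φ : ℝ, (Real.cos θ • y.1 + Real.sin θ • y.2)
        + ((t * Real.cos (θ - φ)) • x.1 + (t * Real.sin (θ - φ)) • x.2) ≤ S + S - am y := by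
      intro θ φ
      set c : ℂ := ⟨t * Real.cos φ, t * Real.sin φ⟩ with hcdef
      have hc : ‖c‖ = t := by
        rw [Complex.norm_def, Complex.normSq_mk]
        rw [show t * Real.cos φ * (t * Real.cos φ) + t * Real.sin φ * (t * Real.sin φ) = t ^ 2 by
          linear_combination t ^ 2 * Real.sin_sq_add_cos_sq φ]
        exact Real.sqrt_sq ht.le
      have h1 : am y ≤ am (y + cSmul (-c) x) := H (-c)
      have h2 := pair c hc
      have h3 : am (y + cSmul c x) ≤ S + S - am y :=
        (le_sub_iff_add_le.2 h2).trans (sub_le_sub_left h1 _)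
      have hmem : Real.cos θ • (y + cSmul c x).1 + Real.sin θ • (y + cSmul c x).2
          ≤ am (y + cSmul c x) := (ham _).1 ⟨θ, rfl⟩
      refine le_trans (le_of_eq ?_) (hmem.trans h3)
      have hre : c.re = t * Real.cos φ := rfl
      have him : c.im = t * Real.sin φ := rfl
      simp only [cSmul, Prod.fst_add, Prod.snd_add, hre, him, Real.cos_sub, Real.sin_sub]
      module
    -- Step B : 2 v + b ≤ 2 S
    have stepB : am y + am y + b ≤ S + S := by
      have hθ : ∀ θ : ℝ, (Real.cos θ • y.1 + Real.sin θ • y.2) + b ≤ S + S - am y := by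
        intro θ
        have hψ : ∀ ψ : ℝ, Real.cos ψ • x.1 + Real.sin ψ • x.2
            ≤ t⁻¹ • (S + S - am y - (Real.cos θ • y.1 + Real.sin θ • y.2)) := by
          intro ψ
          have h5 := stepA θ (θ - ψ)
          rw [sub_sub_cancel] at h5
          have h6 : t • (Real.cos ψ • x.1 + Real.sin ψ • x.2)
              ≤ S + S - am y - (Real.cos θ • y.1 + Real.sin θ • y.2) := by
            rw [smul_add, smul_smul, smul_smul, le_sub_iff_add_le]
            calc (t * Real.cos ψ) • x.1 + (t * Real.sin ψ) • x.2
                  + (Real.cos θ • y.1 + Real.sin θ • y.2)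
                = (Real.cos θ • y.1 + Real.sin θ • y.2)
                  + ((t * Real.cos ψ) • x.1 + (t * Real.sin ψ) • x.2) := by abel
              _ ≤ _ := h5
          have h7 := my_smul_mono_r (inv_nonneg.2 ht.le) h6
          rwa [inv_smul_smul₀ (ne_of_gt ht)] at h7
        have h8 : am x ≤ t⁻¹ • (S + S - am y - (Real.cos θ • y.1 + Real.sin θ • y.2)) := by
          apply hulub.2
          rintro w ⟨ψ, rfl⟩
          exact hψ ψ
        have h9 : b ≤ S + S - am y - (Real.cos θ • y.1 + Real.sin θ • y.2) := by
          have h10 := my_smul_mono_r ht.le h8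
          rwa [smul_inv_smul₀ (ne_of_gt ht)] at h10
        have h11 := le_sub_iff_add_le.1 h9
        calc (Real.cos θ • y.1 + Real.sin θ • y.2) + b
            = b + (Real.cos θ • y.1 + Real.sin θ • y.2) := by abel
          _ ≤ _ := h11
      have h12 : am y ≤ S + S - am y - b := by
        apply hvlub.2
        rintro w ⟨θ, rfl⟩
        exact le_sub_iff_add_le.2 (hθ θ)
      have h13 := le_sub_iff_add_le.1 (le_sub_iff_add_le.1 h12)
      calc am y + am y + b = am y + b + am y := by abel
        _ ≤ S + S := h13
    -- Step C : S ≤ v + b - (2 - √2) (v ⊓ b)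
    have hsqrt2sq : Real.sqrt 2 ^ 2 = 2 := Real.sq_sqrt (by norm_num)
    have hsqrt2nn : 0 ≤ Real.sqrt 2 := Real.sqrt_nonneg 2
    have stepC : S ≤ am y + b - (2 - Real.sqrt 2) • (am y ⊓ b) := by
      apply hSlub.2
      rintro w ⟨χ, rfl⟩
      have hm0 : 0 ≤ am y ⊓ b := le_inf hv0 hb0
      have hmv : am y ⊓ b ≤ am y := inf_le_left
      have hmb : am y ⊓ b ≤ b := inf_le_right
      rw [le_sub_iff_add_le]
      have habs : |Real.cos χ| + |Real.sin χ| ≤ Real.sqrt 2 := by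
        have h1 : |Real.cos χ| + |Real.sin χ|
            = Real.sqrt ((|Real.cos χ| + |Real.sin χ|) ^ 2) :=
          (Real.sqrt_sq (by positivity)).symm
        rw [h1]
        refine Real.sqrt_le_sqrt ?_
        nlinarith [Real.sin_sq_add_cos_sq χ, sq_abs (Real.cos χ), sq_abs (Real.sin χ),
          sq_nonneg (|Real.cos χ| - |Real.sin χ|)]
      calc Real.cos χ • am y + Real.sin χ • b + (2 - Real.sqrt 2) • (am y ⊓ b)
          ≤ |Real.cos χ| • am y + |Real.sin χ| • b
            + ((1 - |Real.cos χ|) + (1 - |Real.sin χ|)) • (am y ⊓ b) := by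
            refine add_le_add (add_le_add (my_smul_mono_l (le_abs_self _) hv0)
              (my_smul_mono_l (le_abs_self _) hb0)) (my_smul_mono_l (by linarith) hm0)
        _ = (|Real.cos χ| • am y + (1 - |Real.cos χ|) • (am y ⊓ b))
            + (|Real.sin χ| • b + (1 - |Real.sin χ|) • (am y ⊓ b)) := by
            rw [add_smul]; abel
        _ ≤ (|Real.cos χ| • am y + (1 - |Real.cos χ|) • am y)
            + (|Real.sin χ| • b + (1 - |Real.sin χ|) • b) := by
            refine add_le_add (add_le_add_right (my_smul_mono_r ?_ hmv) _)
              (add_le_add_right (my_smul_mono_r ?_ hmb) _)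
            · linarith [Real.abs_cos_le_one χ]
            · linarith [Real.abs_sin_le_one χ]
        _ = am y + b := by rw [← add_smul, ← add_smul]; simp
    -- combine B and C
    have h14 := stepB.trans (add_le_add stepC stepC)
    have h15 : 0 ≤ b - ((2 - Real.sqrt 2) • (am y ⊓ b) + (2 - Real.sqrt 2) • (am y ⊓ b)) := by
      have h16 := sub_nonneg.2 h14
      calc (0:E) ≤ (am y + b - (2 - Real.sqrt 2) • (am y ⊓ b)
            + (am y + b - (2 - Real.sqrt 2) • (am y ⊓ b))) - (am y + am y + b) := h16
        _ = b - ((2 - Real.sqrt 2) • (am y ⊓ b) + (2 - Real.sqrt 2) • (am y ⊓ b)) := by abel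
    have h17 : (4 - 2 * Real.sqrt 2) • (am y ⊓ b) ≤ b := by
      rw [show (4 - 2 * Real.sqrt 2 : ℝ) = (2 - Real.sqrt 2) + (2 - Real.sqrt 2) by ring, add_smul]
      exact sub_nonneg.1 h15
    have hpos : (0:ℝ) < 4 - 2 * Real.sqrt 2 := by nlinarith
    have h18 := my_smul_mono_r (inv_nonneg.2 hpos.le) h17
    rwa [inv_smul_smul₀ (ne_of_gt hpos)] at h18
  -- the bootstrap
  have hpos : (0:ℝ) < 4 - 2 * Real.sqrt 2 := by
    nlinarith [Real.sq_sqrt (show (0:ℝ) ≤ 2 by norm_num), Real.sqrt_nonneg 2]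
  have hlam0 : (0:ℝ) < (4 - 2 * Real.sqrt 2)⁻¹ := inv_pos.2 hpos
  have hlam1 : (4 - 2 * Real.sqrt 2)⁻¹ < 1 := by
    have h1 : (1:ℝ) < 4 - 2 * Real.sqrt 2 := by
      nlinarith [Real.sq_sqrt (show (0:ℝ) ≤ 2 by norm_num), Real.sqrt_nonneg 2]
    exact inv_lt_one_of_one_lt₀ h1
  have key : ∀ n : ℕ, am x ⊓ am y ≤ ((4 - 2 * Real.sqrt 2)⁻¹ ^ n) • am x := by
    intro n
    induction n with
    | zero => simp only [pow_zero, one_smul]; exact inf_le_left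
    | succ k ih =>
      have h1 : am x ⊓ am y ≤ am y ⊓ (((4 - 2 * Real.sqrt 2)⁻¹ ^ k) • am x) :=
        le_inf inf_le_right ih
      have h2 := stepD ((4 - 2 * Real.sqrt 2)⁻¹ ^ k) (pow_pos hlam0 k)
      refine h1.trans (h2.trans ?_)
      rw [smul_smul, ← pow_succ']
  have hlim : Tendsto (fun n : ℕ => ((4 - 2 * Real.sqrt 2)⁻¹ ^ n) • am x) atTop (𝓝 0) := by
    have h1 := (tendsto_pow_atTop_nhds_zero_of_lt_one hlam0.le hlam1).smul_const (am x)
    simpa using h1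
  have hfin : am x ⊓ am y ≤ 0 := ge_of_tendsto' hlim key
  exact le_antisymm hfin (le_inf hu0 hv0)

end Main

/-- In a complex Banach lattice, `x ⊥ y` iff `|y| ≤ |y + λ x|` for all `λ ∈ ℂ`. -/
theorem stmt0 {E : Type*} [NormedAddCommGroup E] [Lattice E] [IsOrderedAddMonoid E] [HasSolidNorm E] [NormedSpace ℝ E] [CompleteSpace E]
    (am : E × E → E) (ham : ∀ z, IsCAbs z (am z)) (x y : E × E) :
    am x ⊓ am y = 0 ↔ ∀ c : ℂ, am y ≤ am (y + cSmul c x) :=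
  ⟨fun h c => forward_dir am ham x y h c, fun H => backward_dir am ham x y H⟩
end
end

section
/- Every disjointness preserving bounded linear operator between complex Banach lattices is order bounded: given z ∈ X there exists w ∈ Y₊ such that for all u ∈ X, |u| ≤ |z| implies |T(u)| ≤ w. -/
noncomputable section

section LatGrp
variable {α : Type*} [Lattice α] [AddCommGroup α] [CovariantClass α α (·+·) (·≤·)]

private lemma myPosPart_sub_of_nonneg (a c : α) (hc : 0 ≤ c) : (a⁺ - c)⁺ = (a - c)⁺ := by
  have h1 : a⁺ - c = (a - c) ⊔ (-c) := by
    rw [posPart_def, sup_sub, zero_sub]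
  rw [h1, posPart_def, posPart_def, sup_assoc]
  congr 1
  exact sup_eq_right.mpr (neg_nonpos.mpr hc)

private lemma myInf_add_le (u s t : α) (hu : 0 ≤ u) (hs : 0 ≤ s) (ht : 0 ≤ t) :
    u ⊓ (s + t) ≤ u ⊓ s + u ⊓ t := by
  have hm : (0:α) ≤ u ⊓ s := le_inf hu hs
  have h1 : u ⊓ (s + t) ≤ u ⊓ s + u :=
    le_add_of_nonneg_of_le hm inf_le_left
  have h2 : u ⊓ (s + t) ≤ u ⊓ s + t := by
    have h3 : u ⊓ (s + t) ≤ (u + t) ⊓ (s + t) :=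
      inf_le_inf_right _ (le_add_of_le_of_nonneg le_rfl ht)
    rwa [← inf_add] at h3
  have h4 := le_inf h1 h2
  rwa [← add_inf] at h4

private lemma myDisj_add (u v w : α) (hu : 0 ≤ u) (hv : 0 ≤ v) (hw : 0 ≤ w)
    (h1 : u ⊓ v = 0) (h2 : u ⊓ w = 0) : u ⊓ (v + w) = 0 := by
  have := myInf_add_le u v w hu hv hw
  rw [h1, h2, add_zero] at this
  exact le_antisymm this (le_inf hu (by positivity))

private lemma myDisj_nsmul (u v : α) (hu : 0 ≤ u) (hv : 0 ≤ v) (h : u ⊓ v = 0) (n : ℕ) :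
    u ⊓ (n • v) = 0 := by
  induction n with
  | zero => simpa using le_antisymm inf_le_right (le_inf hu le_rfl)
  | succ k ih =>
      rw [succ_nsmul]
      exact myDisj_add u _ v hu (nsmul_nonneg hv k) hv ih h

private lemma myNegPart_of_decomp (P N : α) (hN : 0 ≤ N) (h : P ⊓ N = 0) :
    (P - N)⁻ = N := by
  rw [negPart_def, neg_sub]
  have h1 : (N - P) ⊔ 0 = (N ⊔ P) - P := by rw [sup_sub, sub_self]
  rw [h1]
  have h2 : N ⊔ P = N + P := by
    have := inf_add_sup N P
    rw [inf_comm, h, zero_add] at this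
    exact this
  rw [h2, add_sub_cancel_right]

private lemma myPosPart_of_decomp (P N : α) (hP : 0 ≤ P) (h : P ⊓ N = 0) :
    (P - N)⁺ = P := by
  have h2 : (N - P)⁻ = P := myNegPart_of_decomp N P hP (by rwa [inf_comm])
  rw [← neg_sub, posPart_neg, h2]

private lemma myNsmul_disj (a : α) (n : ℕ) : (n • a⁺) ⊓ (n • a⁻) = 0 := by
  have h1 : a⁺ ⊓ (n • a⁻) = 0 :=
    myDisj_nsmul _ _ (posPart_nonneg a) (negPart_nonneg a) (posPart_inf_negPart_eq_zero a) n
  have := myDisj_nsmul (n • a⁻) a⁺ (nsmul_nonneg (negPart_nonneg a) n) (posPart_nonneg a)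
    (by rwa [inf_comm]) n
  rwa [inf_comm]

private lemma myNsmul_posPart (a : α) (n : ℕ) : (n • a)⁺ = n • a⁺ := by
  have : n • a = n • a⁺ - n • a⁻ := by rw [← smul_sub, posPart_sub_negPart]
  rw [this, myPosPart_of_decomp _ _ (nsmul_nonneg (posPart_nonneg a) n) (myNsmul_disj a n)]

private lemma myNsmul_reflect_nonneg (y : α) (n : ℕ) (hn : 0 < n) (h : 0 ≤ n • y) : 0 ≤ y := by
  have hne : (n • y)⁻ = n • y⁻ := by
    have : n • y = n • y⁺ - n • y⁻ := by rw [← smul_sub, posPart_sub_negPart]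
    rw [this, myNegPart_of_decomp _ _ (nsmul_nonneg (negPart_nonneg y) n) (myNsmul_disj y n)]
  have h0 : (n • y)⁻ = 0 := by rw [negPart_eq_zero]; exact h
  rw [hne] at h0
  have hz : y⁻ = 0 := by
    obtain ⟨m, rfl⟩ := Nat.exists_eq_succ_of_ne_zero hn.ne'
    have hle : y⁻ ≤ (m + 1) • y⁻ := by
      rw [succ_nsmul]
      exact le_add_of_nonneg_left (nsmul_nonneg (negPart_nonneg y) m)
    exact le_antisymm (h0 ▸ hle) (negPart_nonneg y)
  rw [← posPart_sub_negPart y, hz, sub_zero]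
  exact posPart_nonneg y

private lemma myNsmul_mono (e : α) (he : 0 ≤ e) {j k : ℕ} (h : j ≤ k) : j • e ≤ k • e := by
  obtain ⟨m, rfl⟩ := Nat.exists_eq_add_of_le h
  rw [add_nsmul]
  exact le_add_of_nonneg_right (nsmul_nonneg he m)

private lemma myPartition (e : α) (he : 0 ≤ e) :
    ∀ (n : ℕ) (x : α), 0 ≤ x → x ≤ n • e →
      ∑ k ∈ Finset.range n, ((x - k • e)⁺ ⊓ e) = x := by
  intro n
  induction n with
  | zero => intro x hx hxn; simp at hxn ⊢; exact (le_antisymm hxn hx).symm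
  | succ n ih =>
      intro x hx hxn
      rw [Finset.sum_range_succ']
      have h0 : (x - (0:ℕ) • e)⁺ ⊓ e = x ⊓ e := by
        simp [posPart_eq_self.mpr hx]
      have hstep : ∀ k : ℕ, (x - (k+1) • e)⁺ ⊓ e = ((x - e)⁺ - k • e)⁺ ⊓ e := by
        intro k
        rw [myPosPart_sub_of_nonneg (x - e) (k • e) (nsmul_nonneg he k)]
        congr 2
        rw [succ_nsmul]
        abel
      have hsum : ∑ k ∈ Finset.range n, ((x - (k+1) • e)⁺ ⊓ e) = (x - e)⁺ := by
        rw [Finset.sum_congr rfl (fun k _ => hstep k)]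
        apply ih
        · exact posPart_nonneg _
        · rw [posPart_def, sup_le_iff]
          constructor
          · rw [sub_le_iff_le_add]
            calc x ≤ (n+1) • e := hxn
              _ = n • e + e := by rw [succ_nsmul]
          · exact nsmul_nonneg he n
      rw [hsum, h0]
      have hp : (x - e)⁺ = x ⊔ e - e := by rw [posPart_def, sup_sub, sub_self]
      rw [hp]
      have hie := inf_add_sup x e
      rw [sub_add_eq_add_sub, add_comm (x ⊔ e) (x ⊓ e), hie, add_sub_cancel_right]

private lemma myQdisj (e x : α) (he : 0 ≤ e) {j k : ℕ} (h : j < k) :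
    (e - ((x - j • e)⁺ ⊓ e)) ⊓ ((x - k • e)⁺ ⊓ e) = 0 := by
  set s := x - j • e with hs
  have h1 : e - (s⁺ ⊓ e) = (e - s⁺)⁺ := by
    rw [sub_inf, sub_self, ← posPart_def]
  have h2 : (x - k • e)⁺ ⊓ e ≤ (s⁺ - e)⁺ := by
    refine le_trans inf_le_left ?_
    rw [myPosPart_sub_of_nonneg s e he]
    apply posPart_mono
    calc x - k • e ≤ x - (j+1) • e := sub_le_sub_left (myNsmul_mono e he h) x
      _ = s - e := by rw [hs, succ_nsmul, sub_sub]
  have hnn1 : 0 ≤ e - (s⁺ ⊓ e) := sub_nonneg.mpr inf_le_right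
  have hnn2 : (0:α) ≤ (x - k • e)⁺ ⊓ e := le_inf (posPart_nonneg _) he
  refine le_antisymm ?_ (le_inf hnn1 hnn2)
  calc (e - (s⁺ ⊓ e)) ⊓ ((x - k • e)⁺ ⊓ e) ≤ (e - s⁺)⁺ ⊓ (s⁺ - e)⁺ :=
        inf_le_inf (le_of_eq h1) h2
    _ = (s⁺ - e)⁻ ⊓ (s⁺ - e)⁺ := by rw [negPart_def, neg_sub, ← posPart_def]
    _ = 0 := by rw [inf_comm]; exact posPart_inf_negPart_eq_zero _

private lemma myTelescope (f : ℕ → α) (k : ℕ) :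
    ∀ n, k ≤ n → ∑ j ∈ Finset.Ico k n, (f j - f (j+1)) = f k - f n := by
  intro n
  induction n with
  | zero => intro h; simp at h; subst h; simp
  | succ n ih =>
      intro h
      rcases Nat.lt_or_ge k (n+1) with h1 | h1
      · have hk : k ≤ n := Nat.lt_succ_iff.mp h1
        rw [Finset.sum_Ico_succ_top hk, ih hk]
        abel
      · have : k = n + 1 := le_antisymm h h1
        subst this
        simp

private lemma mySum_nonneg (g : ℕ → α) (s : Finset ℕ)
    (hg : ∀ i ∈ s, 0 ≤ g i) : 0 ≤ ∑ i ∈ s, g i := by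
  induction s using Finset.cons_induction with
  | empty => simp
  | cons a s ha ih =>
      rw [Finset.sum_cons]
      calc (0:α) ≤ g a := hg a (Finset.mem_cons_self a s)
        _ ≤ g a + ∑ i ∈ s, g i :=
            le_add_of_nonneg_right (ih fun i hi => hg i (Finset.mem_cons_of_mem hi))

private lemma mySum_le_subset (g : ℕ → α) {s t : Finset ℕ} (hst : s ⊆ t)
    (hg : ∀ i ∈ t, 0 ≤ g i) : ∑ i ∈ s, g i ≤ ∑ i ∈ t, g i := by
  have h1 := Finset.sum_sdiff hst (f := g)
  have h2 : (0:α) ≤ ∑ i ∈ t \ s, g i :=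
    mySum_nonneg g _ fun i hi => hg i (Finset.mem_sdiff.mp hi).1
  calc ∑ i ∈ s, g i ≤ ∑ i ∈ t \ s, g i + ∑ i ∈ s, g i := le_add_of_nonneg_left h2
    _ = ∑ i ∈ t, g i := h1

private lemma myDisj_sum_fin (u : α) (hu : 0 ≤ u) (g : ℕ → α) (s : Finset ℕ)
    (hg : ∀ i ∈ s, 0 ≤ g i) (h : ∀ i ∈ s, u ⊓ g i = 0) : u ⊓ ∑ i ∈ s, g i = 0 := by
  induction s using Finset.cons_induction with
  | empty => simpa using le_antisymm inf_le_right (le_inf hu le_rfl)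
  | cons a s ha ih =>
      rw [Finset.sum_cons]
      have hs0 : (0:α) ≤ ∑ i ∈ s, g i :=
        mySum_nonneg g s fun i hi => hg i (Finset.mem_cons_of_mem hi)
      exact myDisj_add u _ _ hu (hg a (Finset.mem_cons_self a s)) hs0
        (h a (Finset.mem_cons_self a s))
        (ih (fun i hi => hg i (Finset.mem_cons_of_mem hi))
            (fun i hi => h i (Finset.mem_cons_of_mem hi)))

end LatGrp

section Smul
variable {α : Type*} [NormedAddCommGroup α] [Lattice α] [HasSolidNorm α] [IsOrderedAddMonoid α] [NormedSpace ℝ α]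

private lemma myRat_smul_nonneg (q : ℚ) (hq : 0 ≤ q) (x : α) (hx : 0 ≤ x) : 0 ≤ (q:ℝ) • x := by
  set y := ((q.den : ℝ)⁻¹) • x with hy
  have hdy : (q.den : ℕ) • y = x := by
    rw [hy, ← Nat.cast_smul_eq_nsmul ℝ, smul_smul]
    rw [mul_inv_cancel₀ (by exact_mod_cast q.den_pos.ne')]
    simp
  have hy0 : 0 ≤ y := myNsmul_reflect_nonneg y q.den q.den_pos (by rw [hdy]; exact hx)
  have hnum : ((q.num.toNat : ℕ) : ℝ) = (q.num : ℝ) := by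
    exact_mod_cast congrArg (Int.cast : ℤ → ℝ) (Int.toNat_of_nonneg (Rat.num_nonneg.mpr hq))
  have heq : (q:ℝ) • x = (q.num.toNat : ℕ) • y := by
    rw [← Nat.cast_smul_eq_nsmul ℝ, hy, smul_smul, hnum, Rat.cast_def]
    ring_nf
  rw [heq]
  exact nsmul_nonneg hy0 _

private lemma myReal_smul_nonneg {c : ℝ} (hc : 0 ≤ c) {x : α} (hx : 0 ≤ x) : 0 ≤ c • x := by
  have hcont : Continuous fun t : ℝ => t • x := continuous_id.smul continuous_const
  have hclosed : IsClosed {t : ℝ | 0 ≤ t • x} := isClosed_nonneg.preimage hcont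
  have hex : ∀ n : ℕ, ∃ q : ℚ, 0 ≤ q ∧ |c - (q:ℝ)| < 1/(n+1) := by
    intro n
    obtain ⟨q, hq⟩ := exists_rat_near c (by positivity : (0:ℝ) < 1/(n+1))
    refine ⟨max q 0, le_max_right _ _, ?_⟩
    have hle : |c - ((max q 0 : ℚ) : ℝ)| ≤ |c - (q:ℝ)| := by
      push_cast
      calc |c - max (q:ℝ) 0| = |max c 0 - max (q:ℝ) 0| := by rw [max_eq_left hc]
        _ ≤ |c - (q:ℝ)| := abs_max_sub_max_le_abs _ _ _
    exact lt_of_le_of_lt hle hq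
  choose q hq0 hqc using hex
  have htend : Filter.Tendsto (fun n : ℕ => ((q n : ℝ))) Filter.atTop (nhds c) := by
    rw [tendsto_iff_dist_tendsto_zero]
    refine squeeze_zero (fun n => dist_nonneg) (g := fun n : ℕ => 1/((n:ℝ)+1)) (fun n => ?_)
      tendsto_one_div_add_atTop_nhds_zero_nat
    rw [Real.dist_eq, abs_sub_comm]
    exact (hqc n).le
  exact hclosed.mem_of_tendsto htend
    (Filter.Eventually.of_forall fun n => myRat_smul_nonneg (q n) (hq0 n) x hx)

private lemma myReal_smul_mono {c : ℝ} (hc : 0 ≤ c) {a b : α} (h : a ≤ b) : c • a ≤ c • b := by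
  have := myReal_smul_nonneg hc (sub_nonneg.mpr h)
  rwa [smul_sub, sub_nonneg] at this

private lemma mySmul_le_abs {c : ℝ} (hc : |c| ≤ 1) (a : α) : c • a ≤ |a| := by
  rcases le_or_gt 0 c with h | h
  · calc c • a ≤ c • |a| := myReal_smul_mono h (le_abs_self a)
      _ ≤ |a| := by
        have := myReal_smul_nonneg (sub_nonneg.mpr (abs_le.mp hc).2) (abs_nonneg a)
        rw [sub_smul, one_smul, sub_nonneg] at this
        exact this
  · have heq : c • a = (-c) • (-a) := by rw [neg_smul, smul_neg, neg_neg]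
    rw [heq]
    calc (-c) • (-a) ≤ (-c) • |a| :=
        myReal_smul_mono (by linarith) (by rw [← abs_neg]; exact le_abs_self (-a))
      _ ≤ |a| := by
        have hc2 : 0 ≤ 1 - (-c) := by have := (abs_le.mp hc).1; linarith
        have := myReal_smul_nonneg hc2 (abs_nonneg a)
        rw [sub_smul, one_smul, sub_nonneg] at this
        exact this

private lemma myIsLUB_smul {c : ℝ} (hc : 0 < c) {s : Set α} {m : α} (h : IsLUB s m) :
    IsLUB ((c • ·) '' s) (c • m) := by
  constructor
  · rintro y ⟨t, ht, rfl⟩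
    exact myReal_smul_mono hc.le (h.1 ht)
  · intro w hw
    have hm : m ≤ c⁻¹ • w := by
      apply h.2
      intro t ht
      have h1 := hw ⟨t, ht, rfl⟩
      have h2 := myReal_smul_mono (inv_nonneg.mpr hc.le) h1
      rwa [smul_smul, inv_mul_cancel₀ hc.ne', one_smul] at h2
    have h3 := myReal_smul_mono hc.le hm
    rwa [smul_smul, mul_inv_cancel₀ hc.ne', one_smul] at h3

end Smul


section Am
variable {α : Type*} [NormedAddCommGroup α] [Lattice α] [HasSolidNorm α] [IsOrderedAddMonoid α] [NormedSpace ℝ α]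
variable (am : α × α → α) (ham : ∀ z, IsCAbs z (am z))

include ham

lemma am_ub (z : α × α) (θ : ℝ) : Real.cos θ • z.1 + Real.sin θ • z.2 ≤ am z :=
  (ham z).1 ⟨θ, rfl⟩

lemma am_fst (z : α × α) : z.1 ≤ am z := by
  have := am_ub am ham z 0
  simpa using this

lemma am_neg_fst (z : α × α) : -z.1 ≤ am z := by
  have := am_ub am ham z Real.pi
  simpa using this

lemma am_abs_fst (z : α × α) : |z.1| ≤ am z :=
  abs_le'.mpr ⟨am_fst am ham z, am_neg_fst am ham z⟩


lemma am_snd (z : α × α) : z.2 ≤ am z := by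
  have := am_ub am ham z (Real.pi/2)
  simpa using this

lemma am_neg_snd (z : α × α) : -z.2 ≤ am z := by
  have := am_ub am ham z (-(Real.pi/2))
  simpa using this

lemma am_abs_snd (z : α × α) : |z.2| ≤ am z :=
  abs_le'.mpr ⟨am_snd am ham z, am_neg_snd am ham z⟩

lemma am_nonneg (z : α × α) : 0 ≤ am z :=
  le_trans (abs_nonneg _) (am_abs_fst am ham z)

lemma am_zero : am 0 = 0 := by
  have h : IsLUB {v : α | ∃ θ : ℝ, v = Real.cos θ • (0 : α×α).1 + Real.sin θ • (0 : α×α).2} 0 := by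
    have : {v : α | ∃ θ : ℝ, v = Real.cos θ • (0 : α×α).1 + Real.sin θ • (0 : α×α).2} = {0} := by
      ext v; simp
    rw [this]
    exact isLUB_singleton
  exact (ham 0).unique h

lemma am_real (a : α) : am (a, 0) = |a| := by
  refine (ham (a, 0)).unique ⟨?_, ?_⟩
  · rintro v ⟨θ, rfl⟩
    simp only [smul_zero, add_zero]
    exact mySmul_le_abs (by exact Real.abs_cos_le_one θ) a
  · intro w hw
    have h1 : a ≤ w := by
      have hmem : a ∈ {v : α | ∃ θ : ℝ, v = Real.cos θ • (a,(0:α)).1 + Real.sin θ • (a,(0:α)).2} :=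
        ⟨0, by simp⟩
      exact hw hmem
    have h2 : -a ≤ w := by
      have hmem : -a ∈ {v : α | ∃ θ : ℝ, v = Real.cos θ • (a,(0:α)).1 + Real.sin θ • (a,(0:α)).2} :=
        ⟨Real.pi, by simp⟩
      exact hw hmem
    exact abs_le'.mpr ⟨h1, h2⟩

lemma am_neg (z : α × α) : am (-z) = am z := by
  refine (ham (-z)).unique ?_
  have hset : {v : α | ∃ θ : ℝ, v = Real.cos θ • (-z).1 + Real.sin θ • (-z).2}
      = {v : α | ∃ θ : ℝ, v = Real.cos θ • z.1 + Real.sin θ • z.2} := by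
    ext v
    constructor
    · rintro ⟨θ, rfl⟩
      refine ⟨θ + Real.pi, ?_⟩
      simp [Real.cos_add, Real.sin_add]
    · rintro ⟨θ, rfl⟩
      refine ⟨θ + Real.pi, ?_⟩
      simp [Real.cos_add, Real.sin_add]
  rw [hset]
  exact ham z

lemma am_i (z : α × α) : am (cSmul Complex.I z) = am z := by
  refine (ham _).unique ?_
  have hz : cSmul Complex.I z = (-z.2, z.1) := by
    simp [cSmul, Complex.I_re, Complex.I_im]
  rw [hz]
  have hset : {v : α | ∃ θ : ℝ, v = Real.cos θ • (-z.2, z.1).1 + Real.sin θ • (-z.2, z.1).2}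
      = {v : α | ∃ θ : ℝ, v = Real.cos θ • z.1 + Real.sin θ • z.2} := by
    ext v
    constructor
    · rintro ⟨θ, rfl⟩
      refine ⟨θ - Real.pi/2, ?_⟩
      simp [Real.cos_sub, Real.sin_sub]
      module
    · rintro ⟨θ, rfl⟩
      refine ⟨θ + Real.pi/2, ?_⟩
      simp [Real.cos_add, Real.sin_add]
      module
  rw [hset]
  exact ham z

lemma am_add_le (x y : α × α) : am (x + y) ≤ am x + am y := by
  apply (ham (x+y)).2
  rintro v ⟨θ, rfl⟩
  have heq : Real.cos θ • (x + y).1 + Real.sin θ • (x + y).2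
      = (Real.cos θ • x.1 + Real.sin θ • x.2) + (Real.cos θ • y.1 + Real.sin θ • y.2) := by
    simp only [Prod.fst_add, Prod.snd_add, smul_add]
    abel
  rw [heq]
  exact add_le_add (am_ub am ham x θ) (am_ub am ham y θ)

lemma am_nsmul (n : ℕ) (z : α × α) : am (n • z) = n • am z := by
  rcases Nat.eq_zero_or_pos n with rfl | hn
  · simp [am_zero am ham]
  · have hc : (0:ℝ) < (n:ℝ) := by exact_mod_cast hn
    have hfst : (n • z).1 = (n:ℝ) • z.1 := by
      rw [show (n • z).1 = n • z.1 from rfl, ← Nat.cast_smul_eq_nsmul ℝ]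
    have hsnd : (n • z).2 = (n:ℝ) • z.2 := by
      rw [show (n • z).2 = n • z.2 from rfl, ← Nat.cast_smul_eq_nsmul ℝ]
    have hset : {v : α | ∃ θ : ℝ, v = Real.cos θ • (n • z).1 + Real.sin θ • (n • z).2}
        = ((((n:ℝ)) • ·) '' {v : α | ∃ θ : ℝ, v = Real.cos θ • z.1 + Real.sin θ • z.2}) := by
      ext v
      constructor
      · rintro ⟨θ, rfl⟩
        refine ⟨Real.cos θ • z.1 + Real.sin θ • z.2, ⟨θ, rfl⟩, ?_⟩
        rw [hfst, hsnd]
        show (n:ℝ) • (Real.cos θ • z.1 + Real.sin θ • z.2) = _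
        rw [smul_add, smul_comm ((n:ℝ)) (Real.cos θ), smul_comm ((n:ℝ)) (Real.sin θ)]
      · rintro ⟨w, ⟨θ, rfl⟩, rfl⟩
        refine ⟨θ, ?_⟩
        rw [hfst, hsnd]
        show (n:ℝ) • (Real.cos θ • z.1 + Real.sin θ • z.2) = _
        rw [smul_add, smul_comm ((n:ℝ)) (Real.cos θ), smul_comm ((n:ℝ)) (Real.sin θ)]
    have hlub := myIsLUB_smul (α := α) hc (ham z)
    rw [← hset] at hlub
    have h2 := (ham (n • z)).unique hlub
    rw [h2, Nat.cast_smul_eq_nsmul]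

lemma am_le_of_disj (x y : α × α) (h : am x ⊓ am y = 0) : am x ≤ am (x + y) := by
  have h1 : am x ≤ am (x + y) + am y := by
    have h2 := am_add_le am ham (x + y) (-y)
    rw [add_neg_cancel_right, am_neg am ham] at h2
    exact h2
  have h3 : am x ⊓ (am (x + y) + am y) = am x := inf_eq_left.mpr h1
  calc am x = am x ⊓ (am (x + y) + am y) := h3.symm
    _ ≤ am x ⊓ am (x + y) + am x ⊓ am y :=
        myInf_add_le _ _ _ (am_nonneg am ham x) (am_nonneg am ham (x+y)) (am_nonneg am ham y)
    _ = am x ⊓ am (x + y) := by rw [h, add_zero]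
    _ ≤ am (x + y) := inf_le_right

lemma am_disj_add (x y : α × α) (h : am x ⊓ am y = 0) : am x + am y ≤ am (x + y) := by
  have hx := am_le_of_disj am ham x y h
  have hy : am y ≤ am (x + y) := by
    have := am_le_of_disj am ham y x (by rwa [inf_comm])
    rwa [add_comm] at this
  have hsum : am x + am y = am x ⊔ am y := by
    have := inf_add_sup (am x) (am y)
    rw [h, zero_add] at this
    exact this.symm
  rw [hsum]
  exact sup_le hx hy


lemma am_sum_le (f : ℕ → α × α) (s : Finset ℕ) :
    am (∑ i ∈ s, f i) ≤ ∑ i ∈ s, am (f i) := by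
  induction s using Finset.cons_induction with
  | empty => simp [am_zero am ham]
  | cons a s ha ih =>
      rw [Finset.sum_cons, Finset.sum_cons]
      calc am (f a + ∑ i ∈ s, f i) ≤ am (f a) + am (∑ i ∈ s, f i) := am_add_le am ham _ _
        _ ≤ am (f a) + ∑ i ∈ s, am (f i) := add_le_add_right ih _

lemma am_disj_sum (f : ℕ → α × α) (s : Finset ℕ)
    (h : ∀ i ∈ s, ∀ j ∈ s, i ≠ j → am (f i) ⊓ am (f j) = 0) :
    ∑ i ∈ s, am (f i) ≤ am (∑ i ∈ s, f i) := by
  induction s using Finset.cons_induction with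
  | empty => simpa using am_nonneg am ham 0
  | cons a s ha ih =>
      rw [Finset.sum_cons, Finset.sum_cons]
      have hd : am (f a) ⊓ am (∑ i ∈ s, f i) = 0 := by
        have h1 : am (f a) ⊓ (∑ i ∈ s, am (f i)) = 0 :=
          myDisj_sum_fin _ (am_nonneg am ham _) _ s (fun i _ => am_nonneg am ham _)
            (fun i hi => h a (Finset.mem_cons_self a s) i (Finset.mem_cons_of_mem hi)
              (fun he => ha (he ▸ hi)))
        refine le_antisymm ?_ (le_inf (am_nonneg am ham _) (am_nonneg am ham _))
        calc am (f a) ⊓ am (∑ i ∈ s, f i) ≤ am (f a) ⊓ (∑ i ∈ s, am (f i)) :=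
              inf_le_inf_left _ (am_sum_le am ham f s)
          _ = 0 := h1
      calc am (f a) + ∑ i ∈ s, am (f i)
          ≤ am (f a) + am (∑ i ∈ s, f i) := by
            refine add_le_add_right (ih ?_) _
            exact fun i hi j hj hij =>
              h i (Finset.mem_cons_of_mem hi) j (Finset.mem_cons_of_mem hj) hij
        _ ≤ am (f a + ∑ i ∈ s, f i) := am_disj_add am ham _ _ hd

/-- the key combinatorial estimate for disjointness preserving families -/
lemma am_comb (b : α × α) (Z : α) (hZ : 0 ≤ Z) :
    ∀ (n : ℕ) (a : ℕ → α × α),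
      (∀ j k, j < k → k < n → am (b - a j) ⊓ am (a k) = 0) →
      (∀ k, k < n → am (a k) ≤ Z) →
      am (∑ k ∈ Finset.range n, a k) ≤ (n - 1) • am b + Z := by
  intro n
  induction n with
  | zero => intro a _ _; simpa [am_zero am ham] using hZ
  | succ n ih =>
      intro a hrel hbd
      rcases Nat.eq_zero_or_pos n with rfl | hn
      · simpa using hbd 0 (by norm_num)
      rw [Finset.sum_range_succ']
      set R := ∑ k ∈ Finset.range n, a (k + 1) with hR
      have hIH : am R ≤ (n - 1) • am b + Z := by
        refine ih (fun k => a (k + 1)) ?_ ?_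
        · intro j k hjk hk
          exact hrel (j+1) (k+1) (by omega) (by omega)
        · intro k hk
          exact hbd (k+1) (by omega)
      set c := b - a 0 with hc
      have hcR : am c ⊓ am R = 0 := by
        have h1 : am c ⊓ (∑ k ∈ Finset.range n, am (a (k+1))) = 0 :=
          myDisj_sum_fin _ (am_nonneg am ham _) _ _ (fun i _ => am_nonneg am ham _)
            (fun k hk => hrel 0 (k+1) (by omega) (by
              simp only [Finset.mem_range] at hk; omega))
        refine le_antisymm ?_ (le_inf (am_nonneg am ham _) (am_nonneg am ham _))
        calc am c ⊓ am R ≤ am c ⊓ (∑ k ∈ Finset.range n, am (a (k+1))) :=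
              inf_le_inf_left _ (am_sum_le am ham _ _)
          _ = 0 := h1
      have hkey : am (R + a 0) ≤ am (a 0) ⊔ (am b + am R) := by
        have hg1 : am (R + a 0) ≤ am (a 0) + am R := by
          have := am_add_le am ham (a 0) R
          rwa [add_comm (a 0) R] at this
        have hg2 : am (R + a 0) ≤ (am b + am R) + am c := by
          have h3 : R + a 0 = (b + R) - c := by rw [hc]; abel
          rw [h3]
          calc am ((b + R) - c) ≤ am (b + R) + am (-c) := by
                have := am_add_le am ham (b + R) (-c)
                rwa [← sub_eq_add_neg] at this
            _ = am (b + R) + am c := by rw [am_neg am ham]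
            _ ≤ (am b + am R) + am c := add_le_add_left (am_add_le am ham b R) _
        have hfin : am (R + a 0) ≤ (am (a 0) + am R) ⊓ ((am b + am R) + am c) :=
          le_inf hg1 hg2
        have hmono : (am (a 0) + am R) ⊓ ((am b + am R) + am c)
            ≤ (am (a 0) ⊔ (am b + am R) + am R) ⊓ (am (a 0) ⊔ (am b + am R) + am c) :=
          inf_le_inf (add_le_add_left le_sup_left _) (add_le_add_left le_sup_right _)
        have heq : (am (a 0) ⊔ (am b + am R) + am R) ⊓ (am (a 0) ⊔ (am b + am R) + am c)
            = am (a 0) ⊔ (am b + am R) + (am R ⊓ am c) := by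
          rw [add_inf]
        refine le_trans hfin (le_trans hmono ?_)
        rw [heq, inf_comm, hcR, add_zero]
      calc am (R + a 0) ≤ am (a 0) ⊔ (am b + am R) := hkey
        _ ≤ (n + 1 - 1) • am b + Z := by
          apply sup_le
          · calc am (a 0) ≤ Z := hbd 0 (by omega)
              _ ≤ (n + 1 - 1) • am b + Z :=
                le_add_of_nonneg_left (nsmul_nonneg (am_nonneg am ham b) _)
          · calc am b + am R ≤ am b + ((n-1) • am b + Z) := add_le_add_right hIH _
              _ = (1 + (n-1)) • am b + Z := by rw [add_nsmul, one_nsmul, add_assoc]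
              _ = (n + 1 - 1) • am b + Z := by congr 2; omega

end Am


private lemma prod_sum_zero {E : Type*} [AddCommGroup E] (g : ℕ → E) (s : Finset ℕ) :
    (∑ j ∈ s, (g j, (0:E))) = ((∑ j ∈ s, g j, (0:E)) : E × E) := by
  induction s using Finset.cons_induction with
  | empty => simp; rfl
  | cons a s ha ih => rw [Finset.sum_cons, Finset.sum_cons, ih, Prod.mk_add_mk, add_zero]

/-- Every disjointness preserving bounded linear operator between complex Banach lattices
is order bounded. -/
theorem stmt4 {E F : Type*}
    [NormedAddCommGroup E] [Lattice E] [HasSolidNorm E] [IsOrderedAddMonoid E] [NormedSpace ℝ E] [CompleteSpace E]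
    [NormedAddCommGroup F] [Lattice F] [HasSolidNorm F] [IsOrderedAddMonoid F] [NormedSpace ℝ F] [CompleteSpace F]
    (amE : E × E → E) (hamE : ∀ z, IsCAbs z (amE z))
    (amF : F × F → F) (hamF : ∀ z, IsCAbs z (amF z))
    (T : E × E → F × F)
    (hadd : ∀ z w, T (z + w) = T z + T w)
    (hsmul : ∀ (c : ℂ) (z : E × E), T (cSmul c z) = cSmul c (T z))
    (hbdd : ∃ C : ℝ, ∀ z, ‖amF (T z)‖ ≤ C * ‖amE z‖)
    (hdisj : ∀ x y : E × E, amE x ⊓ amE y = 0 → amF (T x) ⊓ amF (T y) = 0)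
    (z : E × E) :
    ∃ w : F, 0 ≤ w ∧ ∀ u : E × E, amE u ≤ amE z → amF (T u) ≤ w := by
  obtain ⟨C, hC⟩ := hbdd
  set e : E := amE z with he_def
  have he : 0 ≤ e := am_nonneg amE hamE z
  -- additive machinery
  let Th : (E × E) →+ (F × F) := AddMonoidHom.mk' T hadd
  have hTh : ∀ x, Th x = T x := fun _ => rfl
  have hTsub : ∀ x y : E × E, T (x - y) = T x - T y := fun x y => Th.map_sub x y
  have hTnsmul : ∀ (n : ℕ) (x : E × E), T (n • x) = n • T x := fun n x => Th.map_nsmul n x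
  have hTsum : ∀ (g : ℕ → E × E) (s : Finset ℕ), T (∑ i ∈ s, g i) = ∑ i ∈ s, T (g i) :=
    fun g s => map_sum Th g s
  -- norm bound with |C|
  have hC' : ∀ (a : E), 0 ≤ a → a ≤ e → ‖amF (T (a, 0))‖ ≤ |C| * ‖e‖ := by
    intro a ha hae
    have h1 : ‖amF (T (a, 0))‖ ≤ C * ‖amE (a, 0)‖ := hC (a, 0)
    have h2 : ‖amE (a, 0)‖ = ‖a‖ := by rw [am_real amE hamE a, norm_abs_eq_norm]
    have h3 : ‖a‖ ≤ ‖e‖ := HasSolidNorm.solid (by rwa [abs_of_nonneg ha, abs_of_nonneg he])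
    calc ‖amF (T (a, 0))‖ ≤ C * ‖amE (a, 0)‖ := h1
      _ ≤ |C| * ‖amE (a, 0)‖ := mul_le_mul_of_nonneg_right (le_abs_self C) (norm_nonneg _)
      _ = |C| * ‖a‖ := by rw [h2]
      _ ≤ |C| * ‖e‖ := mul_le_mul_of_nonneg_left h3 (abs_nonneg C)
  -- the key positive-part estimate
  have key : ∀ p : E, 0 ≤ p → p ≤ e → amF (T (p, 0)) ≤ amF (T (e, 0)) := by
    intro p hp hpe
    set b : F × F := T (e, 0) with hb
    set X : F := amF (T (p, 0)) with hX
    set Y : F := amF b with hY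
    have hY0 : 0 ≤ Y := am_nonneg amF hamF b
    set d : F := (X - Y)⁺ with hd
    have hdn : 0 ≤ d := posPart_nonneg _
    set K : ℝ := |C| * ‖e‖ + |C| * ‖e‖ with hK
    have hKn : 0 ≤ K := by positivity
    have hKbound : ∀ n : ℕ, 1 ≤ n → (n : ℝ) * ‖d‖ ≤ K := by
      intro n hn
      set y : E := n • p with hy
      have hy0 : 0 ≤ y := nsmul_nonneg hp n
      have hyne : y ≤ n • e := nsmul_le_nsmul_right hpe n
      set q : ℕ → E := fun k => (y - k • e)⁺ ⊓ e with hq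
      have hq_nonneg : ∀ k, 0 ≤ q k := fun k => le_inf (posPart_nonneg _) he
      have hq_le_e : ∀ k, q k ≤ e := fun k => inf_le_right
      have hq_anti : ∀ k, q (k + 1) ≤ q k := by
        intro k
        refine inf_le_inf_right e (posPart_mono ?_)
        exact sub_le_sub_left (myNsmul_mono e he (Nat.le_succ k)) y
      have hqsum : ∑ k ∈ Finset.range n, q k = y := myPartition e he n y hy0 hyne
      have hdE : ∀ j k : ℕ, j < k → (e - q j) ⊓ q k = 0 := fun j k hjk => myQdisj e y he hjk
      have hqn : q n = 0 := by
        have h1 : (y - n • e)⁺ = 0 := posPart_eq_zero.mpr (sub_nonpos.mpr hyne)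
        rw [hq]
        simp only [h1]
        exact inf_eq_left.mpr he
      set r : ℕ → E := fun k => q k - q (k + 1) with hr
      have hr_nonneg : ∀ k, 0 ≤ r k := fun k => sub_nonneg.mpr (hq_anti k)
      have htel : ∀ k, k ≤ n → ∑ j ∈ Finset.Ico k n, r j = q k := by
        intro k hk
        rw [hr]
        rw [myTelescope q k n hk, hqn, sub_zero]
      have hr_disj : ∀ i j : ℕ, i + 2 ≤ j → r i ⊓ r j = 0 := by
        intro i j hij
        have h1 : r i ≤ e - q (i + 1) := sub_le_sub_right (hq_le_e i) _
        have h2 : r j ≤ q j := sub_le_self _ (hq_nonneg (j + 1))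
        refine le_antisymm ?_ (le_inf (hr_nonneg i) (hr_nonneg j))
        calc r i ⊓ r j ≤ (e - q (i + 1)) ⊓ q j := inf_le_inf h1 h2
          _ = 0 := hdE (i + 1) j (by omega)
      -- disjointness of images of same-parity pieces
      have hrF : ∀ i j : ℕ, i + 2 ≤ j → amF (T (r i, 0)) ⊓ amF (T (r j, 0)) = 0 := by
        intro i j hij
        apply hdisj
        rw [am_real amE hamE, am_real amE hamE, abs_of_nonneg (hr_nonneg i),
          abs_of_nonneg (hr_nonneg j)]
        exact hr_disj i j hij
      set sE : Finset ℕ := (Finset.range n).filter (fun j => j % 2 = 0) with hsE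
      set sO : Finset ℕ := (Finset.range n).filter (fun j => ¬ (j % 2 = 0)) with hsO
      set A : E := ∑ j ∈ sE, r j with hA
      set B : E := ∑ j ∈ sO, r j with hB
      have hparity : ∀ (s : Finset ℕ), (∀ i ∈ s, ∀ j ∈ s, i ≠ j → (i % 2 = j % 2)) →
          ∑ i ∈ s, amF (T (r i, 0)) ≤ amF (T (∑ i ∈ s, r i, 0)) := by
        intro s hs
        have := am_disj_sum amF hamF (fun i => T (r i, 0)) s (fun i hi j hj hij => ?_)
        · calc ∑ i ∈ s, amF (T (r i, 0)) ≤ amF (∑ i ∈ s, T (r i, 0)) := this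
            _ = amF (T (∑ i ∈ s, (r i, (0:E)))) := by rw [← hTsum]
            _ = amF (T (∑ i ∈ s, r i, 0)) := by rw [prod_sum_zero]
        · have hpar := hs i hi j hj hij
          rcases Nat.lt_or_ge i j with h | h
          · exact hrF i j (by omega)
          · have : j < i := by omega
            rw [inf_comm]
            exact hrF j i (by omega)
      have hAbound : ∑ i ∈ sE, amF (T (r i, 0)) ≤ amF (T (A, 0)) := by
        refine hparity sE ?_
        intro i hi j hj _
        rw [hsE] at hi hj
        simp only [Finset.mem_filter] at hi hj
        omega
      have hBbound : ∑ i ∈ sO, amF (T (r i, 0)) ≤ amF (T (B, 0)) := by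
        refine hparity sO ?_
        intro i hi j hj _
        rw [hsO] at hi hj
        simp only [Finset.mem_filter] at hi hj
        omega
      set Z : F := amF (T (A, 0)) + amF (T (B, 0)) with hZ
      have hZ0 : 0 ≤ Z := add_nonneg (am_nonneg amF hamF _) (am_nonneg amF hamF _)
      -- each amF (T (q k, 0)) is at most Z
      have hqZ : ∀ k, k < n → amF (T (q k, 0)) ≤ Z := by
        intro k hk
        have h1 : (q k, (0:E)) = ∑ j ∈ Finset.Ico k n, (r j, (0:E)) := by
          rw [prod_sum_zero, htel k hk.le]
        calc amF (T (q k, 0)) = amF (∑ j ∈ Finset.Ico k n, T (r j, 0)) := by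
              rw [h1, hTsum]
          _ ≤ ∑ j ∈ Finset.Ico k n, amF (T (r j, 0)) := am_sum_le amF hamF _ _
          _ ≤ ∑ j ∈ Finset.range n, amF (T (r j, 0)) := by
              refine mySum_le_subset _ ?_ (fun i _ => am_nonneg amF hamF _)
              intro i hi
              simp only [Finset.mem_Ico] at hi
              simp only [Finset.mem_range]
              omega
          _ = ∑ j ∈ sE, amF (T (r j, 0)) + ∑ j ∈ sO, amF (T (r j, 0)) := by
              rw [hsE, hsO, Finset.sum_filter_add_sum_filter_not]
          _ ≤ Z := add_le_add hAbound hBbound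
      -- disjointness relations for the combinatorial lemma
      have hrel : ∀ j k : ℕ, j < k → k < n → amF (b - T (q j, 0)) ⊓ amF (T (q k, 0)) = 0 := by
        intro j k hjk _
        have h1 : b - T (q j, 0) = T ((e - q j, 0)) := by
          rw [hb, ← hTsub]
          congr 1
          rw [Prod.mk_sub_mk, sub_zero]
        rw [h1]
        apply hdisj
        rw [am_real amE hamE, am_real amE hamE,
          abs_of_nonneg (sub_nonneg.mpr (hq_le_e j)), abs_of_nonneg (hq_nonneg k)]
        exact hdE j k hjk
      have hcomb := am_comb amF hamF b Z hZ0 n (fun k => T (q k, 0)) hrel hqZ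
      have hnp : (n • ((p, (0:E)) : E × E)) = (y, (0:E)) := by
        ext
        · show n • p = y
          rw [hy]
        · show n • (0:E) = (0:E)
          simp
      have hsum2 : ∑ k ∈ Finset.range n, T (q k, 0) = n • T (p, 0) := by
        rw [← hTsum, prod_sum_zero, hqsum, ← hTnsmul, hnp]
      rw [hsum2, am_nsmul amF hamF] at hcomb
      -- n • X ≤ n • Y + Z
      have hnXY : n • X ≤ n • Y + Z := by
        calc n • X ≤ (n - 1) • Y + Z := hcomb
          _ ≤ n • Y + Z := add_le_add_left (myNsmul_mono Y hY0 (Nat.sub_le n 1)) Z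
      -- n • d ≤ Z
      have hnd : n • d ≤ Z := by
        have h1 : n • (X - Y) ≤ Z := by
          rw [smul_sub, sub_le_iff_le_add, add_comm]
          exact hnXY
        calc n • d = (n • (X - Y))⁺ := (myNsmul_posPart (X - Y) n).symm
          _ ≤ Z⁺ := posPart_mono h1
          _ = Z := posPart_eq_self.mpr hZ0
      -- norms
      have hnorm : ‖n • d‖ ≤ ‖Z‖ := by
        refine HasSolidNorm.solid ?_
        rw [abs_of_nonneg (nsmul_nonneg hdn n), abs_of_nonneg hZ0]
        exact hnd
      have hZnorm : ‖Z‖ ≤ K := by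
        have hA0 : 0 ≤ A := mySum_nonneg _ _ fun i _ => hr_nonneg i
        have hB0 : 0 ≤ B := mySum_nonneg _ _ fun i _ => hr_nonneg i
        have hAq : A ≤ q 0 := by
          rw [← htel 0 (Nat.zero_le n), hA]
          refine mySum_le_subset _ ?_ (fun i _ => hr_nonneg i)
          intro i hi
          rw [hsE] at hi
          simp only [Finset.mem_filter, Finset.mem_range] at hi
          simp only [Finset.mem_Ico]
          omega
        have hBq : B ≤ q 0 := by
          rw [← htel 0 (Nat.zero_le n), hB]
          refine mySum_le_subset _ ?_ (fun i _ => hr_nonneg i)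
          intro i hi
          rw [hsO] at hi
          simp only [Finset.mem_filter, Finset.mem_range] at hi
          simp only [Finset.mem_Ico]
          omega
        have hAe : A ≤ e := le_trans hAq (hq_le_e 0)
        have hBe : B ≤ e := le_trans hBq (hq_le_e 0)
        calc ‖Z‖ ≤ ‖amF (T (A, 0))‖ + ‖amF (T (B, 0))‖ := norm_add_le _ _
          _ ≤ |C| * ‖e‖ + |C| * ‖e‖ := add_le_add (hC' A hA0 hAe) (hC' B hB0 hBe)
      have : ‖n • d‖ = (n : ℝ) * ‖d‖ := by
        rw [← Nat.cast_smul_eq_nsmul ℝ, norm_smul, Real.norm_natCast]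
      rw [← this]
      exact le_trans hnorm hZnorm
    -- Archimedean conclusion: d = 0
    have hd0 : d = 0 := by
      by_contra hne
      have hpos : 0 < ‖d‖ := norm_pos_iff.mpr hne
      obtain ⟨n, hn⟩ := exists_nat_gt (K / ‖d‖)
      have hn1 : 1 ≤ n := by
        by_contra h
        have : n = 0 := by omega
        subst this
        simp only [Nat.cast_zero] at hn
        have := div_nonneg hKn hpos.le
        linarith
      have h1 := hKbound n hn1
      have h2 : K < (n : ℝ) * ‖d‖ := by
        rwa [div_lt_iff₀ hpos] at hn
      linarith
    rw [hd] at hd0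
    exact sub_nonpos.mp (posPart_eq_zero.mp hd0)
  -- final assembly
  set W : F := amF (T (e, 0)) with hW
  have hW0 : 0 ≤ W := am_nonneg amF hamF _
  refine ⟨W + W + W + W, by positivity, ?_⟩
  intro u hu
  -- the four nonnegative pieces
  have habs1 : |u.1| ≤ e := le_trans (am_abs_fst amE hamE u) hu
  have habs2 : |u.2| ≤ e := le_trans (am_abs_snd amE hamE u) hu
  have hp1 : u.1⁺ ≤ e := le_trans (le_trans (sup_le (le_abs_self _) (abs_nonneg _)) le_rfl) habs1
  have hp2 : u.1⁻ ≤ e := le_trans (le_trans (sup_le (neg_le_abs _) (abs_nonneg _)) le_rfl) habs1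
  have hp3 : u.2⁺ ≤ e := le_trans (le_trans (sup_le (le_abs_self _) (abs_nonneg _)) le_rfl) habs2
  have hp4 : u.2⁻ ≤ e := le_trans (le_trans (sup_le (neg_le_abs _) (abs_nonneg _)) le_rfl) habs2
  have hkey1 : amF (T (u.1⁺, 0)) ≤ W := key _ (posPart_nonneg _) hp1
  have hkey2 : amF (T (u.1⁻, 0)) ≤ W := key _ (negPart_nonneg _) hp2
  have hkey3 : amF (T (u.2⁺, 0)) ≤ W := key _ (posPart_nonneg _) hp3
  have hkey4 : amF (T (u.2⁻, 0)) ≤ W := key _ (negPart_nonneg _) hp4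
  -- decomposition
  have hIsmul : ∀ a : E, ((0:E), a) = cSmul Complex.I (a, 0) := by
    intro a
    simp [cSmul, Complex.I_re, Complex.I_im]
  have hdecomp : u = (((u.1⁺, 0) - (u.1⁻, 0)) + ((0:E), u.2⁺)) - ((0:E), u.2⁻) := by
    simp [Prod.mk_sub_mk, Prod.mk_add_mk, posPart_sub_negPart]
  have hTu : T u = ((T (u.1⁺, 0) - T (u.1⁻, 0)) + cSmul Complex.I (T (u.2⁺, 0)))
      - cSmul Complex.I (T (u.2⁻, 0)) := by
    conv_lhs => rw [hdecomp]
    rw [hTsub, hadd, hTsub, hIsmul u.2⁺, hIsmul u.2⁻, hsmul, hsmul]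
  -- triangle inequalities
  have htri : amF (T u) ≤ amF (T (u.1⁺, 0)) + amF (T (u.1⁻, 0))
      + amF (T (u.2⁺, 0)) + amF (T (u.2⁻, 0)) := by
    rw [hTu]
    have e1 : amF (cSmul Complex.I (T (u.2⁺, 0))) = amF (T (u.2⁺, 0)) := am_i amF hamF _
    have e2 : amF (cSmul Complex.I (T (u.2⁻, 0))) = amF (T (u.2⁻, 0)) := am_i amF hamF _
    have t1 : amF ((T (u.1⁺, 0) - T (u.1⁻, 0)) + cSmul Complex.I (T (u.2⁺, 0))
        - cSmul Complex.I (T (u.2⁻, 0)))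
        ≤ amF ((T (u.1⁺, 0) - T (u.1⁻, 0)) + cSmul Complex.I (T (u.2⁺, 0)))
          + amF (cSmul Complex.I (T (u.2⁻, 0))) := by
      have := am_add_le amF hamF
        ((T (u.1⁺, 0) - T (u.1⁻, 0)) + cSmul Complex.I (T (u.2⁺, 0)))
        (- cSmul Complex.I (T (u.2⁻, 0)))
      rw [← sub_eq_add_neg, am_neg amF hamF] at this
      exact this
    have t2 : amF ((T (u.1⁺, 0) - T (u.1⁻, 0)) + cSmul Complex.I (T (u.2⁺, 0)))
        ≤ amF (T (u.1⁺, 0) - T (u.1⁻, 0)) + amF (cSmul Complex.I (T (u.2⁺, 0))) :=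
      am_add_le amF hamF _ _
    have t3 : amF (T (u.1⁺, 0) - T (u.1⁻, 0))
        ≤ amF (T (u.1⁺, 0)) + amF (T (u.1⁻, 0)) := by
      have := am_add_le amF hamF (T (u.1⁺, 0)) (- T (u.1⁻, 0))
      rw [← sub_eq_add_neg, am_neg amF hamF] at this
      exact this
    refine le_trans t1 (le_trans (add_le_add_left t2 _) ?_)
    rw [e1, e2]
    exact add_le_add_left (add_le_add_left t3 _) _
  calc amF (T u) ≤ amF (T (u.1⁺, 0)) + amF (T (u.1⁻, 0))
      + amF (T (u.2⁺, 0)) + amF (T (u.2⁻, 0)) := htri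
    _ ≤ W + W + W + W := by
        exact add_le_add (add_le_add (add_le_add hkey1 hkey2) hkey3) hkey4
end
end

section
/- Let K be a compact Hausdorff space, X a Banach space which is a C(K)-module via an isometric unital algebra homomorphism m : C(K) → L(X), and let f ∈ C(K) act as a multiplication operator on X. Then the spectrum of the operator m(f) equals the range f(K). -/
/-- The spectrum of the multiplication operator `m f` on an exact Banach C(K)-module
equals the range of `f`. -/
theorem stmt7 {K : Type*} [TopologicalSpace K] [CompactSpace K] [T2Space K]
    {X : Type*} [NormedAddCommGroup X] [NormedSpace ℂ X] [CompleteSpace X]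
    (m : C(K, ℂ) →ₐ[ℂ] (X →L[ℂ] X)) (hm : Isometry m) (f : C(K, ℂ)) :
    spectrum ℂ (m f) = Set.range f := by
  have hnorm : ∀ g : C(K, ℂ), ‖m g‖ = ‖g‖ := fun g =>
    hm.norm_map_of_map_zero (map_zero m) g
  apply Set.Subset.antisymm
  · exact (AlgHom.spectrum_apply_subset m f).trans
      (ContinuousMap.spectrum_eq_range f).subset
  · rintro lam ⟨k, hk⟩
    rw [spectrum.mem_iff]
    intro hunit
    set b : X →L[ℂ] X := ↑hunit.unit⁻¹ with hb
    set ε : ℝ := 1 / (‖b‖ + 1) with hε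
    have hbpos : (0:ℝ) < ‖b‖ + 1 := by positivity
    have hεpos : 0 < ε := by positivity
    -- Urysohn function
    set U : Set K := {x | ‖f x - lam‖ < ε} with hU
    have hUopen : IsOpen U := by
      have : Continuous fun x => ‖f x - lam‖ := by fun_prop
      simpa [hU] using isOpen_lt this continuous_const |>.preimage continuous_id
    have hkU : k ∈ U := by simp [hU, hk, hεpos]
    obtain ⟨g, hg0, hg1, hg01⟩ := exists_continuous_zero_one_of_isClosed
      hUopen.isClosed_compl (isClosed_singleton (x := k))
      (by simpa [Set.disjoint_singleton_right] using hkU)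
    set G : C(K, ℂ) := ⟨fun x => (g x : ℂ), by fun_prop⟩ with hG
    have hGk : G k = 1 := by
      simp [hG, hg1 (Set.mem_singleton k)]
    have hG1 : (1:ℝ) ≤ ‖G‖ := by
      calc (1:ℝ) = ‖G k‖ := by simp [hGk]
        _ ≤ ‖G‖ := G.norm_coe_le_norm k
    set h : C(K, ℂ) := (algebraMap ℂ C(K, ℂ) lam - f) * G with hh
    have hhnorm : ‖h‖ ≤ ε := by
      apply (ContinuousMap.norm_le _ hεpos.le).2
      intro x
      simp only [hh, ContinuousMap.mul_apply, ContinuousMap.sub_apply, norm_mul]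
      by_cases hx : x ∈ U
      · have h1 : ‖(algebraMap ℂ C(K, ℂ) lam) x - f x‖ < ε := by
          have : ‖f x - lam‖ < ε := hx
          rw [norm_sub_rev] at this
          simpa using this
        have h2 : ‖G x‖ ≤ 1 := by
          simp only [hG, ContinuousMap.coe_mk, Complex.norm_real]
          exact abs_le.2 ⟨by linarith [(hg01 x).1], (hg01 x).2⟩
        calc ‖(algebraMap ℂ C(K, ℂ) lam) x - f x‖ * ‖G x‖ ≤ ε * 1 :=
              mul_le_mul h1.le h2 (norm_nonneg _) hεpos.le
          _ = ε := mul_one ε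
      · have : g x = 0 := hg0 hx
        simp [hG, this, hεpos.le]
    -- key identity
    have hmh : m h = (algebraMap ℂ (X →L[ℂ] X) lam - m f) * m G := by
      rw [hh, map_mul, map_sub, AlgHom.commutes]
    have hba : b * (algebraMap ℂ (X →L[ℂ] X) lam - m f) = 1 := by
      simp [hb]
    have key : ‖m G‖ ≤ ‖b‖ * ‖m h‖ := by
      calc ‖m G‖ = ‖b * ((algebraMap ℂ (X →L[ℂ] X) lam - m f) * m G)‖ := by
            rw [← mul_assoc, hba, one_mul]
        _ ≤ ‖b‖ * ‖(algebraMap ℂ (X →L[ℂ] X) lam - m f) * m G‖ := norm_mul_le _ _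
        _ = ‖b‖ * ‖m h‖ := by rw [hmh]
    have : (1:ℝ) ≤ ‖b‖ * ε := by
      calc (1:ℝ) ≤ ‖G‖ := hG1
        _ = ‖m G‖ := (hnorm G).symm
        _ ≤ ‖b‖ * ‖m h‖ := key
        _ ≤ ‖b‖ * ε := by
            have := (hnorm h).le
            nlinarith [hnorm h, hhnorm, norm_nonneg b, norm_nonneg (m h)]
    have : ‖b‖ * ε < 1 := by
      rw [hε]
      rw [mul_one_div, div_lt_one hbpos]
      linarith
    linarith
end

section
/- Let K be a compact Hausdorff space with no isolated points, X a Banach C(K)-module, and f ∈ C(K) acting as a multiplication operator on X. Then every point of the spectrum of m(f) belongs to the semi-Fredholm spectrum: for every λ ∈ f(K), the operator λI − m(f) is not semi-Fredholm; in particular σ₁(m(f)) = σ(m(f)) = f(K). -/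
set_option maxHeartbeats 1000000
set_option synthInstance.maxHeartbeats 1000000

open ContinuousLinearMap in
/-- Finite-dimensional pigeonhole: if `T` is bounded below modulo a finite-dimensional
subspace `N`, there cannot be too many almost-null, well-separated vectors. -/
lemma stmt8_lemB {Y : Type*} [NormedAddCommGroup Y] [NormedSpace ℂ Y]
    (T : Y →L[ℂ] Y) (N : Submodule ℂ Y) [FiniteDimensional ℂ N]
    {C ε : ℝ} (hC : 0 < C) (hε : 0 < ε)
    (hdist : ∀ y : Y, ∃ z ∈ N, ‖y - z‖ ≤ C * ‖T y‖)
    {n : ℕ} (hn : Module.finrank ℂ N < n)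
    (hεs : C * ε * n < 1/4)
    (y : Fin n → Y) (Bop : Fin n → (Y →L[ℂ] Y))
    (hy : ∀ i, (1:ℝ)/2 ≤ ‖y i‖) (hTy : ∀ i, ‖T (y i)‖ ≤ ε)
    (hB : ∀ i, ‖Bop i‖ ≤ 1)
    (hBy : ∀ i j, Bop i (y j) = if i = j then y i else 0) : False := by
  choose z hzN hz using fun i => hdist (y i)
  set z' : Fin n → N := fun i => ⟨z i, hzN i⟩ with hz'
  have hnli : ¬ LinearIndependent ℂ z' := fun h =>
    absurd (LinearIndependent.fintype_card_le_finrank h) (by simpa using hn.not_ge)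
  obtain ⟨a, hsum, i₁, hi₁⟩ := Fintype.not_linearIndependent_iff.mp hnli
  obtain ⟨i₀, -, hmax⟩ := Finset.exists_max_image Finset.univ (fun i => ‖a i‖)
    ⟨i₁, Finset.mem_univ _⟩
  have ha₀ : 0 < ‖a i₀‖ :=
    lt_of_lt_of_le (norm_pos_iff.mpr hi₁) (hmax i₁ (Finset.mem_univ _))
  have hzsum : ∑ i, a i • z i = 0 := by
    have := congrArg (N.subtype) hsum
    simpa [hz'] using this
  set w := ∑ i, a i • y i with hw
  have hBw : Bop i₀ w = a i₀ • y i₀ := by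
    rw [hw, map_sum]
    rw [Finset.sum_congr rfl (fun i _ => by rw [map_smul, hBy])]
    simp [Finset.sum_ite_eq']
  have h1 : ‖a i₀‖ * ‖y i₀‖ ≤ ‖w‖ := by
    calc ‖a i₀‖ * ‖y i₀‖ = ‖Bop i₀ w‖ := by rw [hBw, norm_smul]
    _ ≤ ‖Bop i₀‖ * ‖w‖ := le_opNorm _ _
    _ ≤ 1 * ‖w‖ := by gcongr; exact hB i₀
    _ = ‖w‖ := one_mul _
  have h2 : ‖w‖ ≤ n * (‖a i₀‖ * (C * ε)) := by
    have hwz : w = ∑ i, a i • (y i - z i) := by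
      simp only [smul_sub, Finset.sum_sub_distrib, hzsum, sub_zero, hw]
    calc ‖w‖ = ‖∑ i, a i • (y i - z i)‖ := by rw [hwz]
    _ ≤ ∑ i, ‖a i • (y i - z i)‖ := norm_sum_le _ _
    _ ≤ ∑ _i : Fin n, ‖a i₀‖ * (C * ε) := by
        refine Finset.sum_le_sum fun i _ => ?_
        rw [norm_smul]
        have h3 : ‖y i - z i‖ ≤ C * ε := le_trans (hz i) (by
          have := hTy i
          nlinarith)
        exact mul_le_mul (hmax i (Finset.mem_univ _)) h3 (norm_nonneg _) ha₀.le
    _ = n * (‖a i₀‖ * (C * ε)) := by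
        simp [Finset.sum_const, Finset.card_univ, nsmul_eq_mul]
  have hy₀ := hy i₀
  nlinarith [norm_nonneg w]

/-- Urysohn pair in an open set around a point. -/
lemma stmt8_lemC0 {K : Type*} [TopologicalSpace K] [CompactSpace K] [T2Space K]
    {V : Set K} (hV : IsOpen V) {p : K} (hp : p ∈ V) :
    ∃ g h : C(K, ℝ), g p = 1 ∧ (∀ x, g x ∈ Set.Icc (0:ℝ) 1) ∧
      (∀ x, h x ∈ Set.Icc (0:ℝ) 1) ∧ (∀ x, x ∉ V → g x = 0) ∧
      (∀ x, x ∉ V → h x = 0) ∧ h * g = g := by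
  obtain ⟨t, ht, htc, htV⟩ := exists_mem_nhds_isClosed_subset (hV.mem_nhds hp)
  set W := interior t with hW
  have hpW : p ∈ W := mem_interior_iff_mem_nhds.mpr ht
  have hWV : closure W ⊆ V := (closure_minimal interior_subset htc).trans htV
  obtain ⟨g, hg0, hg1, hgI⟩ := exists_continuous_zero_one_of_isClosed
    (isOpen_interior (s := t)).isClosed_compl isClosed_singleton
    (Set.disjoint_left.mpr fun x hx hx' => hx (Set.mem_singleton_iff.mp hx' ▸ hpW))
  obtain ⟨h, hh0, hh1, hhI⟩ := exists_continuous_zero_one_of_isClosed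
    hV.isClosed_compl isClosed_closure
    (Set.disjoint_left.mpr fun x hx hx' => hx (hWV hx'))
  refine ⟨g, h, hg1 rfl, hgI, hhI, fun x hx => hg0 (fun hxW => hx (hWV (subset_closure hxW))),
    fun x hx => hh0 hx, ?_⟩
  ext x
  by_cases hxW : x ∈ W
  · simp [hh1 (subset_closure hxW)]
  · simp [hg0 hxW]

/-- n points with pairwise disjoint open neighborhoods inside a given open set,
in a space with no isolated points. -/
lemma stmt8_lemC1 {K : Type*} [TopologicalSpace K] [T2Space K]
    (hiso : ∀ k : K, ¬ IsOpen ({k} : Set K))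
    {U : Set K} (hU : IsOpen U) {k : K} (hk : k ∈ U) (n : ℕ) :
    ∃ (p : Fin n → K) (V : Fin n → Set K),
      (∀ i, p i ∈ V i) ∧ (∀ i, IsOpen (V i)) ∧ (∀ i, V i ⊆ U) ∧
      Pairwise (Function.onFun Disjoint V) := by
  have hUinf : U.Infinite := by
    intro hfin
    apply hiso k
    have h1 : IsClosed (U \ {k}) := (hfin.subset Set.diff_subset).isClosed
    have h2 : ({k} : Set K) = U ∩ (U \ {k})ᶜ := by
      ext x
      simp only [Set.mem_singleton_iff, Set.mem_inter_iff, Set.mem_compl_iff, Set.mem_diff,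
        Set.mem_singleton_iff, not_and, not_not]
      constructor
      · rintro rfl; exact ⟨hk, fun _ => rfl⟩
      · rintro ⟨hxU, h⟩; exact h hxU
    rw [h2]
    exact hU.inter h1.isOpen_compl
  set emb := hUinf.natEmbedding
  set p : Fin n → K := fun i => (emb i).1 with hp
  have hpU : ∀ i, p i ∈ U := fun i => (emb (i : ℕ)).2
  have hpinj : Function.Injective p := by
    intro i j hij
    have : (emb i : K) = emb j := hij
    have := emb.injective (Subtype.ext this)
    exact Fin.val_injective this
  obtain ⟨W, hW, hWd⟩ := (Set.finite_range p).t2_separation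
  refine ⟨p, fun i => W (p i) ∩ U, fun i => ⟨(hW (p i)).1, hpU i⟩,
    fun i => (hW (p i)).2.inter hU, fun i => Set.inter_subset_right, ?_⟩
  intro i j hij
  have hd : Disjoint (W (p i)) (W (p j)) :=
    hWd (Set.mem_range_self i) (Set.mem_range_self j) (fun h => hij (hpinj h))
  exact hd.mono Set.inter_subset_left Set.inter_subset_left

open ContinuousLinearMap in
/-- Construction of almost-null, well-separated vectors for the multiplication operator. -/
lemma stmt8_lemC {K : Type*} [TopologicalSpace K] [CompactSpace K] [T2Space K]
    (hiso : ∀ k : K, ¬ IsOpen ({k} : Set K))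
    {Y : Type*} [NormedAddCommGroup Y] [NormedSpace ℂ Y]
    (M : C(K, ℂ) →ₐ[ℂ] (Y →L[ℂ] Y)) (hM : ∀ g, ‖M g‖ = ‖g‖)
    (f : C(K, ℂ)) (k : K) (n : ℕ) {ε : ℝ} (hε : 0 < ε) :
    ∃ (y : Fin n → Y) (Bop : Fin n → (Y →L[ℂ] Y)),
      (∀ i, (1:ℝ)/2 ≤ ‖y i‖) ∧
      (∀ i, ‖(f k • (1 : Y →L[ℂ] Y) - M f) (y i)‖ ≤ ε) ∧
      (∀ i, ‖Bop i‖ ≤ 1) ∧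
      (∀ i j, Bop i (y j) = if i = j then y i else 0) := by
  classical
  set e : C(K, ℂ) := f k • 1 - f with he
  have hek : e k = 0 := by simp [he]
  set U : Set K := (fun x => ‖e x‖) ⁻¹' Set.Iio ε with hU
  have hUopen : IsOpen U := (isOpen_Iio).preimage (e.continuous.norm)
  have hkU : k ∈ U := by simp [hU, hek, hε]
  obtain ⟨p, V, hpV, hVopen, hVU, hVd⟩ := stmt8_lemC1 hiso hUopen hkU n
  have hex : ∀ i, ∃ g h : C(K, ℝ), g (p i) = 1 ∧ (∀ x, g x ∈ Set.Icc (0:ℝ) 1) ∧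
      (∀ x, h x ∈ Set.Icc (0:ℝ) 1) ∧ (∀ x, x ∉ V i → g x = 0) ∧
      (∀ x, x ∉ V i → h x = 0) ∧ h * g = g :=
    fun i => stmt8_lemC0 (hVopen i) (hpV i)
  choose g h hg1 hgI hhI hg0 hh0 hhg using hex
  set gC : Fin n → C(K, ℂ) := fun i => ⟨fun x => ((g i x : ℝ) : ℂ),
    Complex.continuous_ofReal.comp (g i).continuous⟩ with hgC
  set hC : Fin n → C(K, ℂ) := fun i => ⟨fun x => ((h i x : ℝ) : ℂ),
    Complex.continuous_ofReal.comp (h i).continuous⟩ with hhC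
  have hgC1 : ∀ i, (1:ℝ) ≤ ‖gC i‖ := by
    intro i
    have : ‖gC i (p i)‖ ≤ ‖gC i‖ := ContinuousMap.norm_coe_le_norm _ _
    simpa [hgC, hg1 i] using this
  have hhCle : ∀ i, ‖hC i‖ ≤ 1 := by
    intro i
    refine ContinuousMap.norm_le _ zero_le_one |>.mpr fun x => ?_
    have := hhI i x
    simp only [hhC, ContinuousMap.coe_mk, Complex.norm_real]
    rw [Real.norm_eq_abs, abs_le]
    constructor <;> nlinarith [this.1, this.2]
  have hgCle : ∀ i, ‖gC i‖ ≤ 1 := by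
    intro i
    refine ContinuousMap.norm_le _ zero_le_one |>.mpr fun x => ?_
    have := hgI i x
    simp only [hgC, ContinuousMap.coe_mk, Complex.norm_real]
    rw [Real.norm_eq_abs, abs_le]
    constructor <;> nlinarith [this.1, this.2]
  have hxex : ∀ i, ∃ x : Y, ‖x‖ < 1 ∧ 1/2 < ‖M (gC i) x‖ := by
    intro i
    apply exists_lt_apply_of_lt_opNorm
    rw [hM]
    linarith [hgC1 i]
  choose x hx1 hx2 using hxex
  set y : Fin n → Y := fun i => M (gC i) (x i) with hy
  have hTM : f k • (1 : Y →L[ℂ] Y) - M f = M e := by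
    rw [he, map_sub, map_smul, map_one]
  have hegC : ∀ i, ‖e * gC i‖ ≤ ε := by
    intro i
    refine ContinuousMap.norm_le _ hε.le |>.mpr fun z => ?_
    by_cases hzU : z ∈ U
    · have h1 : ‖e z‖ < ε := hzU
      have h2 : ‖gC i z‖ ≤ 1 := by
        simpa using (ContinuousMap.norm_coe_le_norm (gC i) z).trans (hgCle i)
      calc ‖(e * gC i) z‖ = ‖e z‖ * ‖gC i z‖ := by simp
        _ ≤ ε * 1 := mul_le_mul h1.le h2 (norm_nonneg _) hε.le
        _ = ε := mul_one _
    · have : g i z = 0 := hg0 i z (fun hzV => hzU (hVU i hzV))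
      simp [hgC, this, hε.le]
  refine ⟨y, fun i => M (hC i), ?_, ?_, ?_, ?_⟩
  · intro i; exact le_of_lt (hx2 i)
  · intro i
    rw [hTM, hy]
    have : (M e) ((M (gC i)) (x i)) = (M (e * gC i)) (x i) := by
      rw [map_mul]; rfl
    rw [this]
    calc ‖(M (e * gC i)) (x i)‖ ≤ ‖M (e * gC i)‖ * ‖x i‖ := le_opNorm _ _
      _ ≤ ε * 1 := by
          apply mul_le_mul _ (hx1 i).le (norm_nonneg _) hε.le
          rw [hM]; exact hegC i
      _ = ε := mul_one _
  · intro i; rw [hM]; exact hhCle i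
  · intro i j
    have hcomp : (M (hC i)) (y j) = (M (hC i * gC j)) (x j) := by
      rw [map_mul, hy]; rfl
    by_cases hij : i = j
    · subst hij
      have : hC i * gC i = gC i := by
        ext z
        have := ContinuousMap.congr_fun (hhg i) z
        simp only [ContinuousMap.mul_apply] at this ⊢
        simp only [hgC, hhC, ContinuousMap.coe_mk]
        rw [← Complex.ofReal_mul, this]
      rw [if_pos rfl, hcomp, this, hy]
    · have : hC i * gC j = 0 := by
        ext z
        simp only [ContinuousMap.mul_apply, ContinuousMap.zero_apply]
        by_cases hzV : z ∈ V j
        · have hzVi : z ∉ V i := fun hzi =>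
            Set.disjoint_left.mp (hVd hij) hzi hzV
          have : h i z = 0 := hh0 i z hzVi
          simp [hhC, this]
        · have : g j z = 0 := hg0 j z hzV
          simp [hgC, this]
      rw [if_neg hij, hcomp, this, map_zero]; rfl

open ContinuousLinearMap

/-- The dual (transpose) of a continuous linear map, as precomposition. -/
noncomputable def stmt8_dualCLM {X : Type*} [NormedAddCommGroup X] [NormedSpace ℂ X]
    (T : X →L[ℂ] X) : (X →L[ℂ] ℂ) →L[ℂ] (X →L[ℂ] ℂ) :=
  (ContinuousLinearMap.compSL X X ℂ (RingHom.id ℂ) (RingHom.id ℂ)).flip T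

lemma stmt8_dualCLM_apply {X : Type*} [NormedAddCommGroup X] [NormedSpace ℂ X]
    (T : X →L[ℂ] X) (φ : X →L[ℂ] ℂ) : stmt8_dualCLM T φ = φ.comp T := rfl

lemma stmt8_dualCLM_norm {X : Type*} [NormedAddCommGroup X] [NormedSpace ℂ X]
    [CompleteSpace X] (T : X →L[ℂ] X) : ‖stmt8_dualCLM T‖ = ‖T‖ := by
  apply le_antisymm
  · refine opNorm_le_bound _ (norm_nonneg T) fun φ => ?_
    rw [stmt8_dualCLM_apply, mul_comm]
    exact opNorm_comp_le φ T
  · refine opNorm_le_bound _ (norm_nonneg (stmt8_dualCLM T)) fun x => ?_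
    refine NormedSpace.norm_le_dual_bound ℂ (T x) (by positivity) fun φ => ?_
    have h1 : φ (T x) = (stmt8_dualCLM T φ) x := rfl
    rw [h1]
    calc ‖(stmt8_dualCLM T φ) x‖ ≤ ‖stmt8_dualCLM T φ‖ * ‖x‖ := le_opNorm _ _
      _ ≤ (‖stmt8_dualCLM T‖ * ‖φ‖) * ‖x‖ := by
          have := le_opNorm (stmt8_dualCLM T) φ
          exact mul_le_mul_of_nonneg_right this (norm_nonneg x)
      _ = ‖stmt8_dualCLM T‖ * ‖x‖ * ‖φ‖ := by ring

/-- Open mapping onto a closed range. -/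
lemma stmt8_lemD1 {X : Type*} [NormedAddCommGroup X] [NormedSpace ℂ X] [CompleteSpace X]
    (T : X →L[ℂ] X) (hclosed : IsClosed (LinearMap.range (T : X →ₗ[ℂ] X) : Set X)) :
    ∃ C > 0, ∀ u ∈ LinearMap.range (T : X →ₗ[ℂ] X), ∃ x, T x = u ∧ ‖x‖ ≤ C * ‖u‖ := by
  set R : Submodule ℂ X := LinearMap.range (T : X →ₗ[ℂ] X) with hR
  haveI : CompleteSpace R := hclosed.completeSpace_coe
  set Tc : X →L[ℂ] R := T.codRestrict R (fun x => LinearMap.mem_range_self _ x) with hTc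
  have hsurj : Function.Surjective Tc := by
    rintro ⟨u, hu⟩
    obtain ⟨x, hx⟩ := hu
    exact ⟨x, Subtype.ext hx⟩
  obtain ⟨C, hC, hCs⟩ := exists_preimage_norm_le Tc hsurj
  refine ⟨C, hC, fun u hu => ?_⟩
  obtain ⟨x, hx1, hx2⟩ := hCs ⟨u, hu⟩
  exact ⟨x, congrArg Subtype.val hx1, hx2⟩

/-- Primal kernel-distance bound. -/
lemma stmt8_lemD2 {X : Type*} [NormedAddCommGroup X] [NormedSpace ℂ X] [CompleteSpace X]
    (T : X →L[ℂ] X) {C : ℝ}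
    (hCs : ∀ u ∈ LinearMap.range (T : X →ₗ[ℂ] X), ∃ x, T x = u ∧ ‖x‖ ≤ C * ‖u‖) :
    ∀ x : X, ∃ z ∈ LinearMap.ker (T : X →ₗ[ℂ] X), ‖x - z‖ ≤ C * ‖T x‖ := by
  intro x
  obtain ⟨x', hx'1, hx'2⟩ := hCs (T x) (LinearMap.mem_range_self _ x)
  refine ⟨x - x', ?_, by simpa using hx'2⟩
  simp [LinearMap.mem_ker, map_sub, hx'1]

/-- Dual kernel-distance bound. -/
lemma stmt8_lemD3 {X : Type*} [NormedAddCommGroup X] [NormedSpace ℂ X] [CompleteSpace X]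
    (T : X →L[ℂ] X) {C : ℝ} (hC : 0 < C)
    (hCs : ∀ u ∈ LinearMap.range (T : X →ₗ[ℂ] X), ∃ x, T x = u ∧ ‖x‖ ≤ C * ‖u‖) :
    ∀ φ : X →L[ℂ] ℂ, ∃ η ∈ LinearMap.ker ((stmt8_dualCLM T) : (X →L[ℂ] ℂ) →ₗ[ℂ] (X →L[ℂ] ℂ)),
      ‖φ - η‖ ≤ C * ‖stmt8_dualCLM T φ‖ := by
  intro φ
  set R : Submodule ℂ X := LinearMap.range (T : X →ₗ[ℂ] X) with hR
  set ψ : R →L[ℂ] ℂ := φ.comp R.subtypeL with hψ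
  have hψle : ‖ψ‖ ≤ C * ‖stmt8_dualCLM T φ‖ := by
    refine opNorm_le_bound _ (by positivity) fun u => ?_
    obtain ⟨x, hx1, hx2⟩ := hCs u u.2
    have h1 : ψ u = (stmt8_dualCLM T φ) x := by
      simp [hψ, stmt8_dualCLM_apply, ← hx1]
    rw [h1]
    calc ‖(stmt8_dualCLM T φ) x‖ ≤ ‖stmt8_dualCLM T φ‖ * ‖x‖ := le_opNorm _ _
      _ ≤ ‖stmt8_dualCLM T φ‖ * (C * ‖u‖) := mul_le_mul_of_nonneg_left hx2 (norm_nonneg _)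
      _ = C * ‖stmt8_dualCLM T φ‖ * ‖u‖ := by ring
  obtain ⟨Φ, hΦ1, hΦ2⟩ := exists_extension_norm_eq R ψ
  refine ⟨φ - Φ, ?_, by simpa [hΦ2] using hψle⟩
  rw [LinearMap.mem_ker]
  ext x
  have h1 : Φ (T x) = ψ ⟨T x, LinearMap.mem_range_self _ x⟩ :=
    hΦ1 ⟨T x, LinearMap.mem_range_self _ x⟩
  simp only [ContinuousLinearMap.coe_coe, stmt8_dualCLM_apply, ContinuousLinearMap.coe_comp', Function.comp_apply,
    ContinuousLinearMap.sub_apply, ContinuousLinearMap.zero_apply]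
  rw [h1]
  simp [hψ]

/-- If the cokernel is finite dimensional, the kernel of the dual map is finite dimensional. -/
lemma stmt8_lemD4 {X : Type*} [NormedAddCommGroup X] [NormedSpace ℂ X]
    (T : X →L[ℂ] X) [h : FiniteDimensional ℂ (X ⧸ LinearMap.range (T : X →ₗ[ℂ] X))] :
    FiniteDimensional ℂ (LinearMap.ker ((stmt8_dualCLM T) : (X →L[ℂ] ℂ) →ₗ[ℂ] (X →L[ℂ] ℂ))) := by
  classical
  set R : Submodule ℂ X := LinearMap.range (T : X →ₗ[ℂ] X) with hR
  have hker : ∀ φ : LinearMap.ker ((stmt8_dualCLM T) : (X →L[ℂ] ℂ) →ₗ[ℂ] (X →L[ℂ] ℂ)),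
      R ≤ LinearMap.ker ((φ : X →L[ℂ] ℂ) : X →ₗ[ℂ] ℂ) := by
    rintro ⟨φ, hφ⟩ u ⟨x, rfl⟩
    have h1 : stmt8_dualCLM T φ = 0 := hφ
    have h2 : φ (T x) = (stmt8_dualCLM T φ) x := rfl
    simp only [LinearMap.mem_ker, ContinuousLinearMap.coe_coe]
    rw [h2, h1]; rfl
  set J : LinearMap.ker ((stmt8_dualCLM T) : (X →L[ℂ] ℂ) →ₗ[ℂ] (X →L[ℂ] ℂ)) →ₗ[ℂ] Module.Dual ℂ (X ⧸ R) :=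
    { toFun := fun φ => R.liftQ ((φ : X →L[ℂ] ℂ) : X →ₗ[ℂ] ℂ) (hker φ)
      map_add' := by
        intro φ ψ
        refine Submodule.linearMap_qext _ ?_
        ext x
        simp [Submodule.liftQ_mkQ]
      map_smul' := by
        intro c φ
        refine Submodule.linearMap_qext _ ?_
        ext x
        simp [Submodule.liftQ_mkQ] } with hJ
  have hJinj : Function.Injective J := by
    intro φ ψ hφψ
    ext x
    have h1 : J φ (R.mkQ x) = J ψ (R.mkQ x) := by rw [hφψ]
    simpa [hJ, Submodule.liftQ_apply] using h1
  exact FiniteDimensional.of_injective J hJinj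

/-- The dual module structure. -/
noncomputable def stmt8_dualAlgHom {K : Type*} [TopologicalSpace K] [CompactSpace K]
    {X : Type*} [NormedAddCommGroup X] [NormedSpace ℂ X]
    (m : C(K, ℂ) →ₐ[ℂ] (X →L[ℂ] X)) :
    C(K, ℂ) →ₐ[ℂ] ((X →L[ℂ] ℂ) →L[ℂ] (X →L[ℂ] ℂ)) where
  toFun g := stmt8_dualCLM (m g)
  map_one' := by
    ext φ x
    simp [stmt8_dualCLM_apply, map_one]
  map_mul' g h := by
    have hc : m g * m h = m h * m g := by
      rw [← map_mul, ← map_mul, mul_comm]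
    ext φ x
    simp only [stmt8_dualCLM_apply, map_mul, ContinuousLinearMap.coe_comp',
      Function.comp_apply, ContinuousLinearMap.mul_apply]
    rw [show (m g) ((m h) x) = (m g * m h) x from rfl, hc]
    rfl
  map_zero' := by
    ext φ x
    simp [stmt8_dualCLM_apply, map_zero]
  map_add' g h := by
    ext φ x
    simp [stmt8_dualCLM_apply, map_add]
  commutes' c := by
    ext φ x
    simp [stmt8_dualCLM_apply, Algebra.algebraMap_eq_smul_one]

/-- If K has no isolated points, then every point of the spectrum of the multiplication
operator `m f` on a Banach C(K)-module belongs to the semi-Fredholm spectrum: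
λI − m f is not semi-Fredholm for any λ ∈ f(K); moreover σ(m f) = f(K). -/
theorem stmt8 {K : Type*} [TopologicalSpace K] [CompactSpace K] [T2Space K]
    {X : Type*} [NormedAddCommGroup X] [NormedSpace ℂ X] [CompleteSpace X]
    (m : C(K, ℂ) →ₐ[ℂ] (X →L[ℂ] X)) (hm : Isometry m)
    (hiso : ∀ k : K, ¬ IsOpen ({k} : Set K))
    (f : C(K, ℂ)) :
    (∀ l ∈ Set.range f,
      ¬ (IsClosed (LinearMap.range ((l • (1 : X →L[ℂ] X) - m f : X →L[ℂ] X) : X →ₗ[ℂ] X) : Set X) ∧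
         (FiniteDimensional ℂ (LinearMap.ker ((l • (1 : X →L[ℂ] X) - m f : X →L[ℂ] X) : X →ₗ[ℂ] X)) ∨
          FiniteDimensional ℂ (X ⧸ LinearMap.range ((l • (1 : X →L[ℂ] X) - m f : X →L[ℂ] X) : X →ₗ[ℂ] X))))) ∧
    spectrum ℂ (m f) = Set.range f := by
  have hMnorm : ∀ g : C(K, ℂ), ‖m g‖ = ‖g‖ := fun g =>
    hm.norm_map_of_map_zero (map_zero m) g
  have hpart1 : ∀ l ∈ Set.range f,
      ¬ (IsClosed (LinearMap.range ((l • (1 : X →L[ℂ] X) - m f : X →L[ℂ] X) : X →ₗ[ℂ] X) : Set X) ∧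
         (FiniteDimensional ℂ (LinearMap.ker ((l • (1 : X →L[ℂ] X) - m f : X →L[ℂ] X) : X →ₗ[ℂ] X)) ∨
          FiniteDimensional ℂ (X ⧸ LinearMap.range ((l • (1 : X →L[ℂ] X) - m f : X →L[ℂ] X) : X →ₗ[ℂ] X)))) := by
    rintro l ⟨k, hk⟩ ⟨hclosed, hsf⟩
    set T : X →L[ℂ] X := l • (1 : X →L[ℂ] X) - m f with hT
    obtain ⟨C, hC, hCs⟩ := stmt8_lemD1 T hclosed
    rcases hsf with hker | hcoker
    · -- finite-dimensional kernel case
      haveI := hker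
      set n : ℕ := Module.finrank ℂ (LinearMap.ker (T : X →ₗ[ℂ] X)) + 1 with hn
      have hnpos : (0:ℝ) < n := by positivity
      set ε : ℝ := 1 / (8 * C * n) with hεdef
      have hε : 0 < ε := by positivity
      have hεs : C * ε * n < 1/4 := by
        have : C * ε * n = 1/8 := by
          rw [hεdef]; field_simp
        rw [this]; norm_num
      obtain ⟨y, Bop, h1, h2, h3, h4⟩ := stmt8_lemC hiso m hMnorm f k n hε
      have h2' : ∀ i, ‖T (y i)‖ ≤ ε := by
        intro i
        have := h2 i
        rwa [hk] at this
      exact stmt8_lemB T (LinearMap.ker (T : X →ₗ[ℂ] X)) hC hε (stmt8_lemD2 T hCs)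
        (lt_add_one _) hεs y Bop h1 h2' h3 h4
    · -- finite-dimensional cokernel case: dualize
      haveI := hcoker
      haveI : FiniteDimensional ℂ (LinearMap.ker ((stmt8_dualCLM T) : (X →L[ℂ] ℂ) →ₗ[ℂ] (X →L[ℂ] ℂ))) := stmt8_lemD4 T
      set M' := stmt8_dualAlgHom m with hM'
      have hM'norm : ∀ g : C(K, ℂ), ‖M' g‖ = ‖g‖ := fun g => by
        rw [hM', stmt8_dualAlgHom]
        show ‖stmt8_dualCLM (m g)‖ = ‖g‖
        rw [stmt8_dualCLM_norm, hMnorm]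
      have hTdual : stmt8_dualCLM T = f k • (1 : (X →L[ℂ] ℂ) →L[ℂ] (X →L[ℂ] ℂ)) - M' f := by
        ext φ x
        simp only [stmt8_dualCLM_apply, hT, ContinuousLinearMap.coe_comp', Function.comp_apply,
          ContinuousLinearMap.sub_apply, ContinuousLinearMap.smul_apply,
          ContinuousLinearMap.one_apply, map_sub, map_smul, hk]
        rfl
      set n : ℕ := Module.finrank ℂ (LinearMap.ker ((stmt8_dualCLM T) : (X →L[ℂ] ℂ) →ₗ[ℂ] (X →L[ℂ] ℂ))) + 1 with hn
      have hnpos : (0:ℝ) < n := by positivity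
      set ε : ℝ := 1 / (8 * C * n) with hεdef
      have hε : 0 < ε := by positivity
      have hεs : C * ε * n < 1/4 := by
        have : C * ε * n = 1/8 := by
          rw [hεdef]; field_simp
        rw [this]; norm_num
      obtain ⟨y, Bop, h1, h2, h3, h4⟩ := stmt8_lemC hiso M' hM'norm f k n hε
      have h2' : ∀ i, ‖(stmt8_dualCLM T) (y i)‖ ≤ ε := by
        intro i
        rw [hTdual]
        exact h2 i
      exact stmt8_lemB (stmt8_dualCLM T) (LinearMap.ker ((stmt8_dualCLM T) : (X →L[ℂ] ℂ) →ₗ[ℂ] (X →L[ℂ] ℂ))) hC hε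
        (stmt8_lemD3 T hC hCs) (lt_add_one _) hεs y Bop h1 h2' h3 h4
  refine ⟨hpart1, ?_⟩
  apply Set.Subset.antisymm
  · have h1 := AlgHom.spectrum_apply_subset m f
    rwa [ContinuousMap.spectrum_eq_range f] at h1
  · intro l hl
    by_contra hns
    rw [spectrum.notMem_iff] at hns
    obtain ⟨u, hu⟩ := hns
    have halg : (algebraMap ℂ (X →L[ℂ] X)) l = l • (1 : X →L[ℂ] X) :=
      Algebra.algebraMap_eq_smul_one l
    set T : X →L[ℂ] X := l • (1 : X →L[ℂ] X) - m f with hT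
    have huT : (u : X →L[ℂ] X) = T := by rw [hu, halg]
    have hinj : LinearMap.ker (T : X →ₗ[ℂ] X) = ⊥ := by
      rw [LinearMap.ker_eq_bot']
      intro x hx
      have : ((u⁻¹ : (X →L[ℂ] X)ˣ) : X →L[ℂ] X) (T x) = x := by
        rw [← huT]
        rw [show ((u⁻¹ : (X →L[ℂ] X)ˣ) : X →L[ℂ] X) ((u : X →L[ℂ] X) x)
          = (((u⁻¹ : (X →L[ℂ] X)ˣ) : X →L[ℂ] X) * (u : X →L[ℂ] X)) x from rfl]
        rw [Units.inv_mul]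
        rfl
      rw [ContinuousLinearMap.coe_coe] at hx
      rw [hx, map_zero] at this
      exact this.symm
    have hsurj : LinearMap.range (T : X →ₗ[ℂ] X) = ⊤ := by
      rw [LinearMap.range_eq_top]
      intro y
      refine ⟨((u⁻¹ : (X →L[ℂ] X)ˣ) : X →L[ℂ] X) y, ?_⟩
      rw [← huT]
      rw [ContinuousLinearMap.coe_coe]
      rw [show (u : X →L[ℂ] X) (((u⁻¹ : (X →L[ℂ] X)ˣ) : X →L[ℂ] X) y)
        = ((u : X →L[ℂ] X) * ((u⁻¹ : (X →L[ℂ] X)ˣ) : X →L[ℂ] X)) y from rfl]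
      rw [Units.mul_inv]
      rfl
    refine hpart1 l hl ⟨?_, Or.inl ?_⟩
    · rw [← hT, hsurj]
      show IsClosed ((⊤ : Submodule ℂ X) : Set X)
      rw [Submodule.top_coe]
      exact isClosed_univ
    · rw [← hT, hinj]
      infer_instance
end

section
/- Let K be an extremally disconnected compact Hausdorff space, X a Kaplansky C(K)-module, and T ∈ L(X) an operator commuting with all multiplication operators from C(K). If K has no isolated points, then every eigenvalue of T has infinite-dimensional eigenspace: λ ∈ σ_p(T) implies dim ker(λI − T) = ∞; consequently if λI − T is upper semi-Fredholm then ker(λI − T) = 0. -/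
/-- On a Kaplansky C(K)-module over an extremally disconnected compact Hausdorff space K
without isolated points, an operator T commuting with all multiplication operators has
infinite-dimensional eigenspaces; consequently if λI − T is upper semi-Fredholm then
its kernel is trivial. -/
theorem stmt9 {K : Type*} [TopologicalSpace K] [CompactSpace K] [T2Space K]
    [ExtremallyDisconnected K]
    {X : Type*} [NormedAddCommGroup X] [NormedSpace ℂ X] [CompleteSpace X]
    (m : C(K, ℂ) →ₐ[ℂ] (X →L[ℂ] X)) (hm : Isometry m)
    (hKap : ∀ x : X, ∃ U : Set K, IsClopen U ∧
        ∀ f : C(K, ℂ), (m f x = 0 ↔ ∀ k ∈ U, f k = 0))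
    (hiso : ∀ k : K, ¬ IsOpen ({k} : Set K))
    (T : X →L[ℂ] X) (hcomm : ∀ f : C(K, ℂ), T.comp (m f) = (m f).comp T) :
    (∀ l : ℂ, (∃ x : X, x ≠ 0 ∧ T x = l • x) →
        ¬ FiniteDimensional ℂ (LinearMap.ker ((l • (1 : X →L[ℂ] X) - T : X →L[ℂ] X) : X →ₗ[ℂ] X))) ∧
    (∀ l : ℂ, IsClosed (LinearMap.range ((l • (1 : X →L[ℂ] X) - T : X →L[ℂ] X) : X →ₗ[ℂ] X) : Set X) →
        FiniteDimensional ℂ (LinearMap.ker ((l • (1 : X →L[ℂ] X) - T : X →L[ℂ] X) : X →ₗ[ℂ] X)) →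
        LinearMap.ker ((l • (1 : X →L[ℂ] X) - T : X →L[ℂ] X) : X →ₗ[ℂ] X) = ⊥) := by
  classical
  have main : ∀ l : ℂ, (∃ x : X, x ≠ 0 ∧ T x = l • x) →
      ¬ FiniteDimensional ℂ (LinearMap.ker ((l • (1 : X →L[ℂ] X) - T : X →L[ℂ] X) : X →ₗ[ℂ] X)) := by
    rintro l ⟨x, hx, hTx⟩ hfd
    obtain ⟨U, hUclo, hU⟩ := hKap x
    have hUne : U.Nonempty := by
      by_contra h
      rw [Set.not_nonempty_iff_eq_empty] at h
      apply hx
      have := (hU 1).mpr (by simp [h])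
      simpa using this
    -- splitting a nonempty clopen set into two disjoint nonempty clopen pieces
    have split : ∀ W : Set K, IsClopen W → W.Nonempty →
        ∃ V W' : Set K, IsClopen V ∧ IsClopen W' ∧ V.Nonempty ∧ W'.Nonempty ∧
          V ⊆ W ∧ W' ⊆ W ∧ Disjoint V W' := by
      intro W hW hWne
      obtain ⟨k, hk⟩ := hWne
      have h2 : ∃ k' ∈ W, k' ≠ k := by
        by_contra h
        push_neg at h
        have hWk : W = {k} := Set.eq_singleton_iff_unique_mem.mpr ⟨hk, h⟩
        exact hiso k (hWk ▸ hW.isOpen)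
      obtain ⟨k', hk', hkk'⟩ := h2
      obtain ⟨C, hC, hk'C, hkC⟩ := exists_isClopen_of_totally_separated hkk'
      refine ⟨W ∩ C, W ∩ Cᶜ, hW.inter hC, hW.inter hC.compl,
        ⟨k', hk', hk'C⟩, ⟨k, hk, hkC⟩, Set.inter_subset_left, Set.inter_subset_left, ?_⟩
      exact Disjoint.mono Set.inter_subset_right Set.inter_subset_right disjoint_compl_right
    -- iterated splitting
    have step : ∀ W : Set K, (IsClopen W ∧ W.Nonempty ∧ W ⊆ U) →
        ∃ q : Set K × Set K,
          (IsClopen q.1 ∧ q.1.Nonempty ∧ q.1 ⊆ U) ∧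
          (IsClopen q.2 ∧ q.2.Nonempty ∧ q.2 ⊆ U) ∧
          Disjoint q.1 q.2 ∧ q.2 ⊆ W ∧ q.1 ⊆ W := by
      rintro W ⟨h1, h2, h3⟩
      obtain ⟨V, W', hV, hW', hVne, hW'ne, hVW, hW'W, hdis⟩ := split W h1 h2
      exact ⟨(V, W'), ⟨hV, hVne, hVW.trans h3⟩, ⟨hW', hW'ne, hW'W.trans h3⟩, hdis, hW'W, hVW⟩
    choose! F hF using step
    set Wn : ℕ → Set K := fun n => (fun W => (F W).2)^[n] U with hWndef
    have hWsucc : ∀ n, Wn (n + 1) = (F (Wn n)).2 := fun n =>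
      Function.iterate_succ_apply' _ n U
    have hWn : ∀ n, IsClopen (Wn n) ∧ (Wn n).Nonempty ∧ Wn n ⊆ U := by
      intro n
      induction n with
      | zero => exact ⟨hUclo, hUne, le_refl U⟩
      | succ k ih =>
          rw [hWsucc k]
          exact (hF _ ih).2.1
    set Vn : ℕ → Set K := fun n => (F (Wn n)).1 with hVndef
    have hVn : ∀ n, IsClopen (Vn n) ∧ (Vn n).Nonempty ∧ Vn n ⊆ U :=
      fun n => (hF _ (hWn n)).1
    have hdisjW : ∀ n, Disjoint (Vn n) (Wn (n + 1)) := by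
      intro n
      rw [hWsucc n]
      exact (hF _ (hWn n)).2.2.1
    have hVsub : ∀ n, Vn n ⊆ Wn n := fun n => (hF _ (hWn n)).2.2.2.2
    have hWmono : ∀ n j, Wn (n + j) ⊆ Wn n := by
      intro n j
      induction j with
      | zero => exact le_refl _
      | succ k ih =>
          have h1 : Wn (n + (k + 1)) ⊆ Wn (n + k) := by
            rw [show n + (k + 1) = (n + k) + 1 from rfl, hWsucc (n + k)]
            exact (hF _ (hWn (n + k))).2.2.2.1
          exact h1.trans ih
    have hVdisj : ∀ i j, i < j → Disjoint (Vn i) (Vn j) := by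
      intro i j hij
      have h1 : Vn j ⊆ Wn (i + 1) := by
        have := hWmono (i + 1) (j - (i + 1))
        rw [Nat.add_sub_cancel' hij] at this
        exact (hVsub j).trans this
      exact (hdisjW i).mono_right h1
    have hVdisj' : ∀ i j, i ≠ j → Disjoint (Vn i) (Vn j) := by
      intro i j hij
      rcases lt_or_gt_of_ne hij with h | h
      · exact hVdisj i j h
      · exact (hVdisj j i h).symm
    -- indicator functions
    have hcont : ∀ n, Continuous fun k => if k ∈ Vn n then (1 : ℂ) else 0 := by
      intro n
      refine continuous_if ?_ continuous_const.continuousOn continuous_const.continuousOn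
      intro a ha
      rw [show {x | x ∈ Vn n} = Vn n from rfl, (hVn n).1.frontier_eq] at ha
      exact absurd ha (Set.notMem_empty a)
    set fn : ℕ → C(K, ℂ) := fun n => ⟨fun k => if k ∈ Vn n then (1 : ℂ) else 0, hcont n⟩
      with hfndef
    -- the vectors
    set v : ℕ → X := fun n => m (fn n) x with hvdef
    have hker : ∀ f : C(K, ℂ), m f x ∈ LinearMap.ker ((l • (1 : X →L[ℂ] X) - T : X →L[ℂ] X) : X →ₗ[ℂ] X) := by
      intro f
      have h1 : T (m f x) = m f (T x) := by
        have := hcomm f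
        calc T (m f x) = (T.comp (m f)) x := rfl
          _ = ((m f).comp T) x := by rw [this]
          _ = m f (T x) := rfl
      have h2 : T (m f x) = l • m f x := by
        rw [h1, hTx, map_smul]
      simp [LinearMap.mem_ker, ContinuousLinearMap.sub_apply, h2]
    have hli : LinearIndependent ℂ v := by
      rw [linearIndependent_iff']
      intro s g hsum i hi
      have hsum' : m (∑ j ∈ s, g j • fn j) x = 0 := by
        rw [map_sum, ContinuousLinearMap.sum_apply]
        rw [← hsum]
        refine Finset.sum_congr rfl fun j _ => ?_
        rw [map_smul, ContinuousLinearMap.smul_apply]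
      obtain ⟨k, hk⟩ := (hVn i).2.1
      have hkU : k ∈ U := (hVn i).2.2 hk
      have := (hU _).mp hsum' k hkU
      rw [ContinuousMap.sum_apply] at this
      have heval : ∀ j ∈ s, (g j • fn j) k = if j = i then g i else 0 := by
        intro j _
        rcases eq_or_ne j i with rfl | hji
        · simp [hfndef, hk]
        · have hknot : k ∉ Vn j := fun hkj =>
            (hVdisj' j i hji).ne_of_mem hkj hk rfl
          simp [hfndef, hji, hknot]
      rw [Finset.sum_congr rfl heval, Finset.sum_ite_eq' s i (fun _ => g i),
        if_pos hi] at this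
      exact this
    -- lift to the kernel
    set w : ℕ → LinearMap.ker ((l • (1 : X →L[ℂ] X) - T : X →L[ℂ] X) : X →ₗ[ℂ] X) :=
      fun n => ⟨v n, hker (fn n)⟩ with hwdef
    have hliw : LinearIndependent ℂ w := by
      apply LinearIndependent.of_comp (LinearMap.ker ((l • (1 : X →L[ℂ] X) - T : X →L[ℂ] X) : X →ₗ[ℂ] X)).subtype
      exact hli
    have : Finite ℕ := hliw.finite
    exact absurd this (Infinite.not_finite)
  refine ⟨main, ?_⟩
  intro l _ hfd
  by_contra hne
  obtain ⟨y, hy, hyne⟩ := Submodule.exists_mem_ne_zero_of_ne_bot hne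
  rw [LinearMap.mem_ker] at hy
  have hTy : T y = l • y := by
    have : (l • (1 : X →L[ℂ] X) - T) y = 0 := hy
    rw [ContinuousLinearMap.sub_apply, ContinuousLinearMap.smul_apply,
      ContinuousLinearMap.one_apply, sub_eq_zero] at this
    exact this.symm
  exact main l ⟨y, hyne, hTy⟩ hfd
end

section
/- Let K be a compact Hausdorff space, φ : K → K a homeomorphism, w ∈ C(K), and T the weighted composition operator (Tf)(k) = w(k) f(φ(k)) on C(K). Then T is semi-Fredholm if and only if T is Fredholm of index 0, if and only if the zero set Z(w) = {k ∈ K : w(k) = 0} is finite and consists of isolated points of K. -/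
open ContinuousMap Module

namespace Stmt11Aux

lemma key_ineq (s e : ℝ) (hs0 : 0 ≤ s) (he0 : 0 < e) :
    Real.sqrt s * e^4 / (s^2 + e^4) ≤ e := by
  have hr0 := Real.sqrt_nonneg s
  have hr2 : Real.sqrt s ^ 2 = s := Real.sq_sqrt hs0
  have key : Real.sqrt s * e^4 ≤ e * ((Real.sqrt s ^ 2)^2 + e^4) := by
    nlinarith [sq_nonneg (Real.sqrt s - e), sq_nonneg (Real.sqrt s + e),
      sq_nonneg (Real.sqrt s * Real.sqrt s - e * e), sq_nonneg (Real.sqrt s * Real.sqrt s + e * e),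
      sq_nonneg (Real.sqrt s * Real.sqrt s - e * Real.sqrt s), mul_nonneg hr0 he0.le]
  rw [hr2] at key
  rw [div_le_iff₀ (by positivity)]
  exact key

variable {K : Type*} [TopologicalSpace K] [CompactSpace K] [T2Space K]

/-- Evaluation at a point as a linear map. -/
noncomputable def evalLM (p : K) : C(K, ℂ) →ₗ[ℂ] ℂ where
  toFun f := f p
  map_add' _ _ := rfl
  map_smul' _ _ := rfl

@[simp] lemma evalLM_apply (p : K) (f : C(K, ℂ)) : evalLM p f = f p := rfl

open scoped Classical in
/-- Indicator function of a clopen singleton. -/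
noncomputable def indC (p : K) (hp : IsOpen ({p} : Set K)) : C(K, ℂ) where
  toFun x := if x = p then 1 else 0
  continuous_toFun := by
    apply continuous_if
    · intro a ha
      have hclopen : IsClopen ({p} : Set K) := ⟨isClosed_singleton, hp⟩
      have he : {x : K | x = p} = ({p} : Set K) := by ext; simp
      rw [he, hclopen.frontier_eq] at ha
      exact absurd ha (Set.notMem_empty a)
    · exact continuousOn_const
    · exact continuousOn_const

lemma indC_self (p : K) (hp : IsOpen ({p} : Set K)) : indC p hp p = 1 := by
  simp [indC]

lemma indC_ne (p : K) (hp : IsOpen ({p} : Set K)) {x : K} (hx : x ≠ p) : indC p hp x = 0 := by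
  simp [indC, hx]


variable {φ : K ≃ₜ K} {w : C(K, ℂ)} {T : C(K, ℂ) →L[ℂ] C(K, ℂ)}

lemma mul_mem_range (hT : ∀ (f : C(K, ℂ)) (k : K), T f k = w k * f (φ k)) (h : C(K, ℂ)) :
    w * h ∈ LinearMap.range (T : C(K, ℂ) →ₗ[ℂ] C(K, ℂ)) := by
  refine ⟨h.comp ⟨⇑φ.symm, φ.symm.continuous⟩, ?_⟩
  ext k
  rw [ContinuousLinearMap.coe_coe, hT]
  simp

lemma range_vanish (hT : ∀ (f : C(K, ℂ)) (k : K), T f k = w k * f (φ k))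
    {g : C(K, ℂ)} (hg : g ∈ LinearMap.range (T : C(K, ℂ) →ₗ[ℂ] C(K, ℂ))) {k : K} (hk : w k = 0) : g k = 0 := by
  obtain ⟨f, rfl⟩ := hg
  rw [ContinuousLinearMap.coe_coe, hT, hk, zero_mul]

lemma mem_ker_iff (hT : ∀ (f : C(K, ℂ)) (k : K), T f k = w k * f (φ k)) (f : C(K, ℂ)) :
    f ∈ LinearMap.ker (T : C(K, ℂ) →ₗ[ℂ] C(K, ℂ)) ↔ ∀ k, w k ≠ 0 → f (φ k) = 0 := by
  rw [LinearMap.mem_ker]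
  constructor
  · intro h k hk
    have := ContinuousMap.ext_iff.mp h k
    rw [ContinuousLinearMap.coe_coe, hT, ContinuousMap.zero_apply] at this
    rcases mul_eq_zero.mp this with h' | h'
    · exact absurd h' hk
    · exact h'
  · intro h
    ext k
    rw [ContinuousLinearMap.coe_coe, hT, ContinuousMap.zero_apply]
    by_cases hk : w k = 0
    · rw [hk, zero_mul]
    · rw [h k hk, mul_zero]

/-- Part I: closed range implies the zero set is open. -/
lemma isOpen_Z (hT : ∀ (f : C(K, ℂ)) (k : K), T f k = w k * f (φ k))
    (hcl : IsClosed (LinearMap.range (T : C(K, ℂ) →ₗ[ℂ] C(K, ℂ)) : Set C(K, ℂ))) : IsOpen {k : K | w k = 0} := by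
  have hwabs : Continuous fun k => ‖w k‖ :=
    continuous_norm.comp w.continuous
  set sq : C(K, ℂ) := ⟨fun k => ((Real.sqrt (‖w k‖) : ℝ) : ℂ),
    by fun_prop⟩ with hsqdef
  -- sq is in the closure of the range
  have hmemcl : sq ∈ closure (LinearMap.range (T : C(K, ℂ) →ₗ[ℂ] C(K, ℂ)) : Set C(K, ℂ)) := by
    rw [Metric.mem_closure_iff]
    intro ε hε
    have he0 : 0 < ε / 2 := by positivity
    set e : ℝ := ε / 2 with he
    have hden : ∀ k : K, (0:ℝ) < (‖w k‖)^2 + e^4 := by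
      intro k; positivity
    set h : C(K, ℂ) := ⟨fun k => (starRingEnd ℂ) (w k) *
        ((Real.sqrt (‖w k‖) / ((‖w k‖)^2 + e^4) : ℝ) : ℂ),
      by
        refine Continuous.mul (Complex.continuous_conj.comp w.continuous) ?_
        refine Complex.continuous_ofReal.comp ?_
        exact (Real.continuous_sqrt.comp hwabs).div
          (((hwabs.pow 2)).add continuous_const) (fun k => ne_of_gt (hden k))⟩ with hhdef
    refine ⟨w * h, mul_mem_range hT h, ?_⟩
    rw [dist_eq_norm]
    have hbound : ‖sq - w * h‖ ≤ e := by
      rw [ContinuousMap.norm_le _ he0.le]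
      intro k
      have hs0 : 0 ≤ ‖w k‖ := norm_nonneg _
      have hcalc : (sq - w * h) k = ((Real.sqrt (‖w k‖) -
          (‖w k‖)^2 * (Real.sqrt (‖w k‖) /
            ((‖w k‖)^2 + e^4)) : ℝ) : ℂ) := by
        simp only [ContinuousMap.sub_apply, ContinuousMap.mul_apply, hsqdef, hhdef,
          ContinuousMap.coe_mk]
        rw [← mul_assoc, Complex.mul_conj, Complex.normSq_eq_norm_sq]
        push_cast
        ring
      rw [hcalc, Complex.norm_real, Real.norm_eq_abs]
      have hexp : Real.sqrt (‖w k‖) - (‖w k‖)^2 *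
          (Real.sqrt (‖w k‖) / ((‖w k‖)^2 + e^4))
          = Real.sqrt (‖w k‖) * e^4 / ((‖w k‖)^2 + e^4) := by
        field_simp
        ring
      rw [hexp, abs_of_nonneg (by positivity)]
      exact key_ineq _ _ hs0 he0
    rw [he] at hbound
    linarith
  have hmem : sq ∈ LinearMap.range (T : C(K, ℂ) →ₗ[ℂ] C(K, ℂ)) := by
    rw [← SetLike.mem_coe, ← hcl.closure_eq]
    exact hmemcl
  obtain ⟨f, hf⟩ := hmem
  set M : ℝ := ‖f‖ + 1 with hM
  have hM0 : 0 < M := by positivity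
  have hkey : {k : K | w k = 0} = {k : K | ‖w k‖ < 1 / M^2} := by
    ext p
    simp only [Set.mem_setOf_eq]
    constructor
    · intro hp; rw [hp]; simpa using by positivity
    · intro hp
      by_contra hwp
      have heq : w p * f (φ p) = ((Real.sqrt (‖w p‖) : ℝ) : ℂ) := by
        have := ContinuousMap.ext_iff.mp hf p
        rw [ContinuousLinearMap.coe_coe, hT] at this
        exact this
      have hs0 : 0 < ‖w p‖ := by
        rcases lt_or_eq_of_le (norm_nonneg (w p)) with h' | h'
        · exact h'
        · exact absurd (norm_eq_zero.mp h'.symm) hwp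
      have habs : ‖w p‖ * ‖f (φ p)‖ = Real.sqrt (‖w p‖) := by
        have := congrArg norm heq
        rwa [norm_mul, Complex.norm_real, Real.norm_eq_abs, abs_of_nonneg (Real.sqrt_nonneg _)] at this
      have hss : Real.sqrt (‖w p‖) * Real.sqrt (‖w p‖)
          = ‖w p‖ := Real.mul_self_sqrt hs0.le
      have hsq_pos : 0 < Real.sqrt (‖w p‖) := Real.sqrt_pos.mpr hs0
      have hfp : ‖f (φ p)‖ = 1 / Real.sqrt (‖w p‖) := by
        field_simp
        nlinarith [habs, hss]
      have hsqrt_lt : Real.sqrt (‖w p‖) < 1 / M := by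
        have h1 : Real.sqrt (‖w p‖) < Real.sqrt (1 / M^2) :=
          Real.sqrt_lt_sqrt hs0.le hp
        rwa [show (1:ℝ)/M^2 = (1/M)^2 by rw [one_div, one_div, ← inv_pow], Real.sqrt_sq (by positivity)] at h1
      have hMlt : M < ‖f (φ p)‖ := by
        rw [hfp, lt_div_iff₀ hsq_pos]
        calc M * Real.sqrt (‖w p‖) < M * (1/M) :=
              mul_lt_mul_of_pos_left hsqrt_lt hM0
          _ = 1 := by field_simp
      have hle : ‖f (φ p)‖ ≤ ‖f‖ := by
        have := ContinuousMap.norm_coe_le_norm f (φ p)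
        exact this
      rw [hM] at hMlt
      linarith
  rw [hkey]
  exact isOpen_lt hwabs continuous_const

/-- Urysohn: a complex continuous function that is 1 at a point and 0 on a closed set. -/
lemma exists_sep {s : Set K} (hs : IsClosed s) {p : K} (hp : p ∉ s) :
    ∃ g : C(K, ℂ), (∀ x ∈ s, g x = 0) ∧ g p = 1 := by
  obtain ⟨g, hg0, hg1, -⟩ := exists_continuous_zero_one_of_isClosed hs isClosed_singleton
    (Set.disjoint_singleton_right.mpr hp)
  refine ⟨⟨fun x => ((g x : ℝ) : ℂ), Complex.continuous_ofReal.comp g.continuous⟩, ?_, ?_⟩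
  · intro x hx
    have h := hg0 hx
    simp only [Pi.zero_apply] at h
    simp [h]
  · have h := hg1 (Set.mem_singleton p)
    simp only [Pi.one_apply] at h
    simp [h]

/-- Part II: if the zero set is open and the kernel is finite dimensional,
the zero set is finite. -/
lemma finite_Z_of_ker (hT : ∀ (f : C(K, ℂ)) (k : K), T f k = w k * f (φ k))
    (hZ : IsOpen {k : K | w k = 0}) (hker : FiniteDimensional ℂ (LinearMap.ker (T : C(K, ℂ) →ₗ[ℂ] C(K, ℂ)))) :
    {k : K | w k = 0}.Finite := by
  classical
  by_contra hinf
  obtain ⟨t, hts, htc⟩ := Set.Infinite.exists_subset_card_eq hinf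
    (finrank ℂ (LinearMap.ker (T : C(K, ℂ) →ₗ[ℂ] C(K, ℂ))) + 1)
  have hZc : IsClosed ((⇑φ '' {k : K | w k = 0}ᶜ) : Set K) :=
    φ.isClosed_image.mpr hZ.isClosed_compl
  have hsep : ∀ i : t, ∃ g : C(K, ℂ), g ∈ LinearMap.ker (T : C(K, ℂ) →ₗ[ℂ] C(K, ℂ)) ∧ g (φ i) = 1 ∧
      ∀ j : t, j ≠ i → g (φ j) = 0 := by
    intro i
    have hclosed : IsClosed ((⇑φ '' {k : K | w k = 0}ᶜ) ∪ ⇑φ '' ((t : Set K) \ {(i : K)})) :=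
      hZc.union (((t.finite_toSet).diff).image _).isClosed
    have hpmem : φ (i : K) ∉ ((⇑φ '' {k : K | w k = 0}ᶜ) ∪ ⇑φ '' ((t : Set K) \ {(i : K)})) := by
      rintro (h | h)
      · exact (φ.injective.mem_set_image.mp h) (hts i.2)
      · exact (φ.injective.mem_set_image.mp h).2 rfl
    obtain ⟨g, hg0, hg1⟩ := exists_sep hclosed hpmem
    refine ⟨g, ?_, hg1, ?_⟩
    · rw [mem_ker_iff hT]
      intro k hk
      exact hg0 _ (Set.mem_union_left _ (Set.mem_image_of_mem _ hk))
    · intro j hj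
      refine hg0 _ (Set.mem_union_right _ (Set.mem_image_of_mem _ ?_))
      exact ⟨j.2, fun h => hj (Subtype.ext h)⟩
  choose e he hei hej using hsep
  set v : t → (LinearMap.ker (T : C(K, ℂ) →ₗ[ℂ] C(K, ℂ)) : Submodule ℂ C(K, ℂ)) := fun i => ⟨e i, he i⟩ with hv
  set Φ : (LinearMap.ker (T : C(K, ℂ) →ₗ[ℂ] C(K, ℂ)) : Submodule ℂ C(K, ℂ)) →ₗ[ℂ] (t → ℂ) :=
    LinearMap.pi (fun j : t => (evalLM (φ (j : K))).comp (LinearMap.ker (T : C(K, ℂ) →ₗ[ℂ] C(K, ℂ))).subtype) with hΦ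
  have hcomp : ⇑Φ ∘ v = fun i => Pi.single i (1 : ℂ) := by
    funext i
    funext j
    simp only [Function.comp_apply, hΦ, LinearMap.pi_apply, LinearMap.coe_comp,
      Submodule.coe_subtype, hv, Pi.single_apply]
    by_cases hji : j = i
    · subst hji; simp [hei]
    · simp [hej i j hji, hji]
  have hLIcomp : LinearIndependent ℂ (⇑Φ ∘ v) := by
    rw [hcomp]
    have := (Pi.basisFun ℂ t).linearIndependent
    convert this using 1
    funext i
    rw [Pi.basisFun_apply]
  have hLI : LinearIndependent ℂ v := LinearIndependent.of_comp Φ hLIcomp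
  have hcard := hLI.fintype_card_le_finrank
  rw [Fintype.card_coe, htc] at hcard
  omega

/-- Part III: if the cokernel is finite dimensional, the zero set is finite. -/
lemma finite_Z_of_coker (hT : ∀ (f : C(K, ℂ)) (k : K), T f k = w k * f (φ k))
    (hco : FiniteDimensional ℂ (C(K, ℂ) ⧸ LinearMap.range (T : C(K, ℂ) →ₗ[ℂ] C(K, ℂ)))) :
    {k : K | w k = 0}.Finite := by
  classical
  by_contra hinf
  obtain ⟨t, hts, htc⟩ := Set.Infinite.exists_subset_card_eq hinf
    (finrank ℂ (C(K, ℂ) ⧸ LinearMap.range (T : C(K, ℂ) →ₗ[ℂ] C(K, ℂ))) + 1)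
  have hsep : ∀ i : t, ∃ g : C(K, ℂ), g (i : K) = 1 ∧ ∀ j : t, j ≠ i → g (j : K) = 0 := by
    intro i
    have hclosed : IsClosed ((t : Set K) \ {(i : K)}) := ((t.finite_toSet).diff).isClosed
    have hpmem : (i : K) ∉ (t : Set K) \ {(i : K)} := fun h => h.2 rfl
    obtain ⟨g, hg0, hg1⟩ := exists_sep hclosed hpmem
    exact ⟨g, hg1, fun j hj => hg0 _ ⟨j.2, fun h => hj (Subtype.ext h)⟩⟩
  choose e hei hej using hsep
  set E : C(K, ℂ) →ₗ[ℂ] (t → ℂ) := LinearMap.pi (fun j : t => evalLM (j : K)) with hE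
  have hle : LinearMap.range (T : C(K, ℂ) →ₗ[ℂ] C(K, ℂ)) ≤ LinearMap.ker E := by
    intro g hg
    rw [LinearMap.mem_ker]
    funext j
    simp only [hE, LinearMap.pi_apply, evalLM_apply, Pi.zero_apply]
    exact range_vanish hT hg (hts j.2)
  set Φ := (LinearMap.range (T : C(K, ℂ) →ₗ[ℂ] C(K, ℂ))).liftQ E hle with hΦ
  set v : t → (C(K, ℂ) ⧸ LinearMap.range (T : C(K, ℂ) →ₗ[ℂ] C(K, ℂ))) := fun i => Submodule.Quotient.mk (e i) with hv
  have hcomp : ⇑Φ ∘ v = fun i => Pi.single i (1 : ℂ) := by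
    funext i
    funext j
    simp only [Function.comp_apply, hΦ, hv, Submodule.liftQ_apply, hE, LinearMap.pi_apply,
      evalLM_apply, Pi.single_apply]
    by_cases hji : j = i
    · subst hji; simp [hei]
    · simp [hej i j hji, hji]
  have hLIcomp : LinearIndependent ℂ (⇑Φ ∘ v) := by
    rw [hcomp]
    have := (Pi.basisFun ℂ t).linearIndependent
    convert this using 1
    funext i
    rw [Pi.basisFun_apply]
  have hLI : LinearIndependent ℂ v := LinearIndependent.of_comp Φ hLIcomp
  have hcard := hLI.fintype_card_le_finrank
  rw [Fintype.card_coe, htc] at hcard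
  omega

/-- Part IV: if the zero set is finite and consists of isolated points,
then T is Fredholm of index 0 (with closed range). -/
lemma fredholm_of_nice (hT : ∀ (f : C(K, ℂ)) (k : K), T f k = w k * f (φ k))
    (hfin : {k : K | w k = 0}.Finite) (hiso : ∀ k : K, w k = 0 → IsOpen ({k} : Set K)) :
    IsClosed (LinearMap.range (T : C(K, ℂ) →ₗ[ℂ] C(K, ℂ)) : Set C(K, ℂ)) ∧
      FiniteDimensional ℂ (LinearMap.ker (T : C(K, ℂ) →ₗ[ℂ] C(K, ℂ))) ∧
      FiniteDimensional ℂ (C(K, ℂ) ⧸ LinearMap.range (T : C(K, ℂ) →ₗ[ℂ] C(K, ℂ))) ∧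
      finrank ℂ (LinearMap.ker (T : C(K, ℂ) →ₗ[ℂ] C(K, ℂ))) = finrank ℂ (C(K, ℂ) ⧸ LinearMap.range (T : C(K, ℂ) →ₗ[ℂ] C(K, ℂ))) := by
  classical
  haveI : Fintype {k : K | w k = 0} := hfin.fintype
  set E : C(K, ℂ) →ₗ[ℂ] ({k : K | w k = 0} → ℂ) :=
    LinearMap.pi (fun z => evalLM (z : K)) with hE
  have hZc : IsClosed {k : K | w k = 0} := hfin.isClosed
  -- range T = ker E
  have hrange : LinearMap.range (T : C(K, ℂ) →ₗ[ℂ] C(K, ℂ)) = LinearMap.ker E := by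
    apply le_antisymm
    · intro g hg
      rw [LinearMap.mem_ker]
      funext z
      simp only [hE, LinearMap.pi_apply, evalLM_apply, Pi.zero_apply]
      exact range_vanish hT hg z.2
    · intro g hg
      rw [LinearMap.mem_ker] at hg
      have hgz : ∀ k : K, w k = 0 → g k = 0 := by
        intro k hk
        have := congrFun hg (⟨k, hk⟩ : {k : K | w k = 0})
        simpa [hE] using this
      have hcont : Continuous (fun k => if w k = 0 then (0 : ℂ) else g k / w k) := by
        rw [continuous_iff_continuousAt]
        intro k0
        by_cases hk0 : w k0 = 0
        · have hopen : IsOpen ({k0} : Set K) := hiso k0 hk0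
          have heq : (fun _ => (0 : ℂ)) =ᶠ[nhds k0]
              fun k => if w k = 0 then (0 : ℂ) else g k / w k := by
            refine Filter.eventuallyEq_of_mem (hopen.mem_nhds rfl) ?_
            intro x hx
            rw [Set.mem_singleton_iff] at hx
            subst hx
            simp [hk0]
          exact continuousAt_const.congr heq
        · have hopen : IsOpen {k : K | w k = 0}ᶜ := hZc.isOpen_compl
          have heq : (fun k => g k / w k) =ᶠ[nhds k0]
              fun k => if w k = 0 then (0 : ℂ) else g k / w k := by
            refine Filter.eventuallyEq_of_mem (hopen.mem_nhds hk0) ?_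
            intro x hx
            simp only [Set.mem_compl_iff, Set.mem_setOf_eq] at hx
            simp [hx]
          exact ((g.continuous.continuousAt).div (w.continuous.continuousAt) hk0).congr heq
      refine ⟨(⟨_, hcont⟩ : C(K, ℂ)).comp ⟨⇑φ.symm, φ.symm.continuous⟩, ?_⟩
      ext k
      rw [ContinuousLinearMap.coe_coe, hT]
      simp only [ContinuousMap.comp_apply, ContinuousMap.coe_mk,
        Homeomorph.symm_apply_apply]
      by_cases hk : w k = 0
      · rw [if_pos hk, mul_zero, hgz k hk]
      · rw [if_neg hk, mul_div_cancel₀ _ hk]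
  -- closed range
  have hclosed : IsClosed (LinearMap.range (T : C(K, ℂ) →ₗ[ℂ] C(K, ℂ)) : Set C(K, ℂ)) := by
    have hset : (LinearMap.range (T : C(K, ℂ) →ₗ[ℂ] C(K, ℂ)) : Set C(K, ℂ)) =
        ⋂ z : {k : K | w k = 0}, (fun g : C(K, ℂ) => g (z : K)) ⁻¹' {0} := by
      rw [hrange]
      ext g
      simp [hE, LinearMap.mem_ker, funext_iff]
    rw [hset]
    exact isClosed_iInter fun z =>
      isClosed_singleton.preimage (continuous_eval_const _)
  -- E is surjective
  have hEsurj : Function.Surjective E := by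
    intro c
    refine ⟨∑ z : {k : K | w k = 0}, c z • indC (z : K) (hiso _ z.2), ?_⟩
    funext z'
    simp only [hE, LinearMap.pi_apply, evalLM_apply]
    rw [ContinuousMap.sum_apply]
    rw [Finset.sum_eq_single z']
    · simp [indC_self]
    · intro b _ hb
      have hne : (z' : K) ≠ (b : K) := fun h => hb (Subtype.ext h.symm)
      simp [indC_ne _ _ hne]
    · intro h
      exact absurd (Finset.mem_univ _) h
  have e2 : (C(K, ℂ) ⧸ LinearMap.range (T : C(K, ℂ) →ₗ[ℂ] C(K, ℂ))) ≃ₗ[ℂ] ({k : K | w k = 0} → ℂ) :=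
    (Submodule.quotEquivOfEq _ _ hrange).trans (E.quotKerEquivOfSurjective hEsurj)
  -- kernel
  have hop : ∀ z : {k : K | w k = 0}, IsOpen ({φ (z : K)} : Set K) := by
    intro z
    rw [← Set.image_singleton]
    exact φ.isOpen_image.mpr (hiso _ z.2)
  set Φ : (LinearMap.ker (T : C(K, ℂ) →ₗ[ℂ] C(K, ℂ)) : Submodule ℂ C(K, ℂ)) →ₗ[ℂ] ({k : K | w k = 0} → ℂ) :=
    LinearMap.pi (fun z => (evalLM (φ (z : K))).comp (LinearMap.ker (T : C(K, ℂ) →ₗ[ℂ] C(K, ℂ))).subtype) with hΦ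
  have hΦinj : Function.Injective Φ := by
    rw [injective_iff_map_eq_zero]
    intro f hf
    have hker := (mem_ker_iff hT (f : C(K, ℂ))).mp f.2
    have hall : ∀ k : K, (f : C(K, ℂ)) (φ k) = 0 := by
      intro k
      by_cases hk : w k = 0
      · have := congrFun hf (⟨k, hk⟩ : {k : K | w k = 0})
        simpa [hΦ] using this
      · exact hker k hk
    apply Subtype.ext
    ext x
    have := hall (φ.symm x)
    rw [Homeomorph.apply_symm_apply] at this
    simpa using this
  have hΦsurj : Function.Surjective Φ := by
    intro c
    refine ⟨⟨∑ z : {k : K | w k = 0}, c z • indC (φ (z : K)) (hop z), ?_⟩, ?_⟩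
    · rw [mem_ker_iff hT]
      intro k hk
      rw [ContinuousMap.sum_apply]
      apply Finset.sum_eq_zero
      intro z _
      have hne : φ k ≠ φ (z : K) := fun h => hk (by rw [show k = (z : K) from φ.injective h]; exact z.2)
      simp [indC_ne _ _ hne]
    · funext z'
      simp only [hΦ, LinearMap.pi_apply, LinearMap.coe_comp, Function.comp_apply,
        Submodule.coe_subtype]
      rw [evalLM_apply, ContinuousMap.sum_apply, Finset.sum_eq_single z']
      · simp [indC_self]
      · intro b _ hb
        have hne : φ (z' : K) ≠ φ (b : K) :=
          fun h => hb (Subtype.ext (φ.injective h)).symm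
        simp [indC_ne _ _ hne]
      · intro h
        exact absurd (Finset.mem_univ _) h
  have e1 : (LinearMap.ker (T : C(K, ℂ) →ₗ[ℂ] C(K, ℂ)) : Submodule ℂ C(K, ℂ)) ≃ₗ[ℂ] ({k : K | w k = 0} → ℂ) :=
    LinearEquiv.ofBijective Φ ⟨hΦinj, hΦsurj⟩
  refine ⟨hclosed, e1.symm.finiteDimensional, e2.symm.finiteDimensional, ?_⟩
  rw [e1.finrank_eq, e2.finrank_eq]

end Stmt11Aux

/-- For a weighted composition operator T = w·(f∘φ) on C(K) with φ a homeomorphism: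
T is semi-Fredholm iff T is Fredholm of index 0 iff the zero set of w is finite and
consists of isolated points of K. -/
theorem stmt11 {K : Type*} [TopologicalSpace K] [CompactSpace K] [T2Space K]
    (φ : K ≃ₜ K) (w : C(K, ℂ)) (T : C(K, ℂ) →L[ℂ] C(K, ℂ))
    (hT : ∀ (f : C(K, ℂ)) (k : K), T f k = w k * f (φ k)) :
    ((IsClosed (LinearMap.range (T : C(K, ℂ) →ₗ[ℂ] C(K, ℂ)) : Set C(K, ℂ)) ∧
        (FiniteDimensional ℂ (LinearMap.ker (T : C(K, ℂ) →ₗ[ℂ] C(K, ℂ))) ∨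
         FiniteDimensional ℂ (C(K, ℂ) ⧸ LinearMap.range (T : C(K, ℂ) →ₗ[ℂ] C(K, ℂ))))) ↔
      (IsClosed (LinearMap.range (T : C(K, ℂ) →ₗ[ℂ] C(K, ℂ)) : Set C(K, ℂ)) ∧
        FiniteDimensional ℂ (LinearMap.ker (T : C(K, ℂ) →ₗ[ℂ] C(K, ℂ))) ∧
        FiniteDimensional ℂ (C(K, ℂ) ⧸ LinearMap.range (T : C(K, ℂ) →ₗ[ℂ] C(K, ℂ))) ∧
        Module.finrank ℂ (LinearMap.ker (T : C(K, ℂ) →ₗ[ℂ] C(K, ℂ))) =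
          Module.finrank ℂ (C(K, ℂ) ⧸ LinearMap.range (T : C(K, ℂ) →ₗ[ℂ] C(K, ℂ))))) ∧
    ((IsClosed (LinearMap.range (T : C(K, ℂ) →ₗ[ℂ] C(K, ℂ)) : Set C(K, ℂ)) ∧
        (FiniteDimensional ℂ (LinearMap.ker (T : C(K, ℂ) →ₗ[ℂ] C(K, ℂ))) ∨
         FiniteDimensional ℂ (C(K, ℂ) ⧸ LinearMap.range (T : C(K, ℂ) →ₗ[ℂ] C(K, ℂ))))) ↔
      ({k : K | w k = 0}.Finite ∧ ∀ k : K, w k = 0 → IsOpen ({k} : Set K))) := by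
  have hiff : (IsClosed (LinearMap.range (T : C(K, ℂ) →ₗ[ℂ] C(K, ℂ)) : Set C(K, ℂ)) ∧
      (FiniteDimensional ℂ (LinearMap.ker (T : C(K, ℂ) →ₗ[ℂ] C(K, ℂ))) ∨
       FiniteDimensional ℂ (C(K, ℂ) ⧸ LinearMap.range (T : C(K, ℂ) →ₗ[ℂ] C(K, ℂ))))) ↔
      ({k : K | w k = 0}.Finite ∧ ∀ k : K, w k = 0 → IsOpen ({k} : Set K)) := by
    constructor
    · rintro ⟨hcl, hor⟩
      have hZ := Stmt11Aux.isOpen_Z hT hcl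
      have hfin : {k : K | w k = 0}.Finite :=
        hor.elim (Stmt11Aux.finite_Z_of_ker hT hZ) (Stmt11Aux.finite_Z_of_coker hT)
      refine ⟨hfin, fun k hk => ?_⟩
      have hset : ({k} : Set K) = {k' : K | w k' = 0} ∩ ({k' : K | w k' = 0} \ {k})ᶜ := by
        ext x
        by_cases hxk : x = k <;> simp [hxk, hk]
      rw [hset]
      exact hZ.inter (hfin.subset Set.diff_subset).isClosed.isOpen_compl
    · intro hZ
      have h := Stmt11Aux.fredholm_of_nice hT hZ.1 hZ.2
      exact ⟨h.1, Or.inl h.2.1⟩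
  refine ⟨?_, hiff⟩
  constructor
  · intro h
    have hZ := hiff.mp h
    exact Stmt11Aux.fredholm_of_nice hT hZ.1 hZ.2
  · rintro ⟨hcl, h1, _, _⟩
    exact ⟨hcl, Or.inl h1⟩
end

section
/- Let K be an extremally disconnected compact Hausdorff space, Y a Banach space, and w : K → L(Y) a continuous map (in operator norm). Define T on C(K, Y) by (Tx)(k) = w(k)(x(k)). Then σ(T) = ⋃_{k ∈ K} σ(w(k)) and σ_{a.p.}(T) = ⋃_{k ∈ K} σ_{a.p.}(w(k)). -/
open Set ContinuousMap

section aux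

variable {K : Type*} [TopologicalSpace K] [CompactSpace K] [T2Space K]
    [ExtremallyDisconnected K]
    {Y : Type*} [NormedAddCommGroup Y] [NormedSpace ℂ Y] [CompleteSpace Y]

theorem stmt12_algApply {E : Type*} [NormedAddCommGroup E] [NormedSpace ℂ E]
    (l : ℂ) (S : E →L[ℂ] E) (x : E) :
    (algebraMap ℂ (E →L[ℂ] E) l - S) x = l • x - S x := by
  simp [Algebra.algebraMap_eq_smul_one]

theorem stmt12_unit_lower {E : Type*} [NormedAddCommGroup E] [NormedSpace ℂ E]
    {u : E →L[ℂ] E} (h : IsUnit u) : ∃ c : ℝ, 0 < c ∧ ∀ y, c * ‖y‖ ≤ ‖u y‖ := by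
  obtain ⟨⟨u, v, hv1, hv2⟩, rfl⟩ := h
  refine ⟨(‖v‖ + 1)⁻¹, by positivity, fun y => ?_⟩
  have h1 : ‖y‖ ≤ (‖v‖ + 1) * ‖u y‖ := by
    calc ‖y‖ = ‖v (u y)‖ := by
          rw [← ContinuousLinearMap.mul_apply, hv2, ContinuousLinearMap.one_apply]
      _ ≤ ‖v‖ * ‖u y‖ := v.le_opNorm _
      _ ≤ (‖v‖ + 1) * ‖u y‖ := by nlinarith [norm_nonneg (u y)]
  rw [inv_mul_le_iff₀ (by positivity : (0:ℝ) < ‖v‖ + 1)]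
  exact h1

theorem stmt12_inj {E : Type*} [NormedAddCommGroup E] [NormedSpace ℂ E]
    {u : E →L[ℂ] E} {c : ℝ} (hc : 0 < c)
    (h : ∀ y, c * ‖y‖ ≤ ‖u y‖) : Function.Injective u := by
  intro a b hab
  have h0 : u (a - b) = 0 := by rw [map_sub, hab, sub_self]
  have h1 := h (a - b)
  rw [h0, norm_zero] at h1
  have h2 : ‖a - b‖ ≤ 0 := nonpos_of_mul_nonpos_right (by linarith) hc
  rwa [← sub_eq_zero, ← norm_le_zero_iff]

/-- Key: a lower bound for `T` transfers to each `w k`, using clopen neighborhoods. -/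
theorem stmt12_transfer (w : C(K, Y →L[ℂ] Y)) (T : C(K, Y) →L[ℂ] C(K, Y))
    (hT : ∀ (x : C(K, Y)) (k : K), T x k = w k (x k)) (l : ℂ) (c : ℝ)
    (hc : ∀ x : C(K, Y), c * ‖x‖ ≤ ‖l • x - T x‖) (k : K) (y : Y) :
    c * ‖y‖ ≤ ‖l • y - w k y‖ := by
  refine le_of_forall_pos_le_add fun ε hε => ?_
  set δ := ε / (‖y‖ + 1) with hδ
  have hδpos : 0 < δ := div_pos hε (by positivity)
  have hVopen : IsOpen {k' | ‖w k' - w k‖ < δ} :=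
    isOpen_lt ((w.continuous.sub continuous_const).norm) continuous_const
  have hVmem : {k' | ‖w k' - w k‖ < δ} ∈ nhds k := hVopen.mem_nhds (by simp [hδpos])
  obtain ⟨U, ⟨hkU, hU⟩, hUV⟩ := (nhds_basis_clopen k).mem_iff.mp hVmem
  classical
  set x : C(K, Y) := ⟨fun k' => if k' ∈ U then y else 0, by
    refine Continuous.if ?_ continuous_const continuous_const
    intro a ha
    rw [show {x | x ∈ U} = U from rfl, isClopen_iff_frontier_eq_empty.mp hU] at ha
    exact ha.elim⟩ with hxdef
  have hxk : ∀ k', x k' = if k' ∈ U then y else 0 := fun _ => rfl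
  have hxnorm : ‖x‖ = ‖y‖ := by
    refine le_antisymm ((ContinuousMap.norm_le _ (norm_nonneg y)).2 fun k' => ?_) ?_
    · by_cases h : k' ∈ U <;> simp [hxk, h]
    · have h1 := x.norm_coe_le_norm k
      rwa [hxk, if_pos hkU] at h1
  have key : ∀ k' ∈ U, ‖l • y - w k' y‖ ≤ ‖l • y - w k y‖ + ε := by
    intro k' hk'
    have h1 : ‖w k' - w k‖ < δ := hUV hk'
    have h2 : ‖(w k - w k') y‖ ≤ ‖w k - w k'‖ * ‖y‖ := (w k - w k').le_opNorm y
    have h3 : ‖w k - w k'‖ = ‖w k' - w k‖ := norm_sub_rev _ _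
    have h4 : δ * ‖y‖ ≤ ε := by
      rw [hδ, div_mul_eq_mul_div, div_le_iff₀ (by positivity : (0:ℝ) < ‖y‖ + 1)]
      nlinarith [norm_nonneg y, le_of_lt hε]
    calc ‖l • y - w k' y‖ = ‖(l • y - w k y) + (w k - w k') y‖ := by
          rw [ContinuousLinearMap.sub_apply]; congr 1; abel
      _ ≤ ‖l • y - w k y‖ + ‖(w k - w k') y‖ := norm_add_le _ _
      _ ≤ ‖l • y - w k y‖ + ε := by nlinarith [norm_nonneg y]
  have hbound : ‖l • x - T x‖ ≤ ‖l • y - w k y‖ + ε := by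
    refine (ContinuousMap.norm_le _ (by positivity)).2 fun k' => ?_
    rw [ContinuousMap.sub_apply, ContinuousMap.smul_apply, hT]
    by_cases h : k' ∈ U
    · rw [hxk, if_pos h]; exact key k' h
    · rw [hxk, if_neg h]; simp; positivity
  calc c * ‖y‖ = c * ‖x‖ := by rw [hxnorm]
    _ ≤ ‖l • x - T x‖ := hc x
    _ ≤ _ := hbound

/-- Compactness: pointwise lower bounds give a uniform lower bound. -/
theorem stmt12_uniform (w : C(K, Y →L[ℂ] Y)) (l : ℂ)
    (h : ∀ k, ∃ c : ℝ, 0 < c ∧ ∀ y, c * ‖y‖ ≤ ‖l • y - w k y‖) :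
    ∃ c : ℝ, 0 < c ∧ ∀ (k : K) (y : Y), c * ‖y‖ ≤ ‖l • y - w k y‖ := by
  choose c hcpos hlb using h
  rcases isEmpty_or_nonempty K with hK | hK
  · exact ⟨1, one_pos, fun k => (IsEmpty.false k).elim⟩
  have hcover : (univ : Set K) ⊆ ⋃ k, {k' | ‖w k' - w k‖ < c k / 2} := fun k' _ =>
    mem_iUnion.2 ⟨k', by simp [half_pos (hcpos k')]⟩
  obtain ⟨t, ht⟩ := isCompact_univ.elim_finite_subcover _
    (fun k => isOpen_lt ((w.continuous.sub continuous_const).norm) continuous_const) hcover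
  have htne : t.Nonempty := by
    obtain ⟨k⟩ := hK
    obtain ⟨i, hi, -⟩ := mem_iUnion₂.mp (ht (mem_univ k))
    exact ⟨i, hi⟩
  refine ⟨t.inf' htne (fun k => c k / 2), ?_, ?_⟩
  · rw [Finset.lt_inf'_iff]
    exact fun i _ => half_pos (hcpos i)
  · intro k y
    obtain ⟨i, hi, hki⟩ := mem_iUnion₂.mp (ht (mem_univ k))
    have h1 : c i * ‖y‖ ≤ ‖l • y - w i y‖ := hlb i y
    have h2 : ‖l • y - w i y‖ ≤ ‖l • y - w k y‖ + ‖w k - w i‖ * ‖y‖ := by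
      calc ‖l • y - w i y‖ = ‖(l • y - w k y) + (w k - w i) y‖ := by
            rw [ContinuousLinearMap.sub_apply]; congr 1; abel
        _ ≤ ‖l • y - w k y‖ + ‖(w k - w i) y‖ := norm_add_le _ _
        _ ≤ _ := by nlinarith [(w k - w i).le_opNorm y, norm_nonneg y]
    have h3 : ‖w k - w i‖ < c i / 2 := hki
    have h4 : t.inf' htne (fun k => c k / 2) ≤ c i / 2 := Finset.inf'_le _ hi
    nlinarith [norm_nonneg y, norm_nonneg (w k - w i)]

theorem stmt12_Tlower (w : C(K, Y →L[ℂ] Y)) (T : C(K, Y) →L[ℂ] C(K, Y))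
    (hT : ∀ (x : C(K, Y)) (k : K), T x k = w k (x k)) (l : ℂ) {c : ℝ} (hc : 0 < c)
    (h : ∀ (k : K) (y : Y), c * ‖y‖ ≤ ‖l • y - w k y‖) (x : C(K, Y)) :
    c * ‖x‖ ≤ ‖l • x - T x‖ := by
  rw [mul_comm, ← le_div_iff₀ hc]
  refine (ContinuousMap.norm_le _ (by positivity)).2 fun k => ?_
  rw [le_div_iff₀ hc, mul_comm]
  calc c * ‖x k‖ ≤ ‖l • x k - w k (x k)‖ := h k (x k)
    _ = ‖(l • x - T x) k‖ := by
        rw [ContinuousMap.sub_apply, ContinuousMap.smul_apply, hT]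
    _ ≤ ‖l • x - T x‖ := (l • x - T x).norm_coe_le_norm k

end aux

set_option maxHeartbeats 800000 in
/-- For the multiplication operator (Tx)(k) = w(k)(x(k)) on C(K, Y), K extremally
disconnected compact: σ(T) = ⋃ₖ σ(w(k)) and σ_{a.p.}(T) = ⋃ₖ σ_{a.p.}(w(k)). -/
theorem stmt12 {K : Type*} [TopologicalSpace K] [CompactSpace K] [T2Space K]
    [ExtremallyDisconnected K]
    {Y : Type*} [NormedAddCommGroup Y] [NormedSpace ℂ Y] [CompleteSpace Y]
    (w : C(K, Y →L[ℂ] Y)) (T : C(K, Y) →L[ℂ] C(K, Y))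
    (hT : ∀ (x : C(K, Y)) (k : K), T x k = w k (x k)) :
    (spectrum ℂ T = ⋃ k : K, spectrum ℂ (w k)) ∧
    ({l : ℂ | ¬ ∃ c : ℝ, 0 < c ∧ ∀ x : C(K, Y), c * ‖x‖ ≤ ‖l • x - T x‖} =
      ⋃ k : K, {l : ℂ | ¬ ∃ c : ℝ, 0 < c ∧ ∀ y : Y, c * ‖y‖ ≤ ‖l • y - w k y‖}) := by
  constructor
  · ext l
    simp only [Set.mem_iUnion]
    rw [← not_iff_not]
    push_neg
    simp only [spectrum.notMem_iff]
    constructor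
    · intro h k
      -- T - l invertible ⇒ w k - l invertible
      obtain ⟨c, hcpos, hlow⟩ := stmt12_unit_lower h
      have hbb : ∀ x : C(K, Y), c * ‖x‖ ≤ ‖l • x - T x‖ := by
        intro x
        have := hlow x
        rwa [stmt12_algApply] at this
      have hk := stmt12_transfer w T hT l c hbb k
      rw [ContinuousLinearMap.isUnit_iff_bijective]
      obtain ⟨u, hu⟩ := h
      constructor
      · refine stmt12_inj hcpos fun y => ?_
        rw [stmt12_algApply]
        exact hk y
      · intro y
        refine ⟨(↑u⁻¹ : C(K, Y) →L[ℂ] C(K, Y)) (ContinuousMap.const K y) k, ?_⟩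
        have h1 : (algebraMap ℂ (C(K, Y) →L[ℂ] C(K, Y)) l - T)
            ((↑u⁻¹ : C(K, Y) →L[ℂ] C(K, Y)) (ContinuousMap.const K y))
            = ContinuousMap.const K y := by
          rw [← ContinuousLinearMap.mul_apply, ← hu, Units.mul_inv,
            ContinuousLinearMap.one_apply]
        have h2 := congrFun (congrArg DFunLike.coe h1) k
        rw [stmt12_algApply] at h2
        simp only [ContinuousMap.sub_apply, ContinuousMap.smul_apply, hT,
          ContinuousMap.const_apply] at h2
        rw [stmt12_algApply]
        exact h2
    · intro h
      have hpt : ∀ k, ∃ c : ℝ, 0 < c ∧ ∀ y : Y, c * ‖y‖ ≤ ‖l • y - w k y‖ := by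
        intro k
        obtain ⟨c, hcpos, hlow⟩ := stmt12_unit_lower (h k)
        exact ⟨c, hcpos, fun y => by have := hlow y; rwa [stmt12_algApply] at this⟩
      obtain ⟨c, hcpos, hu⟩ := stmt12_uniform w l hpt
      have hTl := stmt12_Tlower w T hT l hcpos hu
      rw [ContinuousLinearMap.isUnit_iff_bijective]
      constructor
      · refine stmt12_inj hcpos fun x => ?_
        rw [stmt12_algApply]
        exact hTl x
      · intro f
        have hcont : Continuous fun k =>
            Ring.inverse (algebraMap ℂ (Y →L[ℂ] Y) l - w k) := by
          rw [continuous_iff_continuousAt]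
          intro k
          have h1 : ContinuousAt Ring.inverse (algebraMap ℂ (Y →L[ℂ] Y) l - w k) := by
            have := NormedRing.inverse_continuousAt (h k).unit
            rwa [IsUnit.unit_spec] at this
          have h2 : ContinuousAt (fun k => algebraMap ℂ (Y →L[ℂ] Y) l - w k) k :=
            (continuous_const.sub w.continuous).continuousAt
          show ContinuousAt (Ring.inverse ∘ fun k => algebraMap ℂ (Y →L[ℂ] Y) l - w k) k
          exact Filter.Tendsto.comp h1.tendsto h2
        refine ⟨⟨fun k => Ring.inverse (algebraMap ℂ (Y →L[ℂ] Y) l - w k) (f k),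
          hcont.clm_apply f.continuous⟩, ?_⟩
        ext k
        have h1 : (algebraMap ℂ (Y →L[ℂ] Y) l - w k) *
            Ring.inverse (algebraMap ℂ (Y →L[ℂ] Y) l - w k) = 1 :=
          Ring.mul_inverse_cancel _ (h k)
        have h2 := congrFun (congrArg DFunLike.coe h1) (f k)
        rw [ContinuousLinearMap.mul_apply, ContinuousLinearMap.one_apply] at h2
        rw [stmt12_algApply]
        simp only [ContinuousMap.sub_apply, ContinuousMap.smul_apply, hT,
          ContinuousMap.coe_mk]
        rw [← stmt12_algApply]
        exact h2
  · ext l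
    simp only [Set.mem_iUnion, Set.mem_setOf_eq]
    rw [← not_iff_not]
    push_neg
    constructor
    · rintro ⟨c, hcpos, hx⟩ k
      exact ⟨c, hcpos, stmt12_transfer w T hT l c hx k⟩
    · intro h
      obtain ⟨c, hcpos, hu⟩ := stmt12_uniform w l h
      exact ⟨c, hcpos, stmt12_Tlower w T hT l hcpos hu⟩
end

section
/- Let K be an extremally disconnected compact Hausdorff space, Y a Banach space, w : K → L(Y) continuous, and suppose that σ(w(k)) = σ_{a.p.}(w(k)) for every k ∈ K (e.g. if Y is finite-dimensional or each w(k) is a surjective isometry). Then the multiplication operator T on C(K, Y) given by (Tx)(k) = w(k)(x(k)) satisfies σ(T) = σ_{a.p.}(T). -/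
set_option maxHeartbeats 1000000 in
set_option synthInstance.maxHeartbeats 400000 in
/-- If for every k the spectrum of the fiber operator w(k) consists of approximate
eigenvalues, then the multiplication operator T on C(K, Y) satisfies σ(T) = σ_{a.p.}(T). -/
theorem stmt13 {K : Type*} [TopologicalSpace K] [CompactSpace K] [T2Space K]
    [ExtremallyDisconnected K]
    {Y : Type*} [NormedAddCommGroup Y] [NormedSpace ℂ Y] [CompleteSpace Y]
    (w : C(K, Y →L[ℂ] Y)) (T : C(K, Y) →L[ℂ] C(K, Y))
    (hT : ∀ (x : C(K, Y)) (k : K), T x k = w k (x k))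
    (hfib : ∀ k : K, spectrum ℂ (w k) =
        {l : ℂ | ¬ ∃ c : ℝ, 0 < c ∧ ∀ y : Y, c * ‖y‖ ≤ ‖l • y - w k y‖}) :
    spectrum ℂ T =
      {l : ℂ | ¬ ∃ c : ℝ, 0 < c ∧ ∀ x : C(K, Y), c * ‖x‖ ≤ ‖l • x - T x‖} := by
  have key : ∀ l : ℂ, IsUnit (algebraMap ℂ (C(K, Y) →L[ℂ] C(K, Y)) l - T) ↔
      ∃ c : ℝ, 0 < c ∧ ∀ x : C(K, Y), c * ‖x‖ ≤ ‖l • x - T x‖ := by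
    intro l
    constructor
    · rintro ⟨u, hu⟩
      set B := ((u⁻¹ : _ˣ) : C(K, Y) →L[ℂ] C(K, Y)) with hBdef
      have hinv : ∀ x : C(K, Y), B ((algebraMap ℂ (C(K, Y) →L[ℂ] C(K, Y)) l - T) x) = x := by
        intro x
        have : (B * (algebraMap ℂ (C(K, Y) →L[ℂ] C(K, Y)) l - T)) x = (1 : C(K, Y) →L[ℂ] C(K, Y)) x := by
          rw [← hu, hBdef, ← Units.val_mul, inv_mul_cancel, Units.val_one]
        simpa using this
      have heq : ∀ x : C(K, Y),
          (algebraMap ℂ (C(K, Y) →L[ℂ] C(K, Y)) l - T) x = l • x - T x := by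
        intro x
        simp [Algebra.algebraMap_eq_smul_one]
      by_cases hB : ‖B‖ = 0
      · refine ⟨1, one_pos, fun x => ?_⟩
        have hB0 : B = 0 := norm_eq_zero.mp hB
        have hx : x = 0 := by
          have := hinv x
          rw [hB0] at this
          simpa using this.symm
        simp [hx]
      · have hBpos : 0 < ‖B‖ := lt_of_le_of_ne (norm_nonneg _) (Ne.symm hB)
        refine ⟨‖B‖⁻¹, inv_pos.mpr hBpos, fun x => ?_⟩
        have hle : ‖x‖ ≤ ‖B‖ * ‖(algebraMap ℂ (C(K, Y) →L[ℂ] C(K, Y)) l - T) x‖ := by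
          conv_lhs => rw [← hinv x]
          exact B.le_opNorm _
        rw [heq x] at hle
        rw [inv_mul_le_iff₀ hBpos]
        exact hle
    · rintro ⟨c, hc, hbound⟩
      -- Step 1: each fiber operator is bounded below with the same constant.
      have hfb : ∀ (k₀ : K) (y : Y), c * ‖y‖ ≤ ‖l • y - w k₀ y‖ := by
        intro k₀ y
        rcases eq_or_ne y 0 with rfl | hy
        · simp
        have hy' : 0 < ‖y‖ := norm_pos_iff.mpr hy
        refine le_of_forall_pos_le_add fun ε hε => ?_
        set δ := ε / ‖y‖ with hδdef
        have hδpos : 0 < δ := div_pos hε hy'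
        set U : Set K := {k | ‖w k - w k₀‖ < δ} with hUdef
        have hUopen : IsOpen U := by
          have hcont : Continuous fun k => ‖w k - w k₀‖ :=
            (w.continuous.sub continuous_const).norm
          exact isOpen_lt hcont continuous_const
        have hk₀U : k₀ ∈ U := by simp [hUdef, hδpos]
        obtain ⟨f, hf0, hf1, hf01⟩ :=
          exists_continuous_zero_one_of_isClosed (isClosed_compl_iff.mpr hUopen)
            (isClosed_singleton (x := k₀))
            (by rw [Set.disjoint_left]; rintro a ha rfl; exact ha hk₀U)
        set x : C(K, Y) := ⟨fun k => (f k : ℂ) • y,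
          ((Complex.continuous_ofReal.comp f.continuous).smul continuous_const)⟩ with hxdef
        have hxk₀ : x k₀ = y := by
          have : f k₀ = 1 := hf1 rfl
          simp [hxdef, this]
        have hxnorm : ‖x‖ = ‖y‖ := by
          apply le_antisymm
          · refine (ContinuousMap.norm_le _ (norm_nonneg y)).mpr fun k => ?_
            have h01 := hf01 k
            calc ‖x k‖ = |f k| * ‖y‖ := by simp [hxdef, norm_smul]
            _ ≤ 1 * ‖y‖ := by
                apply mul_le_mul_of_nonneg_right _ (norm_nonneg y)
                rw [abs_le]; exact ⟨le_trans (by norm_num) h01.1, h01.2⟩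
            _ = ‖y‖ := one_mul _
          · calc ‖y‖ = ‖x k₀‖ := by rw [hxk₀]
            _ ≤ ‖x‖ := x.norm_coe_le_norm k₀
        have hpt : ∀ k : K, ‖l • (x k) - w k (x k)‖ ≤ ‖l • y - w k₀ y‖ + ε := by
          intro k
          have hrw : l • (x k) - w k (x k) = (f k : ℂ) • (l • y - w k y) := by
            show l • ((f k : ℂ) • y) - w k ((f k : ℂ) • y) = _
            rw [smul_sub, map_smul, smul_comm]
          rw [hrw]
          by_cases hkU : k ∈ U
          · have h1 : ‖l • y - w k y‖ ≤ ‖l • y - w k₀ y‖ + ε := by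
              have h2 : ‖l • y - w k y‖ ≤ ‖l • y - w k₀ y‖ + ‖(w k₀ - w k) y‖ := by
                have : l • y - w k y = (l • y - w k₀ y) + (w k₀ - w k) y := by
                  simp only [ContinuousLinearMap.sub_apply]; abel
                rw [this]
                exact norm_add_le _ _
              have h3 : ‖(w k₀ - w k) y‖ ≤ ε := by
                calc ‖(w k₀ - w k) y‖ ≤ ‖w k₀ - w k‖ * ‖y‖ := (w k₀ - w k).le_opNorm y
                _ ≤ δ * ‖y‖ := by
                    apply mul_le_mul_of_nonneg_right _ (norm_nonneg y)
                    rw [norm_sub_rev]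
                    exact le_of_lt hkU
                _ = ε := by rw [hδdef]; field_simp
              linarith
            calc ‖(f k : ℂ) • (l • y - w k y)‖ = |f k| * ‖l • y - w k y‖ := by simp [norm_smul]
            _ ≤ 1 * ‖l • y - w k y‖ := by
                apply mul_le_mul_of_nonneg_right _ (norm_nonneg _)
                rw [abs_le]; exact ⟨le_trans (by norm_num) (hf01 k).1, (hf01 k).2⟩
            _ = ‖l • y - w k y‖ := one_mul _
            _ ≤ ‖l • y - w k₀ y‖ + ε := h1
          · have : f k = 0 := hf0 hkU
            rw [this]
            simp
            positivity
        calc c * ‖y‖ = c * ‖x‖ := by rw [hxnorm]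
        _ ≤ ‖l • x - T x‖ := hbound x
        _ ≤ ‖l • y - w k₀ y‖ + ε := by
            refine (ContinuousMap.norm_le _ (by positivity)).mpr fun k => ?_
            have : (l • x - T x) k = l • (x k) - w k (x k) := by
              simp [hT x k]
            rw [this]
            exact hpt k
      -- Step 2: each fiber operator is invertible.
      have hunit : ∀ k : K, IsUnit (algebraMap ℂ (Y →L[ℂ] Y) l - w k) := by
        intro k
        have : l ∉ spectrum ℂ (w k) := by
          rw [hfib k]
          simp only [Set.mem_setOf_eq, not_not]
          exact ⟨c, hc, hfb k⟩
        exact spectrum.notMem_iff.mp this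
      -- Step 3: the pointwise inverse is continuous.
      have hvcont : Continuous fun k => Ring.inverse (algebraMap ℂ (Y →L[ℂ] Y) l - w k) := by
        rw [continuous_iff_continuousAt]
        intro k
        have h1 : ContinuousAt (fun k => algebraMap ℂ (Y →L[ℂ] Y) l - w k) k :=
          (continuous_const.sub w.continuous).continuousAt
        have h2 := NormedRing.inverse_continuousAt (hunit k).unit
        rw [(hunit k).unit_spec] at h2
        exact ContinuousAt.comp (f := fun k => algebraMap ℂ (Y →L[ℂ] Y) l - w k) h2 h1
      set v : C(K, Y →L[ℂ] Y) := ⟨_, hvcont⟩ with hvdef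
      -- Step 4: the multiplication operator by v.
      set S : C(K, Y) →L[ℂ] C(K, Y) := LinearMap.mkContinuous
        { toFun := fun x => ⟨fun k => v k (x k), v.continuous.clm_apply x.continuous⟩
          map_add' := fun x y => by ext k; simp
          map_smul' := fun a x => by ext k; simp }
        ‖v‖ (fun x => by
          refine (ContinuousMap.norm_le _ (by positivity)).mpr fun k => ?_
          calc ‖v k (x k)‖ ≤ ‖v k‖ * ‖x k‖ := (v k).le_opNorm _
          _ ≤ ‖v‖ * ‖x‖ :=
              mul_le_mul (v.norm_coe_le_norm k) (x.norm_coe_le_norm k)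
                (norm_nonneg (x k)) (norm_nonneg v)) with hSdef
      have hSapp : ∀ (x : C(K, Y)) (k : K), S x k = v k (x k) := fun x k => rfl
      have hvk : ∀ k : K, v k = Ring.inverse (algebraMap ℂ (Y →L[ℂ] Y) l - w k) :=
        fun k => rfl
      -- Step 5: S is a two-sided inverse of algebraMap l - T.
      have hmul1 : (algebraMap ℂ (C(K, Y) →L[ℂ] C(K, Y)) l - T) * S = 1 := by
        ext x k
        have hcancel := Ring.mul_inverse_cancel _ (hunit k)
        have := congrArg (fun A : Y →L[ℂ] Y => A (x k)) hcancel
        simp only [ContinuousLinearMap.mul_apply, ContinuousLinearMap.one_apply,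
          ContinuousLinearMap.sub_apply, Algebra.algebraMap_eq_smul_one,
          ContinuousLinearMap.smul_apply] at this ⊢
        simp only [ContinuousMap.sub_apply, ContinuousMap.smul_apply, hT, hSapp, hvk k]
        simpa [Algebra.algebraMap_eq_smul_one] using this
      have hmul2 : S * (algebraMap ℂ (C(K, Y) →L[ℂ] C(K, Y)) l - T) = 1 := by
        ext x k
        have hcancel := Ring.inverse_mul_cancel _ (hunit k)
        have := congrArg (fun A : Y →L[ℂ] Y => A (x k)) hcancel
        simp only [ContinuousLinearMap.mul_apply, ContinuousLinearMap.one_apply,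
          ContinuousLinearMap.sub_apply, Algebra.algebraMap_eq_smul_one,
          ContinuousLinearMap.smul_apply] at this ⊢
        simp only [ContinuousMap.sub_apply, ContinuousMap.smul_apply, hT, hSapp, hvk k]
        simpa [Algebra.algebraMap_eq_smul_one] using this
      exact ⟨⟨algebraMap ℂ (C(K, Y) →L[ℂ] C(K, Y)) l - T, S, hmul1, hmul2⟩, rfl⟩
  ext l
  simp only [Set.mem_setOf_eq, spectrum.mem_iff]
  exact not_congr (key l)
end

section
/- Let ℓ^∞(ℕ) be identified with C(K) where K is the Gelfand space, let φ : ℕ → ℕ be the map φ(1) = 1 and φ(k) = k − 1 for k > 1, extended to a continuous surjection ψ : K → K, let w(1) = 1 and w(k) = 2 for k > 1, with W ∈ C(K) the corresponding function, and define (Tf)(k) = W(k) f(ψ(k)) on C(K). Then 1 ∈ σ(T) but 1 is not in the approximate point spectrum of T; i.e. 1 ∈ σ_r(T). -/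
open Filter Topology

set_option maxHeartbeats 800000
set_option synthInstance.maxHeartbeats 200000

/-- On ℓ∞(ℕ), the operator (Tx)(0) = x(0), (Tx)(n) = 2·x(n−1) for n ≥ 1 has 1 in its
spectrum but 1 is not an approximate eigenvalue; i.e. 1 ∈ σ_r(T). -/
theorem stmt14 (T : lp (fun _ : ℕ => ℂ) ⊤ →L[ℂ] lp (fun _ : ℕ => ℂ) ⊤)
    (hT : ∀ (x : lp (fun _ : ℕ => ℂ) ⊤) (n : ℕ),
      (T x : ∀ _ : ℕ, ℂ) n = if n = 0 then (x : ∀ _ : ℕ, ℂ) 0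
        else 2 * (x : ∀ _ : ℕ, ℂ) (n - 1)) :
    (1 : ℂ) ∈ spectrum ℂ T ∧
    ¬ ∃ x : ℕ → lp (fun _ : ℕ => ℂ) ⊤, (∀ n, ‖x n‖ = 1) ∧
        Tendsto (fun n => ‖T (x n) - x n‖) atTop (𝓝 0) := by
  have key : ∀ x : lp (fun _ : ℕ => ℂ) ⊤, ‖x‖ ≤ ‖T x - x‖ := by
    intro x
    have hb : ∀ n : ℕ, ‖(x : ∀ _ : ℕ, ℂ) n‖ ≤ (‖T x - x‖ + ‖x‖) / 2 := by
      intro n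
      have h1 : ((T x - x : lp (fun _ : ℕ => ℂ) ⊤) : ∀ _ : ℕ, ℂ) (n + 1)
          = 2 * (x : ∀ _ : ℕ, ℂ) n - (x : ∀ _ : ℕ, ℂ) (n + 1) := by
        rw [lp.coeFn_sub]
        simp [hT x (n + 1)]
      have h2 : (2 : ℂ) * (x : ∀ _ : ℕ, ℂ) n
          = ((T x - x : lp (fun _ : ℕ => ℂ) ⊤) : ∀ _ : ℕ, ℂ) (n + 1)
            + (x : ∀ _ : ℕ, ℂ) (n + 1) := by rw [h1]; ring
      have h3 : ‖((T x - x : lp (fun _ : ℕ => ℂ) ⊤) : ∀ _ : ℕ, ℂ) (n + 1)‖ ≤ ‖T x - x‖ :=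
        lp.norm_apply_le_norm ENNReal.top_ne_zero _ _
      have h4 : ‖(x : ∀ _ : ℕ, ℂ) (n + 1)‖ ≤ ‖x‖ :=
        lp.norm_apply_le_norm ENNReal.top_ne_zero _ _
      have h5 : ‖(2 : ℂ) * (x : ∀ _ : ℕ, ℂ) n‖ ≤ ‖T x - x‖ + ‖x‖ := by
        rw [h2]
        exact (norm_add_le _ _).trans (add_le_add h3 h4)
      rw [norm_mul] at h5
      simp only [Complex.norm_ofNat] at h5
      linarith
    have := lp.norm_le_of_forall_le (by positivity) hb
    linarith
  constructor
  · -- 1 ∈ spectrum: 1 - T is not surjective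
    rw [spectrum.mem_iff]
    intro h
    have he0 : Memℓp (fun n : ℕ => if n = 0 then (1 : ℂ) else 0) ⊤ := by
      apply memℓp_infty
      refine ⟨1, ?_⟩
      rintro r ⟨n, rfl⟩
      dsimp
      split <;> simp
    set e0 : lp (fun _ : ℕ => ℂ) ⊤ := ⟨_, he0⟩ with he0def
    obtain ⟨g, hg⟩ := h.exists_right_inv
    set x : lp (fun _ : ℕ => ℂ) ⊤ := g e0 with hx
    have halg : (algebraMap ℂ (lp (fun _ : ℕ => ℂ) ⊤ →L[ℂ] lp (fun _ : ℕ => ℂ) ⊤)) 1 = 1 :=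
      map_one _
    have happ : ((algebraMap ℂ _ (1 : ℂ) - T) : lp (fun _ : ℕ => ℂ) ⊤ →L[ℂ] _) x = e0 := by
      calc ((algebraMap ℂ _ (1 : ℂ) - T) : lp (fun _ : ℕ => ℂ) ⊤ →L[ℂ] _) (g e0)
          = (((algebraMap ℂ _ (1 : ℂ) - T) * g) : lp (fun _ : ℕ => ℂ) ⊤ →L[ℂ] _) e0 := rfl
        _ = (1 : lp (fun _ : ℕ => ℂ) ⊤ →L[ℂ] _) e0 := by rw [hg]
        _ = e0 := rfl
    have hsub : ((algebraMap ℂ _ (1 : ℂ) - T) : lp (fun _ : ℕ => ℂ) ⊤ →L[ℂ] _) x = x - T x := by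
      rw [halg, ContinuousLinearMap.sub_apply, ContinuousLinearMap.one_apply]
    rw [hsub] at happ
    have happ0 : ((x - T x : lp (fun _ : ℕ => ℂ) ⊤) : ∀ _ : ℕ, ℂ) 0
        = (x : ∀ _ : ℕ, ℂ) 0 - (T x : ∀ _ : ℕ, ℂ) 0 := by
      rw [lp.coeFn_sub]; rfl
    have hTx0 : (T x : ∀ _ : ℕ, ℂ) 0 = (x : ∀ _ : ℕ, ℂ) 0 := by simp [hT x 0]
    have h1 : ((x - T x : lp (fun _ : ℕ => ℂ) ⊤) : ∀ _ : ℕ, ℂ) 0 = 0 := by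
      rw [happ0, hTx0, sub_self]
    rw [happ] at h1
    have : (e0 : ∀ _ : ℕ, ℂ) 0 = 1 := rfl
    rw [this] at h1
    exact one_ne_zero h1
  · rintro ⟨x, hx1, hx2⟩
    have hge : ∀ n, (1 : ℝ) ≤ ‖T (x n) - x n‖ := fun n => (hx1 n) ▸ key (x n)
    have := hx2.eventually (eventually_lt_nhds (by norm_num : (0:ℝ) < 1))
    rcases this.exists with ⟨n, hn⟩
    exact absurd (hge n) (not_le.mpr hn)
end

section
/- Let X be a Kaplansky C(K)-module, T ∈ L(X) a d-endomorphism with associated clopen set E ⊆ K and continuous map φ : E → K satisfying T(fx) = (f∘φ) Tx, and suppose there exists r ∈ C(K) with |r| ≡ 1 such that r(φ(k)) = λ r(k) for all k ∈ E, where λ^m = 1. Then r⁻¹ T r = λ T, and consequently the spectrum of T is invariant under multiplication by λ: λσ(T) = σ(T). -/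
open Pointwise

/-- If T is a d-endomorphism of a Kaplansky module with twist map φ, and r ∈ C(K) is
unimodular with r∘φ = λ·r where λ^m = 1, then r⁻¹ T r = λ T and λ·σ(T) = σ(T). -/
theorem stmt15 {K : Type*} [TopologicalSpace K] [CompactSpace K] [T2Space K]
    [ExtremallyDisconnected K]
    {X : Type*} [NormedAddCommGroup X] [NormedSpace ℂ X] [CompleteSpace X]
    (mK : C(K, ℂ) →ₐ[ℂ] (X →L[ℂ] X)) (hmK : Isometry mK)
    (hKap : ∀ x : X, ∃ U : Set K, IsClopen U ∧
        ∀ f : C(K, ℂ), (mK f x = 0 ↔ ∀ k ∈ U, f k = 0))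
    (E : Set K) (hE : IsClopen E) (φ : E → K) (hφ : Continuous φ)
    (T : X →L[ℂ] X)
    (hT : ∀ f g : C(K, ℂ), (∀ (k : K) (hk : k ∈ E), g k = f (φ ⟨k, hk⟩)) →
        (∀ k ∉ E, g k = 0) → ∀ x : X, T (mK f x) = mK g (T x))
    (mm : ℕ) (hmm : 1 ≤ mm) (l : ℂ) (hl : l ^ mm = 1)
    (r rinv : C(K, ℂ)) (hr : ∀ k : K, ‖r k‖ = 1) (hrinv : r * rinv = 1)
    (hrφ : ∀ (k : K) (hk : k ∈ E), r (φ ⟨k, hk⟩) = l * r k) :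
    (∀ x : X, mK rinv (T (mK r x)) = l • T x) ∧
    l • spectrum ℂ T = spectrum ℂ T := by
  classical
  -- characteristic function of E
  have hχcont : Continuous (fun k : K => if k ∈ E then (1 : ℂ) else 0) := by
    have h1 : Continuous E.boolIndicator :=
      (continuous_boolIndicator_iff_isClopen E).2 hE
    have h2 : Continuous (fun b : Bool => if b then (1 : ℂ) else 0) :=
      continuous_of_discreteTopology
    have := h2.comp h1
    convert this using 1
    funext k
    by_cases h : k ∈ E <;> simp [Set.boolIndicator, h]
  set χ : C(K, ℂ) := ⟨fun k => if k ∈ E then (1 : ℂ) else 0, hχcont⟩ with hχ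
  -- T x = mK χ (T x)
  have hTχ : ∀ x : X, T x = mK χ (T x) := by
    intro x
    have := hT 1 χ (fun k hk => by simp [hχ, hk]) (fun k hk => by simp [hχ, hk]) x
    simpa using this
  -- main identity
  have hmain : ∀ x : X, mK rinv (T (mK r x)) = l • T x := by
    intro x
    have hg1 : ∀ (k : K) (hk : k ∈ E), (l • (r * χ)) k = r (φ ⟨k, hk⟩) := by
      intro k hk
      simp [hχ, hk, hrφ k hk, mul_comm]
    have hg2 : ∀ k ∉ E, (l • (r * χ)) k = 0 := by
      intro k hk
      simp [hχ, hk]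
    have h1 := hT r (l • (r * χ)) hg1 hg2 x
    rw [h1, ← ContinuousLinearMap.comp_apply, ← ContinuousLinearMap.mul_def, ← map_mul]
    have heq : rinv * (l • (r * χ)) = l • χ := by
      ext k
      have h3 : rinv k * r k = 1 := by
        have := congrArg (fun f : C(K, ℂ) => f k) hrinv
        simpa [mul_comm] using this
      simp only [ContinuousMap.mul_apply, ContinuousMap.smul_apply, smul_eq_mul]
      calc rinv k * (l * (r k * χ k)) = l * ((rinv k * r k) * χ k) := by ring
        _ = l * χ k := by rw [h3, one_mul]
    rw [heq, map_smul]
    simp only [ContinuousLinearMap.smul_apply]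
    exact congrArg (l • ·) (hTχ x).symm
  refine ⟨hmain, ?_⟩
  -- unit given by mK r
  have hrinv' : rinv * r = 1 := by rw [mul_comm]; exact hrinv
  set u : (X →L[ℂ] X)ˣ :=
    { val := mK r, inv := mK rinv,
      val_inv := by rw [← map_mul, hrinv, map_one],
      inv_val := by rw [← map_mul, hrinv', map_one] } with hu
  have hconj : (u⁻¹ : (X →L[ℂ] X)ˣ) * T * u = l • T := by
    ext x
    have : ((u⁻¹ : (X →L[ℂ] X)ˣ) * T * u : X →L[ℂ] X) x = mK rinv (T (mK r x)) := rfl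
    rw [this, hmain x]
    rfl
  have h1 : spectrum ℂ ((u⁻¹ : (X →L[ℂ] X)ˣ) * T * u : X →L[ℂ] X) = spectrum ℂ T := by
    have := spectrum.units_conjugate' (R := ℂ) (a := T) (u := u)
    simpa using this
  rw [hconj] at h1
  have hl0 : l ≠ 0 := by
    intro h
    rw [h, zero_pow (by omega)] at hl
    exact zero_ne_one hl
  have h2 := spectrum.unit_smul_eq_smul (R := ℂ) (A := X →L[ℂ] X) T (Units.mk0 l hl0)
  calc l • spectrum ℂ T = spectrum ℂ (l • T) := by
        rw [show l • spectrum ℂ T = Units.mk0 l hl0 • spectrum ℂ T from rfl, ← h2]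
        rfl
    _ = spectrum ℂ T := h1
end
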